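/- arXiv:1610.00876 — 7 statements merged into one kernel-verified Lean document; each statement's English description precedes it below -/
import Mathlib

section
/- If a digraph F is δ⁺-maderian (every digraph of sufficiently large minimum out-degree contains a subdivision of F) and F has the Erdős–Pósa property for subdivisions, then for every positive integer k the disjoint union of k copies of F is also δ⁺-maderian. -/
noncomputable def outDeg {V : Type*} (D : V → V → Prop) (v : V) : ℕ := Nat.card {w // D v w}

noncomputable def inDeg {V : Type*} (D : V → V → Prop) (v : V) : ℕ := Nat.card {w // D w v}

/-- `D` contains a subdivision of `F`: branch vertices are given by an injective map `emb`,
and each arc of `F` is replaced by a directed path in `D` of length at least 1, the paths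
being internally disjoint from each other and from the branch vertices. -/
def IsSubdivision {U : Type*} {V : Type*} (F : U → U → Prop) (D : V → V → Prop) : Prop :=
  ∃ (emb : U → V) (len : U → U → ℕ) (p : U → U → ℕ → V),
    Function.Injective emb ∧
    (∀ u v, F u v → 1 ≤ len u v) ∧
    (∀ u v, F u v → p u v 0 = emb u ∧ p u v (len u v) = emb v) ∧
    (∀ u v, F u v → ∀ i < len u v, D (p u v i) (p u v (i+1))) ∧
    (∀ u v, F u v → ∀ i ≤ len u v, ∀ j ≤ len u v, p u v i = p u v j → i = j) ∧
    (∀ u v, F u v → ∀ i, 0 < i → i < len u v → ∀ w, p u v i ≠ emb w) ∧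
    (∀ u v, F u v → ∀ u' v', F u' v' → (u, v) ≠ (u', v') →
      ∀ i, 0 < i → i < len u v → ∀ j, 0 < j → j < len u' v' → p u v i ≠ p u' v' j)

/-- The disjoint union of `k` copies of the digraph `F`. -/
def kCopies (k : ℕ) {U : Type} (F : U → U → Prop) :
    (Fin k × U) → (Fin k × U) → Prop :=
  fun a b => a.1 = b.1 ∧ F a.2 b.2

/-- `F` is δ⁺-maderian: some minimum out-degree forces a subdivision of `F`. -/
def DPlusMaderian {U : Type} (F : U → U → Prop) : Prop :=
  ∃ d : ℕ, ∀ (V : Type) [Fintype V] [Nonempty V] (D : V → V → Prop),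
    Irreflexive D → (∀ v, d ≤ outDeg D v) → IsSubdivision F D

/-- `F` has the Erdős–Pósa property for subdivisions. -/
def HasErdosPosa {U : Type} (F : U → U → Prop) : Prop :=
  ∀ k : ℕ, 0 < k → ∃ φ : ℕ, ∀ (V : Type) [Fintype V] (D : V → V → Prop), Irreflexive D →
    IsSubdivision (kCopies k F) D ∨
    ∃ S : Finset V, S.card ≤ φ ∧
      ¬ IsSubdivision F (fun (a b : {v : V // v ∉ S}) => D a.val b.val)

/-- If `F` is δ⁺-maderian and has the Erdős–Pósa property, then the disjoint union of `k`
copies of `F` is δ⁺-maderian for every positive `k`. -/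
theorem stmt4 {U : Type} [Fintype U] (F : U → U → Prop)
    (h1 : DPlusMaderian F) (h2 : HasErdosPosa F) (k : ℕ) (hk : 0 < k) :
    DPlusMaderian (kCopies k F) := by
  classical
  obtain ⟨d, hd⟩ := h1
  obtain ⟨φ, hφ⟩ := h2 k hk
  refine ⟨d + φ + 1, ?_⟩
  intro V _ _ D hirr hdeg
  rcases hφ V D hirr with h | ⟨S, hS, hno⟩
  · exact h
  · exfalso
    apply hno
    -- count out-neighbors
    have hcard : ∀ v : V, outDeg D v = (Finset.univ.filter (fun w => D v w)).card := by
      intro v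
      simp [outDeg, Nat.card_eq_fintype_card, Fintype.card_subtype]
    have hne : Nonempty {v : V // v ∉ S} := by
      obtain ⟨v⟩ := ‹Nonempty V›
      by_contra hcon
      have hall : ∀ w : V, w ∈ S := by
        intro w
        by_contra hw
        exact hcon ⟨⟨w, hw⟩⟩
      have h1 : (Finset.univ.filter (fun w => D v w)).card ≤ S.card :=
        Finset.card_le_card (fun w _ => hall w)
      have h2 := hdeg v
      rw [hcard v] at h2
      omega
    apply hd {v : V // v ∉ S} (fun a b => D a.val b.val)
      (fun a hab => hirr a.val hab)
    intro a
    have key : outDeg (fun (a b : {v : V // v ∉ S}) => D a.val b.val) a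
        = ((Finset.univ.filter (fun w => D a.val w)) \ S).card := by
      rw [outDeg, Nat.card_eq_fintype_card, Fintype.card_subtype]
      apply Finset.card_bij (fun b _ => b.val)
      · intro b hb
        simp only [Finset.mem_filter, Finset.mem_univ, true_and] at hb
        simp [Finset.mem_sdiff, hb, b.2]
      · intro b _ c _ hbc
        exact Subtype.ext hbc
      · intro w hw
        simp only [Finset.mem_sdiff, Finset.mem_filter, Finset.mem_univ, true_and] at hw
        exact ⟨⟨w, hw.2⟩, by simp [hw.1], rfl⟩
    rw [key]
    have h2 := hdeg a.val
    rw [hcard a.val] at h2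
    have h3 := Finset.le_card_sdiff S (Finset.univ.filter (fun w => D a.val w))
    omega
end

section
/- If the transitive tournaments are δ⁰-maderian, then they are δ⁺-maderian; more precisely, for all k, mad_{δ⁺}(TT_k) ≤ mad_{δ⁰}(TT_{2k}). -/
/-- The transitive tournament on `k` vertices. -/
def TT (k : ℕ) : Fin k → Fin k → Prop := fun a b => a < b

/-- The doubled digraph: converse copy (`inl`), normal copy (`inr`), all arcs from `inl` to `inr`. -/
def sumD {V : Type*} (D : V → V → Prop) : V ⊕ V → V ⊕ V → Prop
  | Sum.inl a, Sum.inl b => D b a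
  | Sum.inl _, Sum.inr _ => True
  | Sum.inr _, Sum.inl _ => False
  | Sum.inr a, Sum.inr b => D a b

def pV {V : Type*} : V ⊕ V → V := Sum.elim id id

lemma pV_inr {V : Type*} {x : V ⊕ V} (h : x.isRight) : Sum.inr (pV x) = x := by
  cases x <;> simp_all [pV]

lemma pV_inl {V : Type*} {x : V ⊕ V} (h : ¬ x.isRight) : Sum.inl (pV x) = x := by
  cases x <;> simp_all [pV]

lemma sumD_step {V : Type*} {D : V → V → Prop} {x y : V ⊕ V} (h : sumD D x y)
    (hx : x.isRight) : y.isRight := by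
  cases x <;> cases y <;> simp_all [sumD]

/-- If transitive tournaments are δ⁰-maderian, then they are δ⁺-maderian; more precisely,
any `d` that works as `mad_{δ⁰}(TT_{2k})` also works as `mad_{δ⁺}(TT_k)`, so
`mad_{δ⁺}(TT_k) ≤ mad_{δ⁰}(TT_{2k})`. -/
theorem stmt5
    (h : ∀ k : ℕ, ∃ d : ℕ, ∀ (V : Type) [Fintype V] [Nonempty V] (D : V → V → Prop),
      Irreflexive D → (∀ v, d ≤ outDeg D v) → (∀ v, d ≤ inDeg D v) →
      IsSubdivision (TT k) D) :
    ∀ (k d : ℕ),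
      (∀ (V : Type) [Fintype V] [Nonempty V] (D : V → V → Prop), Irreflexive D →
        (∀ v, d ≤ outDeg D v) → (∀ v, d ≤ inDeg D v) → IsSubdivision (TT (2 * k)) D) →
      (∀ (V : Type) [Fintype V] [Nonempty V] (D : V → V → Prop), Irreflexive D →
        (∀ v, d ≤ outDeg D v) → IsSubdivision (TT k) D) := by
  clear h
  intro k d h2k V _ _ D hirr hout
  rcases Nat.eq_zero_or_pos k with hk0 | hk
  · subst hk0
    exact ⟨Fin.elim0, fun u => u.elim0, fun u => u.elim0,
      fun u => u.elim0, fun u => u.elim0, fun u => u.elim0, fun u => u.elim0,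
      fun u => u.elim0, fun u => u.elim0, fun u => u.elim0⟩
  -- degrees of the doubled digraph
  have hcard : d ≤ Nat.card V := by
    obtain ⟨v0⟩ := (inferInstance : Nonempty V)
    exact le_trans (hout v0)
      (Nat.card_le_card_of_injective Subtype.val Subtype.val_injective)
  have hirr' : Irreflexive (sumD D) := by
    intro x; cases x with
    | inl a => exact hirr a
    | inr a => exact hirr a
  have hout' : ∀ x : V ⊕ V, d ≤ outDeg (sumD D) x := by
    intro x; cases x with
    | inl a =>
      refine le_trans hcard (Nat.card_le_card_of_injective
        (fun b => (⟨Sum.inr b, trivial⟩ : {w // sumD D (Sum.inl a) w})) ?_)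
      intro b c hbc
      simpa using congrArg Subtype.val hbc
    | inr a =>
      refine le_trans (hout a) (Nat.card_le_card_of_injective
        (fun b => (⟨Sum.inr b.1, b.2⟩ : {w // sumD D (Sum.inr a) w})) ?_)
      intro b c hbc
      exact Subtype.ext (by simpa using congrArg Subtype.val hbc)
  have hin' : ∀ x : V ⊕ V, d ≤ inDeg (sumD D) x := by
    intro x; cases x with
    | inl a =>
      refine le_trans (hout a) (Nat.card_le_card_of_injective
        (fun b => (⟨Sum.inl b.1, b.2⟩ : {w // sumD D w (Sum.inl a)})) ?_)
      intro b c hbc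
      exact Subtype.ext (by simpa using congrArg Subtype.val hbc)
    | inr a =>
      refine le_trans hcard (Nat.card_le_card_of_injective
        (fun b => (⟨Sum.inl b, trivial⟩ : {w // sumD D w (Sum.inr a)})) ?_)
      intro b c hbc
      simpa using congrArg Subtype.val hbc
  obtain ⟨emb, len, p, hinj, hlen, hends, harc, hnodup, hint, hdisj⟩ :=
    h2k (V ⊕ V) (sumD D) hirr' hout' hin'
  -- monotonicity along paths
  have mono : ∀ u v, TT (2*k) u v → ∀ i j, i ≤ j → j ≤ len u v →
      (p u v i).isRight → (p u v j).isRight := by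
    intro u v huv i j hij hjle hi
    induction j, hij using Nat.le_induction with
    | base => exact hi
    | succ n hn ih =>
      exact sumD_step (harc u v huv n (by omega)) (ih (by omega))
  have up : ∀ u v : Fin (2*k), u < v → (emb u).isRight → (emb v).isRight := by
    intro u v huv hu
    have h0 := (hends u v huv).1
    have hL := (hends u v huv).2
    have := mono u v huv 0 (len u v) (Nat.zero_le _) le_rfl (by rw [h0]; exact hu)
    rwa [hL] at this
  have hm2k : k < 2 * k := by omega
  by_cases hm : (emb ⟨k, hm2k⟩).isRight
  · -- use the `inr` half, vertices k .. 2k-1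
    set ι : Fin k → Fin (2*k) := fun a => ⟨k + a.val, by omega⟩ with hι
    have hιinj : Function.Injective ι := by
      intro a b hab
      have := congrArg Fin.val hab
      simp only [hι] at this
      exact Fin.ext (by omega)
    have hιmono : ∀ a b : Fin k, a < b → TT (2*k) (ι a) (ι b) := by
      intro a b hab
      have : a.val < b.val := hab
      exact Fin.mk_lt_mk.mpr (by omega)
    have hιR : ∀ a : Fin k, (emb (ι a)).isRight := by
      intro a
      rcases Nat.eq_zero_or_pos a.val with h0 | h0
      · have : ι a = ⟨k, hm2k⟩ := Fin.ext (by simp [hι, h0])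
        rwa [this]
      · exact up ⟨k, hm2k⟩ (ι a) (Fin.mk_lt_mk.mpr (by omega)) hm
    have pathR : ∀ a b : Fin k, a < b → ∀ i, i ≤ len (ι a) (ι b) →
        (p (ι a) (ι b) i).isRight := by
      intro a b hab i hi
      refine mono _ _ (hιmono a b hab) 0 i (Nat.zero_le _) hi ?_
      rw [(hends _ _ (hιmono a b hab)).1]
      exact hιR a
    refine ⟨fun a => pV (emb (ι a)), fun a b => len (ι a) (ι b),
      fun a b i => pV (p (ι a) (ι b) i), ?_, ?_, ?_, ?_, ?_, ?_, ?_⟩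
    · intro a b hab
      dsimp only at *
      have : emb (ι a) = emb (ι b) := by
        rw [← pV_inr (hιR a), ← pV_inr (hιR b)]
        exact congrArg Sum.inr hab
      exact hιinj (hinj this)
    · intro a b hab; exact hlen _ _ (hιmono a b hab)
    · intro a b hab
      dsimp only at *
      exact ⟨congrArg pV (hends _ _ (hιmono a b hab)).1,
        congrArg pV (hends _ _ (hιmono a b hab)).2⟩
    · intro a b hab i hi
      dsimp only at *
      have h1 := pathR a b hab i (by omega)
      have h2 := pathR a b hab (i+1) (by omega)
      have := harc _ _ (hιmono a b hab) i hi
      rw [← pV_inr h1, ← pV_inr h2] at this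
      exact this
    · intro a b hab i hi j hj hij
      dsimp only at *
      refine hnodup _ _ (hιmono a b hab) i hi j hj ?_
      rw [← pV_inr (pathR a b hab i hi), ← pV_inr (pathR a b hab j hj)]
      exact congrArg Sum.inr hij
    · intro a b hab i hi0 hil w heq
      dsimp only at *
      refine hint _ _ (hιmono a b hab) i hi0 hil (ι w) ?_
      rw [← pV_inr (pathR a b hab i (by omega)), ← pV_inr (hιR w)]
      exact congrArg Sum.inr heq
    · intro a b hab a' b' hab' hne i hi0 hil j hj0 hjl heq
      dsimp only at *
      refine hdisj _ _ (hιmono a b hab) _ _ (hιmono a' b' hab') ?_ i hi0 hil j hj0 hjl ?_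
      · intro hc
        apply hne
        obtain ⟨h1, h2⟩ := Prod.ext_iff.mp hc
        rw [Prod.mk.injEq]
        exact ⟨hιinj h1, hιinj h2⟩
      · rw [← pV_inr (pathR a b hab i (by omega)),
          ← pV_inr (pathR a' b' hab' j (by omega))]
        exact congrArg Sum.inr heq
  · -- use the `inl` half, vertices 0 .. k-1, reversed
    set ι : Fin k → Fin (2*k) := fun a => ⟨k - 1 - a.val, by omega⟩ with hι
    have hιinj : Function.Injective ι := by
      intro a b hab
      have := congrArg Fin.val hab
      simp only [hι] at this
      have ha := a.isLt
      have hb := b.isLt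
      exact Fin.ext (by omega)
    have hιrev : ∀ a b : Fin k, a < b → TT (2*k) (ι b) (ι a) := by
      intro a b hab
      have h1 : a.val < b.val := hab
      have hb := b.isLt
      exact Fin.mk_lt_mk.mpr (by omega)
    have hιL : ∀ a : Fin k, ¬ (emb (ι a)).isRight := by
      intro a hR
      apply hm
      have ha := a.isLt
      exact up (ι a) ⟨k, hm2k⟩ (Fin.mk_lt_mk.mpr (by omega)) hR
    have pathL : ∀ a b : Fin k, a < b → ∀ i, i ≤ len (ι b) (ι a) →
        ¬ (p (ι b) (ι a) i).isRight := by
      intro a b hab i hi hR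
      apply hιL a
      have := mono _ _ (hιrev a b hab) i (len (ι b) (ι a)) hi le_rfl hR
      rwa [(hends _ _ (hιrev a b hab)).2] at this
    refine ⟨fun a => pV (emb (ι a)), fun a b => len (ι b) (ι a),
      fun a b i => pV (p (ι b) (ι a) (len (ι b) (ι a) - i)), ?_, ?_, ?_, ?_, ?_, ?_, ?_⟩
    · intro a b hab
      dsimp only at *
      have : emb (ι a) = emb (ι b) := by
        rw [← pV_inl (hιL a), ← pV_inl (hιL b)]
        exact congrArg Sum.inl hab
      exact hιinj (hinj this)
    · intro a b hab; exact hlen _ _ (hιrev a b hab)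
    · intro a b hab
      dsimp only at *
      constructor
      · rw [Nat.sub_zero, (hends _ _ (hιrev a b hab)).2]
      · rw [Nat.sub_self, (hends _ _ (hιrev a b hab)).1]
    · intro a b hab i hi
      dsimp only at *
      set L := len (ι b) (ι a) with hL
      have harcj := harc _ _ (hιrev a b hab) (L - i - 1) (by omega)
      have h1 := pathL a b hab (L - i - 1) (by omega)
      have h2 := pathL a b hab (L - i - 1 + 1) (by omega)
      rw [← pV_inl h1, ← pV_inl h2] at harcj
      have e1 : L - i = L - i - 1 + 1 := by omega
      have e2 : L - (i + 1) = L - i - 1 := by omega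
      rw [e1, e2]
      exact harcj
    · intro a b hab i hi j hj hij
      dsimp only at *
      set L := len (ι b) (ι a) with hL
      have : p (ι b) (ι a) (L - i) = p (ι b) (ι a) (L - j) := by
        rw [← pV_inl (pathL a b hab (L - i) (by omega)),
          ← pV_inl (pathL a b hab (L - j) (by omega))]
        exact congrArg Sum.inl hij
      have := hnodup _ _ (hιrev a b hab) (L - i) (by omega) (L - j) (by omega) this
      omega
    · intro a b hab i hi0 hil w heq
      dsimp only at *
      set L := len (ι b) (ι a) with hL
      refine hint _ _ (hιrev a b hab) (L - i) (by omega) (by omega) (ι w) ?_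
      rw [← pV_inl (pathL a b hab (L - i) (by omega)), ← pV_inl (hιL w)]
      exact congrArg Sum.inl heq
    · intro a b hab a' b' hab' hne i hi0 hil j hj0 hjl heq
      dsimp only at *
      set L := len (ι b) (ι a) with hL
      set L' := len (ι b') (ι a') with hL'
      refine hdisj _ _ (hιrev a b hab) _ _ (hιrev a' b' hab') ?_ (L - i) (by omega) (by omega)
        (L' - j) (by omega) (by omega) ?_
      · intro hc
        apply hne
        obtain ⟨h1, h2⟩ := Prod.ext_iff.mp hc
        rw [Prod.mk.injEq]
        exact ⟨hιinj h2, hιinj h1⟩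
      · rw [← pV_inl (pathL a b hab (L - i) (by omega)),
          ← pV_inl (pathL a' b' hab' (L' - j) (by omega))]
        exact congrArg Sum.inl heq
end

section
/- For every positive integer k, the least integer d such that every digraph with minimum out-degree at least d contains a subdivision of C(k,1) equals k; the same holds for minimum of in- and out-degree. -/
/-- `D` contains a subdivision of `C(k,1)`: two internally disjoint `(x,y)`-dipaths,
one of length at least `k` and one of length at least `1`. -/
def HasSubdivCk1 (k : ℕ) {V : Type*} (D : V → V → Prop) : Prop :=
  ∃ (x y : V) (m₁ m₂ : ℕ) (p q : ℕ → V),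
    x ≠ y ∧ k ≤ m₁ ∧ 1 ≤ m₂ ∧
    p 0 = x ∧ p m₁ = y ∧ q 0 = x ∧ q m₂ = y ∧
    (∀ i < m₁, D (p i) (p (i + 1))) ∧
    (∀ i < m₂, D (q i) (q (i + 1))) ∧
    (∀ i ≤ m₁, ∀ j ≤ m₁, p i = p j → i = j) ∧
    (∀ i ≤ m₂, ∀ j ≤ m₂, q i = q j → i = j) ∧
    (∀ i, 0 < i → i < m₁ → ∀ j, 0 < j → j < m₂ → p i ≠ q j)

lemma aux_main (k : ℕ) (hk : 1 ≤ k) (V : Type) [Fintype V] [Nonempty V]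
    (D : V → V → Prop) (hirr : Irreflexive D) (hdeg : ∀ v, k ≤ outDeg D v) :
    HasSubdivCk1 k D := by
  classical
  set n := Fintype.card V with hn
  set P : ℕ → Prop := fun l => ∃ p : ℕ → V,
      (∀ t < l, D (p t) (p (t+1))) ∧ (∀ s ≤ l, ∀ t ≤ l, p s = p t → s = t) with hP
  have hbound : ∀ l, P l → l < n := by
    rintro l ⟨p, _, hinj⟩
    have hfi : Function.Injective (fun t : Fin (l+1) => p t) := by
      intro s t h
      exact Fin.ext (hinj s (Nat.lt_succ_iff.mp s.isLt) t (Nat.lt_succ_iff.mp t.isLt) h)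
    have := Fintype.card_le_of_injective _ hfi
    simp only [Fintype.card_fin] at this
    omega
  obtain ⟨v0⟩ := ‹Nonempty V›
  have hP0 : P 0 := ⟨fun _ => v0, fun t ht => absurd ht (by omega), fun s hs t ht _ => by omega⟩
  set l := Nat.findGreatest P n with hl
  obtain ⟨p, harc, hinj⟩ : P l := Nat.findGreatest_spec (Nat.zero_le n) hP0
  have hmax : ∀ w, D (p l) w → ∃ t ≤ l, p t = w := by
    intro w hw
    by_contra hcon
    push_neg at hcon
    have hP' : P (l+1) := by
      refine ⟨fun t => if t ≤ l then p t else w, ?_, ?_⟩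
      · intro t ht
        show D (if t ≤ l then p t else w) (if t + 1 ≤ l then p (t+1) else w)
        by_cases h1 : t < l
        · rw [if_pos (le_of_lt h1), if_pos (show t + 1 ≤ l from h1)]
          exact harc t h1
        · have htl : t = l := by omega
          rw [if_pos (show t ≤ l by omega), if_neg (show ¬ (t + 1 ≤ l) by omega), htl]
          exact hw
      · intro s hs t ht h
        by_cases h1 : s ≤ l <;> by_cases h2 : t ≤ l <;> simp only [h1, h2, if_pos, if_neg, if_true, if_false] at h
        · exact hinj s h1 t h2 h
        · exact absurd h (hcon s h1)
        · exact absurd h.symm (hcon t h2)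
        · omega
    have hlt : l < l + 1 := Nat.lt_succ_self l
    have hle : l + 1 ≤ n := le_of_lt (hbound _ hP')
    exact Nat.findGreatest_is_greatest hlt hle hP'
  set S : Finset ℕ := (Finset.range l).filter (fun t => D (p l) (p t)) with hS
  have hScard : k ≤ S.card := by
    have h1 : k ≤ Nat.card {w // D (p l) w} := hdeg (p l)
    have hex : ∀ w : {w // D (p l) w}, ∃ t, t ∈ S ∧ p t = (w : V) := by
      rintro ⟨w, hw⟩
      obtain ⟨t, ht, hpt⟩ := hmax w hw
      have htl : t < l := by
        rcases Nat.lt_or_ge t l with h | h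
        · exact h
        · exfalso
          have : t = l := by omega
          subst this
          rw [hpt] at hw
          exact hirr w hw
      exact ⟨t, Finset.mem_filter.mpr ⟨Finset.mem_range.mpr htl, by rw [hpt]; exact hw⟩, hpt⟩
    choose f hf1 hf2 using hex
    have hfinj : Function.Injective (fun w => (⟨f w, hf1 w⟩ : {t // t ∈ S})) := by
      intro a b h
      simp only [Subtype.mk.injEq] at h
      apply Subtype.ext
      rw [← hf2 a, ← hf2 b, h]
    have h2 := Nat.card_le_card_of_injective _ hfinj
    have h3 : Nat.card {t // t ∈ S} = S.card := Nat.card_eq_finsetCard S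
    omega
  have hSne : S.Nonempty := Finset.card_pos.mp (by omega)
  set i := S.min' hSne with hi
  set j := S.max' hSne with hj
  have hij : i ≤ j := S.min'_le _ (S.max'_mem hSne)
  have hjl : j < l := Finset.mem_range.mp (Finset.mem_filter.mp (S.max'_mem hSne)).1
  have hDi : D (p l) (p i) := (Finset.mem_filter.mp (S.min'_mem hSne)).2
  have hDj : D (p l) (p j) := (Finset.mem_filter.mp (S.max'_mem hSne)).2
  have hcard_le : S.card ≤ j - i + 1 := by
    have hsub : S ⊆ Finset.Icc i j := fun t ht => Finset.mem_Icc.mpr ⟨S.min'_le t ht, S.le_max' t ht⟩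
    have := Finset.card_le_card hsub
    rw [Nat.card_Icc] at this
    omega
  refine ⟨p l, p j, j - i + 1, 1,
    (fun t => if t = 0 then p l else p (i + t - 1)),
    (fun t => if t = 0 then p l else p j),
    ?_, by omega, le_refl 1, by simp, ?_, by simp, by simp, ?_, ?_, ?_, ?_, ?_⟩
  · intro h
    have := hinj l le_rfl j (le_of_lt hjl) h
    omega
  · simp only [show j - i + 1 ≠ 0 by omega, if_neg, if_false]
    congr 1
    omega
  · intro t ht
    by_cases h0 : t = 0
    · subst h0
      simp only [if_pos, show (1:ℕ) ≠ 0 by omega, if_neg, if_false, if_true]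
      rw [show i + 1 - 1 = i by omega]
      exact hDi
    · simp only [h0, show t + 1 ≠ 0 by omega, if_neg, if_false]
      have h1 : i + t - 1 < l := by omega
      have := harc (i + t - 1) h1
      rw [show i + t - 1 + 1 = i + (t+1) - 1 by omega] at this
      exact this
  · intro t ht
    have : t = 0 := by omega
    subst this
    simp only [if_pos, show (1:ℕ) ≠ 0 by omega, if_neg, if_false, if_true]
    exact hDj
  · intro s hs t ht h
    by_cases h1 : s = 0 <;> by_cases h2 : t = 0 <;>
      simp only [h1, h2, if_pos, if_neg, if_true, if_false] at h
    · omega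
    · exfalso
      have := hinj l le_rfl (i + t - 1) (by omega) h
      omega
    · exfalso
      have := hinj (i + s - 1) (by omega) l le_rfl h
      omega
    · have := hinj (i + s - 1) (by omega) (i + t - 1) (by omega) h
      omega
  · intro s hs t ht h
    have hsc : s = 0 ∨ s = 1 := by omega
    have htc : t = 0 ∨ t = 1 := by omega
    rcases hsc with rfl | rfl <;> rcases htc with rfl | rfl
    · rfl
    · norm_num at h
      exact absurd (hinj l le_rfl j (le_of_lt hjl) h) (by omega)
    · norm_num at h
      exact absurd (hinj j (le_of_lt hjl) l le_rfl h) (by omega)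
    · rfl
  · intro a ha1 ha2 b hb1 hb2
    omega

lemma aux_counter (k d : ℕ) (hk : 1 ≤ k)
    (hd : ∀ (V : Type) [Fintype V] [Nonempty V] (D : V → V → Prop),
      Irreflexive D → (∀ v, d ≤ outDeg D v) → (∀ v, d ≤ inDeg D v) →
      HasSubdivCk1 k D) : k ≤ d := by
  by_contra hcon
  push_neg at hcon
  haveI : Nonempty (Fin k) := ⟨⟨0, hk⟩⟩
  have hdegout : ∀ v : Fin k, d ≤ outDeg (fun a b : Fin k => a ≠ b) v := by
    intro v
    show d ≤ Nat.card {w : Fin k // v ≠ w}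
    rw [Nat.card_eq_fintype_card,
      Fintype.card_congr (Equiv.subtypeEquivRight (fun w => ne_comm (a := v) (b := w)))]
    simp [Fintype.card_subtype, Finset.filter_ne']
    omega
  have hdegin : ∀ v : Fin k, d ≤ inDeg (fun a b : Fin k => a ≠ b) v := by
    intro v
    show d ≤ Nat.card {w : Fin k // w ≠ v}
    rw [Nat.card_eq_fintype_card]
    simp [Fintype.card_subtype, Finset.filter_ne']
    omega
  obtain ⟨x, y, m₁, m₂, p, q, hxy, hm₁, hm₂, hp0, hpm, hq0, hqm, hparc, hqarc,
    hpinj, hqinj, hcross⟩ :=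
    hd (Fin k) (fun a b : Fin k => a ≠ b) (fun v hv => hv rfl) hdegout hdegin
  have hfi : Function.Injective (fun t : Fin (m₁+1) => p t) := by
    intro s t h
    exact Fin.ext (hpinj s (Nat.lt_succ_iff.mp s.isLt) t (Nat.lt_succ_iff.mp t.isLt) h)
  have := Fintype.card_le_of_injective _ hfi
  simp only [Fintype.card_fin] at this
  omega

/-- `mad_{δ⁺}(C(k,1)) = mad_{δ⁰}(C(k,1)) = k`: the least `d` such that every (finite,
nonempty, loopless) digraph with minimum out-degree (resp. minimum in- and out-degree) at
least `d` contains a subdivision of `C(k,1)` equals `k`. -/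
theorem stmt9 (k : ℕ) (hk : 1 ≤ k) :
    IsLeast {d : ℕ | ∀ (V : Type) [Fintype V] [Nonempty V] (D : V → V → Prop),
      Irreflexive D → (∀ v, d ≤ outDeg D v) → HasSubdivCk1 k D} k ∧
    IsLeast {d : ℕ | ∀ (V : Type) [Fintype V] [Nonempty V] (D : V → V → Prop),
      Irreflexive D → (∀ v, d ≤ outDeg D v) → (∀ v, d ≤ inDeg D v) →
      HasSubdivCk1 k D} k := by
  constructor
  · constructor
    · intro V _ _ D hirr hdeg
      exact aux_main k hk V D hirr hdeg
    · intro d hd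
      exact aux_counter k d hk (fun V _ _ D hirr hout _ => hd V D hirr hout)
  · constructor
    · intro V _ _ D hirr hdeg _
      exact aux_main k hk V D hirr hdeg
    · intro d hd
      exact aux_counter k d hk hd
end

section
/- Let D be a strongly connected digraph, let u ∈ V(D), and for each i ≥ 0 let L_i = {v : dist(u,v) = i} (or dually L_i = {v : dist(v,u) = i}). Then there exists a level L_i such that χ⃗(D⟨L_i⟩) ≥ χ⃗(D)/2. -/
/-- There is a closed directed walk of positive length all of whose vertices lie in `A`. -/
def HasCycleIn {V : Type*} (D : V → V → Prop) (A : Set V) : Prop :=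
  ∃ (n : ℕ) (p : ℕ → V), 1 ≤ n ∧ p n = p 0 ∧ (∀ i < n, D (p i) (p (i+1))) ∧ (∀ i ≤ n, p i ∈ A)

/-- The dichromatic number: least `k` such that the vertices can be coloured with `k` colours
with every colour class inducing an acyclic subdigraph. -/
noncomputable def dichrom {V : Type*} (D : V → V → Prop) : ℕ :=
  sInf {k : ℕ | ∃ c : V → Fin k, ∀ i : Fin k, ¬ HasCycleIn D {v | c v = i}}

/-- `v` reaches `u` by a directed walk. -/
def Reach {V : Type*} (D : V → V → Prop) (u v : V) : Prop :=
  ∃ (n : ℕ) (p : ℕ → V), p 0 = u ∧ p n = v ∧ ∀ i < n, D (p i) (p (i + 1))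

/-- The distance from `u` to `v`: minimum length of a directed path from `u` to `v`. -/
noncomputable def ddist {V : Type*} (D : V → V → Prop) (u v : V) : ℕ :=
  sInf {n : ℕ | ∃ p : ℕ → V, p 0 = u ∧ p n = v ∧ ∀ i < n, D (p i) (p (i + 1))}

lemma dichrom_le {V : Type*} {E : V → V → Prop} {k : ℕ} (c : V → Fin k)
    (h : ∀ i, ¬ HasCycleIn E {v | c v = i}) : dichrom E ≤ k :=
  Nat.sInf_le ⟨c, h⟩

lemma dichrom_exists {V : Type*} [Fintype V] (E : V → V → Prop) (hE : Irreflexive E) :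
    ∃ c : V → Fin (dichrom E), ∀ i, ¬ HasCycleIn E {v | c v = i} := by
  have hmem : Fintype.card V ∈
      {k : ℕ | ∃ c : V → Fin k, ∀ i : Fin k, ¬ HasCycleIn E {v | c v = i}} := by
    refine ⟨Fintype.equivFin V, ?_⟩
    rintro i ⟨n, p, hn, hcl, harc, hA⟩
    have h0 : Fintype.equivFin V (p 0) = i := hA 0 (by omega)
    have h1 : Fintype.equivFin V (p 1) = i := hA 1 hn
    have hp : p 1 = p 0 := (Fintype.equivFin V).injective (by rw [h0, h1])
    have harc0 := harc 0 hn
    rw [hp] at harc0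
    exact hE _ harc0
  exact Nat.sInf_mem ⟨_, hmem⟩

lemma ddist_spec {V : Type*} {D : V → V → Prop} {u v : V} (h : Reach D u v) :
    ∃ p : ℕ → V, p 0 = u ∧ p (ddist D u v) = v ∧ ∀ i < ddist D u v, D (p i) (p (i + 1)) := by
  obtain ⟨n, p, h1, h2, h3⟩ := h
  exact Nat.sInf_mem (⟨n, p, h1, h2, h3⟩ :
    {n : ℕ | ∃ p : ℕ → V, p 0 = u ∧ p n = v ∧ ∀ i < n, D (p i) (p (i + 1))}.Nonempty)

lemma ddist_succ_le {V : Type*} {D : V → V → Prop} {u a b : V}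
    (h : Reach D u a) (hab : D a b) : ddist D u b ≤ ddist D u a + 1 := by
  obtain ⟨p, h0, hn, harc⟩ := ddist_spec h
  have hmem : ddist D u a + 1 ∈
      {n : ℕ | ∃ p : ℕ → V, p 0 = u ∧ p n = b ∧ ∀ i < n, D (p i) (p (i + 1))} := by
    refine ⟨fun i => if i ≤ ddist D u a then p i else b, by simp [h0], ?_, ?_⟩
    · have hneg : ¬ (ddist D u a + 1 ≤ ddist D u a) := by omega
      simp [hneg]
    · intro i hi
      show D (if i ≤ ddist D u a then p i else b) (if i + 1 ≤ ddist D u a then p (i+1) else b)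
      rcases Nat.lt_or_ge i (ddist D u a) with h' | h'
      · rw [if_pos (by omega : i ≤ ddist D u a), if_pos (by omega : i + 1 ≤ ddist D u a)]
        exact harc i h'
      · have hieq : i = ddist D u a := by omega
        rw [if_pos (by omega : i ≤ ddist D u a), if_neg (by omega : ¬ i + 1 ≤ ddist D u a),
          hieq, hn]
        exact hab
  exact Nat.sInf_le hmem

lemma rev_path {V : Type*} {E : V → V → Prop} {a b : V} {n : ℕ} (p : ℕ → V)
    (h0 : p 0 = a) (hn : p n = b) (harc : ∀ i < n, E (p i) (p (i+1))) :
    ∃ q : ℕ → V, q 0 = b ∧ q n = a ∧ ∀ i < n, E (q (i+1)) (q i) := by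
  refine ⟨fun i => p (n - i), by simp [hn], by simp [h0], ?_⟩
  intro i hi
  show E (p (n - (i+1))) (p (n - i))
  have h2 : n - (i+1) = n - i - 1 := by omega
  have h1 : n - i - 1 + 1 = n - i := by omega
  have := harc (n - i - 1) (by omega)
  rw [h1] at this
  rw [h2]
  exact this

lemma ddist_flip {V : Type*} (D : V → V → Prop) (u v : V) :
    ddist (fun a b => D b a) u v = ddist D v u := by
  unfold ddist
  congr 1
  ext n
  constructor
  · rintro ⟨p, h0, hn, harc⟩
    obtain ⟨q, hq0, hqn, hq⟩ := rev_path (E := fun a b => D b a) p h0 hn harc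
    exact ⟨q, hq0, hqn, fun i hi => hq i hi⟩
  · rintro ⟨p, h0, hn, harc⟩
    obtain ⟨q, hq0, hqn, hq⟩ := rev_path (E := D) p h0 hn harc
    exact ⟨q, hq0, hqn, fun i hi => hq i hi⟩

lemma reach_flip {V : Type*} (D : V → V → Prop) (u v : V) (h : Reach D v u) :
    Reach (fun a b => D b a) u v := by
  obtain ⟨n, p, h0, hn, harc⟩ := h
  obtain ⟨q, hq0, hqn, hq⟩ := rev_path (E := D) p h0 hn harc
  exact ⟨n, q, hq0, hqn, fun i hi => hq i hi⟩

lemma cycle_flip {V : Type*} {D : V → V → Prop} {A : Set V}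
    (h : HasCycleIn D A) : HasCycleIn (fun a b => D b a) A := by
  obtain ⟨n, p, hn, hcl, harc, hmem⟩ := h
  refine ⟨n, fun i => p (n - i), hn, by simp [hcl], ?_, ?_⟩
  · intro i hi
    show D (p (n - (i+1))) (p (n - i))
    have h2 : n - (i+1) = n - i - 1 := by omega
    have h1 : n - i - 1 + 1 = n - i := by omega
    have := harc (n - i - 1) (by omega)
    rw [h1] at this
    rw [h2]
    exact this
  · intro i hi
    exact hmem (n - i) (by omega)

lemma hasCycleIn_flip_iff {V : Type*} (D : V → V → Prop) (A : Set V) :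
    HasCycleIn (fun a b => D b a) A ↔ HasCycleIn D A :=
  ⟨fun h => cycle_flip h, fun h => cycle_flip h⟩

lemma dichrom_flip {V : Type*} (D : V → V → Prop) :
    dichrom (fun a b => D b a) = dichrom D := by
  unfold dichrom
  congr 1
  ext k
  simp only [Set.mem_setOf_eq, hasCycleIn_flip_iff]

lemma dichrom_congr {V : Type*} {P Q : V → Prop} (E : V → V → Prop) (h : ∀ v, P v ↔ Q v) :
    dichrom (fun (a b : Subtype P) => E a.val b.val)
      = dichrom (fun (a b : Subtype Q) => E a.val b.val) := by
  have hPQ : P = Q := funext fun v => propext (h v)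
  subst hPQ
  rfl

lemma seq_lemma (q : ℕ → ℕ) (n : ℕ) (hq : ∀ i < n, q (i+1) ≤ q i + 1)
    (hcl : q n = q 0) (hpar : ∀ i ≤ n, q i % 2 = q 0 % 2) :
    ∀ i ≤ n, q i = q 0 := by
  rcases Nat.eq_zero_or_pos n with hn | hn
  · subst hn
    intro i hi
    have hi0 : i = 0 := by omega
    rw [hi0]
  intro i hi
  by_contra hneq
  set Q : ℕ → ℕ := fun t => if t ≤ n then q t else q (t - n) with hQ
  have hQstep : ∀ t < 2 * n, Q (t + 1) ≤ Q t + 1 := by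
    intro t ht
    rcases lt_trichotomy t n with h | h | h
    · simp only [hQ]
      rw [if_pos (by omega : t + 1 ≤ n), if_pos (le_of_lt h)]
      exact hq t h
    · subst h
      simp only [hQ]
      rw [if_neg (by omega : ¬ t + 1 ≤ t), if_pos le_rfl]
      have h1 : t + 1 - t = 1 := by omega
      rw [h1, hcl]
      exact hq 0 hn
    · simp only [hQ]
      rw [if_neg (by omega : ¬ t + 1 ≤ n), if_neg (by omega : ¬ t ≤ n)]
      have h1 : t + 1 - n = (t - n) + 1 := by omega
      rw [h1]
      exact hq (t - n) (by omega)
  have hQval : ∀ t ≤ 2 * n, ∃ s ≤ n, Q t = q s := by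
    intro t ht
    by_cases h : t ≤ n
    · exact ⟨t, h, by simp only [hQ]; rw [if_pos h]⟩
    · exact ⟨t - n, by omega, by simp only [hQ]; rw [if_neg h]⟩
  set F : Finset ℕ := (Finset.range (n + 1)).image q with hF
  have hFne : F.Nonempty := ⟨q 0, Finset.mem_image.2 ⟨0, Finset.mem_range.2 (by omega), rfl⟩⟩
  set lo := F.min' hFne with hlo
  obtain ⟨j, hjmem, hjq⟩ := Finset.mem_image.1 (F.min'_mem hFne)
  have hjn : j ≤ n := by have := Finset.mem_range.1 hjmem; omega
  have hminle : ∀ s ≤ n, lo ≤ q s := fun s hs =>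
    F.min'_le _ (Finset.mem_image.2 ⟨s, Finset.mem_range.2 (by omega), rfl⟩)
  have hparlo : lo % 2 = q 0 % 2 := by rw [hlo, ← hjq]; exact hpar j hjn
  obtain ⟨k, hkn, hk2⟩ : ∃ k ≤ n, lo + 2 ≤ q k := by
    have h0 := hminle 0 (by omega)
    have hii := hminle i hi
    have hpi := hpar i hi
    rcases Nat.lt_or_ge (q 0) (q i) with h | h
    · exact ⟨i, hi, by omega⟩
    · exact ⟨0, by omega, by omega⟩
  obtain ⟨b, hjb, hb2n, hQb⟩ : ∃ b, j ≤ b ∧ b ≤ 2 * n ∧ lo + 2 ≤ Q b := by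
    by_cases hjk : j ≤ k
    · refine ⟨k, hjk, by omega, ?_⟩
      simp only [hQ]; rw [if_pos hkn]; exact hk2
    · rcases Nat.eq_zero_or_pos k with hk0 | hk0
      · subst hk0
        refine ⟨n, by omega, by omega, ?_⟩
        simp only [hQ]; rw [if_pos le_rfl, hcl]; exact hk2
      · refine ⟨k + n, by omega, by omega, ?_⟩
        simp only [hQ]; rw [if_neg (by omega : ¬ k + n ≤ n)]
        have hkk : k + n - n = k := by omega
        rw [hkk]; exact hk2
  have hQlo : ∀ t ≤ 2 * n, lo ≤ Q t := by
    intro t ht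
    obtain ⟨s, hs, hQs⟩ := hQval t ht
    rw [hQs]; exact hminle s hs
  have hQpar : ∀ t ≤ 2 * n, Q t % 2 = lo % 2 := by
    intro t ht
    obtain ⟨s, hs, hQs⟩ := hQval t ht
    rw [hQs, hpar s hs, hparlo]
  set T := {t : ℕ | j ≤ t ∧ lo + 1 ≤ Q t} with hT
  have hbT : b ∈ T := ⟨hjb, by omega⟩
  have htmem : sInf T ∈ T := Nat.sInf_mem ⟨b, hbT⟩
  have htb : sInf T ≤ b := Nat.sInf_le hbT
  have hQj : Q j = lo := by simp only [hQ]; rw [if_pos hjn, hjq, hlo]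
  have hjt : j < sInf T := by
    have h1 := htmem.1
    rcases h1.lt_or_eq with h | h
    · exact h
    · exfalso
      have h2 := htmem.2
      rw [← h] at h2
      omega
  have hpre : Q (sInf T - 1) ≤ lo := by
    have hnot : sInf T - 1 ∉ T := Nat.notMem_of_lt_sInf (by omega)
    by_contra hcon
    exact hnot ⟨by omega, by omega⟩
  have hstep := hQstep (sInf T - 1) (by omega)
  rw [(by omega : sInf T - 1 + 1 = sInf T)] at hstep
  have hQt : Q (sInf T) = lo + 1 := by
    have h2 := htmem.2
    omega
  have hfin := hQpar (sInf T) (by omega)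
  omega

lemma main_lemma {V : Type*} [Fintype V] (D : V → V → Prop) (hD : Irreflexive D)
    (hstrong : ∀ u v : V, Reach D u v) (u : V) :
    ∃ i : ℕ, dichrom D ≤
      2 * dichrom (fun (a b : {v : V // ddist D u v = i}) => D a.val b.val) := by
  classical
  cases isEmpty_or_nonempty V with
  | inl hV =>
      refine ⟨0, ?_⟩
      have h0 : dichrom D ≤ 0 :=
        dichrom_le (fun v => (hV.false v).elim) (fun i => i.elim0)
      omega
  | inr hV =>
  set d : V → ℕ := ddist D u with hd
  have hc : ∀ i : ℕ, ∃ c : {v : V // d v = i} →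
      Fin (dichrom (fun (a b : {v : V // d v = i}) => D a.val b.val)),
      ∀ j, ¬ HasCycleIn (fun (a b : {v : V // d v = i}) => D a.val b.val) {w | c w = j} :=
    fun i => dichrom_exists _ (fun a => hD a.val)
  choose c hcgood using hc
  have key : ∀ m : ℕ,
      (∀ v : V, dichrom (fun (a b : {w : V // d w = d v}) => D a.val b.val) ≤ m) →
      dichrom D ≤ 2 * m := by
    intro m hmB
    set g : ℕ → V → ℕ := fun i v => if h : d v = i then (c i ⟨v, h⟩).val else 0 with hg
    have hfval : ∀ (v : V) (ℓ : ℕ) (h : d v = ℓ), g (d v) v = (c ℓ ⟨v, h⟩).val := by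
      intro v ℓ h
      subst h
      simp [hg]
    have hflt : ∀ v : V, g (d v) v < m := by
      intro v
      have h1 : g (d v) v = (c (d v) ⟨v, rfl⟩).val := hfval v (d v) rfl
      have h2 := (c (d v) ⟨v, rfl⟩).isLt
      have h3 := hmB v
      omega
    refine dichrom_le
      (fun v => (⟨2 * g (d v) v + d v % 2, by have := hflt v; omega⟩ : Fin (2 * m))) ?_
    rintro ic ⟨n, p, hn1, hcl, harc, hA⟩
    have hcol : ∀ i ≤ n, 2 * g (d (p i)) (p i) + d (p i) % 2 = ic.val := by
      intro i hi
      exact congrArg Fin.val (hA i hi)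
    have hparf : ∀ i ≤ n,
        g (d (p i)) (p i) = g (d (p 0)) (p 0) ∧ d (p i) % 2 = d (p 0) % 2 := by
      intro i hi
      have h1 := hcol i hi
      have h2 := hcol 0 (by omega)
      omega
    have hlev : ∀ i ≤ n, d (p i) = d (p 0) := by
      apply seq_lemma (fun i => d (p i)) n
      · intro i hi
        exact ddist_succ_le (hstrong u (p i)) (harc i hi)
      · show d (p n) = d (p 0)
        rw [hcl]
      · intro i hi
        exact (hparf i hi).2
    refine hcgood (d (p 0)) (c (d (p 0)) ⟨p 0, rfl⟩)
      ⟨n, fun i => ⟨p (min i n), hlev _ (min_le_right _ _)⟩, hn1, ?_, ?_, ?_⟩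
    · apply Subtype.ext
      show p (min n n) = p (min 0 n)
      have e1 : min n n = n := by omega
      have e2 : min 0 n = 0 := by omega
      rw [e1, e2]
      exact hcl
    · intro i hi
      show D (p (min i n)) (p (min (i + 1) n))
      have h1 : min i n = i := by omega
      have h2 : min (i + 1) n = i + 1 := by omega
      rw [h1, h2]
      exact harc i hi
    · intro i hi
      have hle : min i n ≤ n := min_le_right _ _
      have hval : (c (d (p 0)) ⟨p (min i n), hlev _ hle⟩).val
          = (c (d (p 0)) ⟨p 0, rfl⟩).val := by
        rw [← hfval (p (min i n)) (d (p 0)) (hlev _ hle), ← hfval (p 0) (d (p 0)) rfl]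
        exact (hparf _ hle).1
      exact Fin.val_injective hval
  set F : Finset ℕ := Finset.image d Finset.univ with hF
  have hFne : F.Nonempty :=
    ⟨d (Classical.arbitrary V), Finset.mem_image_of_mem d (Finset.mem_univ _)⟩
  obtain ⟨istar, histar, hsup⟩ := Finset.exists_mem_eq_sup F hFne
    (fun i => dichrom (fun (a b : {v : V // d v = i}) => D a.val b.val))
  refine ⟨istar, ?_⟩
  have hbd : ∀ v : V, dichrom (fun (a b : {w : V // d w = d v}) => D a.val b.val)
      ≤ F.sup (fun i => dichrom (fun (a b : {v : V // d v = i}) => D a.val b.val)) :=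
    fun v => Finset.le_sup
      (f := fun i => dichrom (fun (a b : {v : V // d v = i}) => D a.val b.val))
      (Finset.mem_image_of_mem d (Finset.mem_univ v))
  have h2 := key _ hbd
  rw [hsup] at h2
  exact h2


/-- In a strongly connected digraph, for the BFS levels from a vertex `u` (out-levels, and
dually in-levels), some level `L` satisfies `χ⃗(D⟨L⟩) ≥ χ⃗(D)/2`. -/
theorem stmt12 {V : Type*} [Fintype V] (D : V → V → Prop) (hD : Irreflexive D)
    (hstrong : ∀ u v : V, Reach D u v) (u : V) :
    (∃ i : ℕ, dichrom D ≤
      2 * dichrom (fun (a b : {v : V // ddist D u v = i}) => D a.val b.val)) ∧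
    (∃ i : ℕ, dichrom D ≤
      2 * dichrom (fun (a b : {v : V // ddist D v u = i}) => D a.val b.val)) := by
  constructor
  · exact main_lemma D hD hstrong u
  · obtain ⟨i, hi⟩ := main_lemma (fun a b => D b a) (fun a h => hD a h)
      (fun x y => reach_flip D x y (hstrong y x)) u
    refine ⟨i, ?_⟩
    rw [dichrom_flip] at hi
    have e1 : dichrom (fun (a b : {v : V // ddist (fun a b => D b a) u v = i}) => D b.val a.val)
        = dichrom (fun (a b : {v : V // ddist D v u = i}) => D b.val a.val) :=
      dichrom_congr (P := fun v => ddist (fun a b => D b a) u v = i)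
        (Q := fun v => ddist D v u = i) (fun a b => D b a)
        (fun v => by
          show ddist (fun a b => D b a) u v = i ↔ ddist D v u = i
          rw [ddist_flip])
    have e2 : dichrom (fun (a b : {v : V // ddist D v u = i}) => D b.val a.val)
        = dichrom (fun (a b : {v : V // ddist D v u = i}) => D a.val b.val) :=
      dichrom_flip (fun (a b : {v : V // ddist D v u = i}) => D a.val b.val)
    calc dichrom D
        ≤ 2 * dichrom (fun (a b : {v : V // ddist (fun a b => D b a) u v = i}) =>
            D b.val a.val) := hi
      _ = 2 * dichrom (fun (a b : {v : V // ddist D v u = i}) => D b.val a.val) :=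
            congrArg (fun x => 2 * x) e1
      _ = 2 * dichrom (fun (a b : {v : V // ddist D v u = i}) => D a.val b.val) :=
            congrArg (fun x => 2 * x) e2
end

section
/- Every digraph F with n vertices and m arcs is χ⃗-maderian, with mad_{χ⃗}(F) ≤ 4^m (n−1) + 1. That is, every digraph D with dichromatic number at least 4^m(n−1)+1 contains a subdivision of F. -/
section IVT

lemma ivt_up {f : ℕ → ℕ} {a b c : ℕ} (hab : a ≤ b)
    (step : ∀ k, a ≤ k → k < b → f (k+1) ≤ f k + 1)
    (ha : f a < c) (hb : c ≤ f b) : ∃ k, a < k ∧ k ≤ b ∧ f k = c := by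
  classical
  have hne : ∃ k, (a ≤ k ∧ k ≤ b ∧ c ≤ f k) := ⟨b, hab, le_refl b, hb⟩
  set s := {k | a ≤ k ∧ k ≤ b ∧ c ≤ f k} with hs
  have hmem : sInf s ∈ s := Nat.sInf_mem hne
  obtain ⟨h1, h2, h3⟩ := hmem
  have hgt : a < sInf s := by
    rcases eq_or_lt_of_le h1 with h | h
    · exfalso; rw [← h] at h3; omega
    · exact h
  have hprev : sInf s - 1 ∉ s := Nat.notMem_of_lt_sInf (by omega)
  have hfprev : f (sInf s - 1) < c := by
    by_contra hc
    exact hprev ⟨by omega, by omega, by omega⟩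
  have : f (sInf s) ≤ f (sInf s - 1) + 1 := by
    have := step (sInf s - 1) (by omega) (by omega)
    simpa [Nat.sub_add_cancel (by omega : 1 ≤ sInf s)] using this
  exact ⟨sInf s, hgt, h2, by omega⟩

lemma ivt_down {f : ℕ → ℕ} {a b c : ℕ} (hab : a ≤ b)
    (step : ∀ k, a ≤ k → k < b → f k ≤ f (k+1) + 1)
    (ha : c < f a) (hb : f b ≤ c) : ∃ k, a < k ∧ k ≤ b ∧ f k = c := by
  classical
  have hne : ∃ k, (a ≤ k ∧ k ≤ b ∧ f k ≤ c) := ⟨b, hab, le_refl b, hb⟩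
  set s := {k | a ≤ k ∧ k ≤ b ∧ f k ≤ c} with hs
  have hmem : sInf s ∈ s := Nat.sInf_mem hne
  obtain ⟨h1, h2, h3⟩ := hmem
  have hgt : a < sInf s := by
    rcases eq_or_lt_of_le h1 with h | h
    · exfalso; rw [← h] at h3; omega
    · exact h
  have hprev : sInf s - 1 ∉ s := Nat.notMem_of_lt_sInf (by omega)
  have hfprev : c < f (sInf s - 1) := by
    by_contra hc
    exact hprev ⟨by omega, by omega, by omega⟩
  have : f (sInf s - 1) ≤ f (sInf s) + 1 := by
    have := step (sInf s - 1) (by omega) (by omega)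
    simpa [Nat.sub_add_cancel (by omega : 1 ≤ sInf s)] using this
  exact ⟨sInf s, hgt, h2, by omega⟩

end IVT

section Aux

variable {V : Type} {D : V → V → Prop}

def WalkIn (D : V → V → Prop) (A : Set V) (n : ℕ) (p : ℕ → V) (x y : V) : Prop :=
  p 0 = x ∧ p n = y ∧ (∀ i < n, D (p i) (p (i+1))) ∧ (∀ i ≤ n, p i ∈ A)

def ReachIn (D : V → V → Prop) (A : Set V) (x y : V) : Prop := ∃ n p, WalkIn D A n p x y

def chiASet (D : V → V → Prop) (A : Set V) : Set ℕ :=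
  {k : ℕ | ∃ c : V → Fin k, ∀ i : Fin k, ¬ HasCycleIn D (A ∩ {v | c v = i})}

noncomputable def chiA (D : V → V → Prop) (A : Set V) : ℕ := sInf (chiASet D A)

lemma hasCycleIn_mono {s t : Set V} (hst : s ⊆ t) (h : HasCycleIn D s) : HasCycleIn D t := by
  obtain ⟨n, p, h1, h2, h3, h4⟩ := h
  exact ⟨n, p, h1, h2, h3, fun i hi => hst (h4 i hi)⟩

lemma card_mem_chiASet [Fintype V] (hD : Irreflexive D) (A : Set V) :
    Fintype.card V ∈ chiASet D A := by
  refine ⟨Fintype.equivFin V, fun i h => ?_⟩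
  obtain ⟨n, p, h1, h2, h3, h4⟩ := h
  have e0 : p 1 = p 0 := by
    have a1 : (Fintype.equivFin V) (p 1) = i := (h4 1 h1).2
    have a0 : (Fintype.equivFin V) (p 0) = i := (h4 0 (Nat.zero_le _)).2
    exact (Fintype.equivFin V).injective (a1.trans a0.symm)
  exact hD (p 0) (e0 ▸ h3 0 h1)

lemma chiA_le_of_mem {A : Set V} {k : ℕ} (h : k ∈ chiASet D A) : chiA D A ≤ k :=
  Nat.sInf_le h

lemma chiA_le_card [Fintype V] (hD : Irreflexive D) (A : Set V) :
    chiA D A ≤ Fintype.card V := chiA_le_of_mem (card_mem_chiASet hD A)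

lemma chiA_realize [Fintype V] (hD : Irreflexive D) (A : Set V) :
    chiA D A ∈ chiASet D A :=
  Nat.sInf_mem ⟨_, card_mem_chiASet hD A⟩

lemma chiA_mono [Fintype V] (hD : Irreflexive D) {A B : Set V} (hAB : A ⊆ B) :
    chiA D A ≤ chiA D B := by
  obtain ⟨c, hc⟩ := chiA_realize hD B
  exact chiA_le_of_mem ⟨c, fun i h => hc i (hasCycleIn_mono (Set.inter_subset_inter_left _ hAB) h)⟩

lemma dichrom_eq_chiA_univ : dichrom D = chiA D Set.univ := by
  unfold dichrom chiA chiASet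
  simp only [Set.univ_inter]

lemma walkIn_segment {A : Set V} {n : ℕ} {p : ℕ → V} {x y : V} (h : WalkIn D A n p x y)
    {a b : ℕ} (hab : a ≤ b) (hb : b ≤ n) :
    WalkIn D A (b - a) (fun i => p (a + i)) (p a) (p b) := by
  obtain ⟨h1, h2, h3, h4⟩ := h
  refine ⟨by simp, by simp [Nat.add_sub_cancel' hab], fun i hi => ?_, fun i hi => ?_⟩
  · have : a + i < n := by omega
    simpa [Nat.add_assoc] using h3 (a + i) this
  · exact h4 (a + i) (by omega)

lemma walkIn_concat {A : Set V} {n m : ℕ} {p q : ℕ → V} {x y z : V}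
    (hp : WalkIn D A n p x y) (hq : WalkIn D A m q y z) :
    WalkIn D A (n + m) (fun i => if i ≤ n then p i else q (i - n)) x z := by
  obtain ⟨p1, p2, p3, p4⟩ := hp
  obtain ⟨q1, q2, q3, q4⟩ := hq
  have key : ∀ i, n ≤ i → (if i ≤ n then p i else q (i - n)) = q (i - n) := by
    intro i hi
    rcases eq_or_lt_of_le hi with h | h
    · simp [← h, p2, q1]
    · rw [if_neg (by omega)]
  refine ⟨by simp [p1], ?_, fun i hi => ?_, fun i hi => ?_⟩
  · show (if n + m ≤ n then p (n+m) else q (n + m - n)) = z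
    rw [key (n + m) (by omega)]
    simpa using q2
  · show D (if i ≤ n then p i else q (i - n)) (if i + 1 ≤ n then p (i+1) else q (i + 1 - n))
    rcases lt_or_ge i n with h | h
    · rw [if_pos (le_of_lt h), if_pos (by omega : i + 1 ≤ n)]
      exact p3 i h
    · rw [key i h, key (i+1) (by omega)]
      have e : i + 1 - n = (i - n) + 1 := by omega
      rw [e]
      exact q3 (i - n) (by omega)
  · show (if i ≤ n then p i else q (i - n)) ∈ A
    rcases le_or_gt i n with h | h
    · rw [if_pos h]; exact p4 i h
    · rw [key i (le_of_lt h)]; exact q4 (i - n) (by omega)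

lemma reachIn_refl {A : Set V} {x : V} (hx : x ∈ A) : ReachIn D A x x :=
  ⟨0, fun _ => x, rfl, rfl, fun i hi => absurd hi (Nat.not_lt_zero i), fun _ _ => hx⟩

lemma reachIn_trans {A : Set V} {x y z : V} (h1 : ReachIn D A x y) (h2 : ReachIn D A y z) :
    ReachIn D A x z := by
  obtain ⟨n, p, hp⟩ := h1; obtain ⟨m, q, hq⟩ := h2
  exact ⟨n + m, _, walkIn_concat hp hq⟩

lemma walkIn_mono {A B : Set V} (hAB : A ⊆ B) {n p x y} (h : WalkIn D A n p x y) :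
    WalkIn D B n p x y :=
  ⟨h.1, h.2.1, h.2.2.1, fun i hi => hAB (h.2.2.2 i hi)⟩

noncomputable def dFrom (D : V → V → Prop) (A : Set V) (r x : V) : ℕ :=
  sInf {n | ∃ p, WalkIn D A n p r x}
noncomputable def dTo (D : V → V → Prop) (A : Set V) (r x : V) : ℕ :=
  sInf {n | ∃ p, WalkIn D A n p x r}

lemma dFrom_realize {A : Set V} {r x : V} (h : ReachIn D A r x) :
    ∃ p, WalkIn D A (dFrom D A r x) p r x := by
  obtain ⟨n, p, hp⟩ := h
  exact Nat.sInf_mem (⟨n, p, hp⟩ : {n | ∃ p, WalkIn D A n p r x}.Nonempty)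

lemma dTo_realize {A : Set V} {r x : V} (h : ReachIn D A x r) :
    ∃ p, WalkIn D A (dTo D A r x) p x r := by
  obtain ⟨n, p, hp⟩ := h
  exact Nat.sInf_mem (⟨n, p, hp⟩ : {n | ∃ p, WalkIn D A n p x r}.Nonempty)

lemma dFrom_le {A : Set V} {r x : V} {n : ℕ} {p : ℕ → V} (h : WalkIn D A n p r x) :
    dFrom D A r x ≤ n := Nat.sInf_le ⟨p, h⟩

lemma dTo_le {A : Set V} {r x : V} {n : ℕ} {p : ℕ → V} (h : WalkIn D A n p x r) :
    dTo D A r x ≤ n := Nat.sInf_le ⟨p, h⟩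

lemma walkIn_single {A : Set V} {x y : V} (hxy : D x y) (hx : x ∈ A) (hy : y ∈ A) :
    WalkIn D A 1 (fun i => if i = 0 then x else y) x y := by
  refine ⟨by simp, by simp, fun i hi => ?_, fun i _ => ?_⟩
  · interval_cases i; simpa using hxy
  · by_cases h : i = 0 <;> simp [h, hx, hy]

lemma dFrom_arc {A : Set V} {r x y : V} (hr : ReachIn D A r x) (hxy : D x y)
    (hx : x ∈ A) (hy : y ∈ A) : dFrom D A r y ≤ dFrom D A r x + 1 := by
  obtain ⟨p, hp⟩ := dFrom_realize hr
  exact dFrom_le (walkIn_concat hp (walkIn_single hxy hx hy))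

lemma dTo_arc {A : Set V} {r x y : V} (hr : ReachIn D A y r) (hxy : D x y)
    (hx : x ∈ A) (hy : y ∈ A) : dTo D A r x ≤ dTo D A r y + 1 := by
  obtain ⟨p, hp⟩ := dTo_realize hr
  have := walkIn_concat (walkIn_single hxy hx hy) hp
  have h2 := dTo_le this
  omega

lemma dFrom_eq_zero {A : Set V} {r x : V} (h : ReachIn D A r x) (h0 : dFrom D A r x = 0) :
    x = r := by
  obtain ⟨p, hp⟩ := dFrom_realize h
  rw [h0] at hp
  exact hp.2.1.symm.trans hp.1

end Aux
section SC
variable {V : Type} {D : V → V → Prop}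

lemma cycle_in_component {A : Set V} {x : V}
    {n : ℕ} {p : ℕ → V} (hcyc : p n = p 0)
    (harc : ∀ i < n, D (p i) (p (i+1))) (hmem : ∀ i ≤ n, p i ∈ A) :
    (∀ i ≤ n, p i ∈ {y | y ∈ A ∧ ReachIn D A x y ∧ ReachIn D A y x}) ∨
    (∀ i ≤ n, p i ∉ {y | y ∈ A ∧ ReachIn D A x y ∧ ReachIn D A y x}) := by
  classical
  set S := {y | y ∈ A ∧ ReachIn D A x y ∧ ReachIn D A y x} with hSdef
  have hwalk : WalkIn D A n p (p 0) (p n) := ⟨rfl, rfl, harc, hmem⟩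
  have hreach0 : ∀ i ≤ n, ReachIn D A (p 0) (p i) :=
    fun i hi => ⟨i - 0, _, walkIn_segment hwalk (Nat.zero_le i) hi⟩
  have hreachb : ∀ i ≤ n, ReachIn D A (p i) (p 0) := by
    intro i hi
    have := walkIn_segment hwalk hi (le_refl n)
    rw [hcyc] at this
    exact ⟨n - i, _, this⟩
  by_cases hex : ∃ i ≤ n, p i ∈ S
  · obtain ⟨i₀, hi₀, hS₀⟩ := hex
    left
    intro i hi
    refine ⟨hmem i hi, ?_, ?_⟩
    · exact reachIn_trans hS₀.2.1 (reachIn_trans (hreachb i₀ hi₀) (hreach0 i hi))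
    · exact reachIn_trans (hreachb i hi) (reachIn_trans (hreach0 i₀ hi₀) hS₀.2.2)
  · right
    push_neg at hex
    exact hex

lemma exists_strong_subset [Fintype V] (hD : Irreflexive D) :
    ∀ (N : ℕ) (A : Set V), A.ncard ≤ N →
    ∃ S, S ⊆ A ∧ (∀ y ∈ S, ∀ z ∈ S, ReachIn D S y z) ∧ chiA D A ≤ chiA D S := by
  intro N
  induction N with
  | zero =>
    intro A hA
    have hA0 : A = ∅ := (Set.ncard_eq_zero (Set.toFinite A)).1 (by omega)
    subst hA0
    exact ⟨∅, le_refl _, fun y hy => absurd hy (Set.notMem_empty y), le_refl _⟩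
  | succ N ih =>
    intro A hA
    classical
    by_cases hne : A.Nonempty
    · obtain ⟨x, hx⟩ := hne
      set S := {y | y ∈ A ∧ ReachIn D A x y ∧ ReachIn D A y x} with hSdef
      have hxS : x ∈ S := ⟨hx, reachIn_refl hx, reachIn_refl hx⟩
      have hSA : S ⊆ A := fun y hy => hy.1
      have hstrong : ∀ y ∈ S, ∀ z ∈ S, ReachIn D S y z := by
        intro y hy z hz
        -- walk y → x stays in S
        obtain ⟨n, p, hp⟩ := hy.2.2
        have hwalk : WalkIn D A n p (p 0) (p n) := ⟨rfl, rfl, hp.2.2.1, hp.2.2.2⟩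
        have hyx : WalkIn D S n p y x := by
          refine ⟨hp.1, hp.2.1, hp.2.2.1, fun s hs => ?_⟩
          refine ⟨hp.2.2.2 s hs, ?_, ?_⟩
          · have hseg := walkIn_segment hwalk (Nat.zero_le s) hs
            rw [hp.1] at hseg
            exact reachIn_trans hy.2.1 ⟨s - 0, _, hseg⟩
          · have := walkIn_segment hwalk hs (le_refl n)
            rw [hp.2.1] at this
            exact ⟨n - s, _, this⟩
        obtain ⟨m, q, hq⟩ := hz.2.1
        have hwalk2 : WalkIn D A m q (q 0) (q m) := ⟨rfl, rfl, hq.2.2.1, hq.2.2.2⟩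
        have hxz : WalkIn D S m q x z := by
          refine ⟨hq.1, hq.2.1, hq.2.2.1, fun s hs => ?_⟩
          refine ⟨hq.2.2.2 s hs, ?_, ?_⟩
          · have := walkIn_segment hwalk2 (Nat.zero_le s) hs
            rw [hq.1] at this
            exact ⟨s - 0, _, this⟩
          · have := walkIn_segment hwalk2 hs (le_refl m)
            rw [hq.2.1] at this
            exact reachIn_trans ⟨m - s, _, this⟩ hz.2.2
        exact reachIn_trans ⟨n, p, hyx⟩ ⟨m, q, hxz⟩
      set T := A \ S with hTdef
      have hTA : T ⊂ A := (Set.ssubset_iff_of_subset Set.diff_subset).2 ⟨x, hx, fun hT => hT.2 hxS⟩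
      have hTcard : T.ncard ≤ N := by
        have h1 : T.ncard < A.ncard := Set.ncard_lt_ncard hTA (Set.toFinite A)
        omega
      obtain ⟨S', hS'T, hS'strong, hchiT⟩ := ih T hTcard
      -- combined colouring
      obtain ⟨cS, hcS⟩ := chiA_realize hD S
      obtain ⟨cT, hcT⟩ := chiA_realize hD T
      set K := max (chiA D S) (chiA D T) with hK
      have hmax : chiA D A ≤ K := by
        refine chiA_le_of_mem ⟨fun v => if v ∈ S then Fin.castLE (le_max_left _ _) (cS v)
          else Fin.castLE (le_max_right _ _) (cT v), fun i h => ?_⟩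
        obtain ⟨n, p, h1, h2, h3, h4⟩ := h
        have memA : ∀ s, s ≤ n → p s ∈ A := fun s hs => (h4 s hs).1
        rcases cycle_in_component (x := x) h2 h3 memA with hall | hnone
        · refine hcS (cS (p 0)) ⟨n, p, h1, h2, h3, fun s hs => ⟨hall s hs, ?_⟩⟩
          have e1 := (h4 s hs).2
          have e0 := (h4 0 (Nat.zero_le n)).2
          simp only [Set.mem_setOf_eq] at e1 e0
          rw [if_pos (hall s hs)] at e1
          rw [if_pos (hall 0 (Nat.zero_le n))] at e0
          show cS (p s) = cS (p 0)
          exact Fin.castLE_injective _ (e1.trans e0.symm)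
        · refine hcT (cT (p 0)) ⟨n, p, h1, h2, h3, fun s hs => ⟨⟨memA s hs, hnone s hs⟩, ?_⟩⟩
          have e1 := (h4 s hs).2
          have e0 := (h4 0 (Nat.zero_le n)).2
          simp only [Set.mem_setOf_eq] at e1 e0
          rw [if_neg (hnone s hs)] at e1
          rw [if_neg (hnone 0 (Nat.zero_le n))] at e0
          show cT (p s) = cT (p 0)
          exact Fin.castLE_injective _ (e1.trans e0.symm)
      rcases le_total (chiA D T) (chiA D S) with h | h
      · exact ⟨S, hSA, hstrong, by omega⟩
      · refine ⟨S', hS'T.trans Set.diff_subset, hS'strong, by omega⟩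
    · rw [Set.not_nonempty_iff_eq_empty] at hne
      exact ⟨A, le_refl _, by simp [hne], le_refl _⟩

end SC
section Lev
variable {V : Type} {D : V → V → Prop}

lemma chiASet_of_le {A : Set V} {k t : ℕ} (h : k ∈ chiASet D A) (hkt : k ≤ t) :
    t ∈ chiASet D A := by
  obtain ⟨c, hc⟩ := h
  refine ⟨fun v => Fin.castLE hkt (c v), fun i hcyc => ?_⟩
  obtain ⟨n, p, h1, h2, h3, h4⟩ := hcyc
  refine hc (c (p 0)) ⟨n, p, h1, h2, h3, fun s hs => ⟨(h4 s hs).1, ?_⟩⟩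
  have e1 := (h4 s hs).2
  have e0 := (h4 0 (Nat.zero_le n)).2
  simp only [Set.mem_setOf_eq] at e1 e0
  show c (p s) = c (p 0)
  exact Fin.castLE_injective _ (e1.trans e0.symm)

lemma chiA_singleton_le (hD : Irreflexive D) (x : V) : chiA D {x} ≤ 1 := by
  refine chiA_le_of_mem ⟨fun _ => (0 : Fin 1), fun i hcyc => ?_⟩
  obtain ⟨n, p, h1, h2, h3, h4⟩ := hcyc
  have e0 : p 0 ∈ ({x} : Set V) := (h4 0 (Nat.zero_le n)).1
  have e1 : p 1 ∈ ({x} : Set V) := (h4 1 h1).1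
  rw [Set.mem_singleton_iff] at e0 e1
  have harc := h3 0 h1
  rw [e0, e1] at harc
  exact hD x harc

lemma encode_inj {t a1 b1 c1 a2 b2 c2 : ℕ} (ha1 : a1 ≤ 1) (hb1 : b1 ≤ 1) (hc1 : c1 < t)
    (ha2 : a2 ≤ 1) (hb2 : b2 ≤ 1) (hc2 : c2 < t)
    (h : a1 * (2*t) + b1 * t + c1 = a2 * (2*t) + b2 * t + c2) :
    a1 = a2 ∧ b1 = b2 ∧ c1 = c2 := by
  interval_cases a1 <;> interval_cases a2 <;> interval_cases b1 <;> interval_cases b2 <;> omega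

end Lev
section Lev2
variable {V : Type} {D : V → V → Prop}

def cellSet (D : V → V → Prop) (A : Set V) (r : V) (i j : ℕ) : Set V :=
  {v | v ∈ A ∧ dFrom D A r v = i ∧ dTo D A r v = j}

lemma cycle_mod {n : ℕ} {p : ℕ → V} (hn : 1 ≤ n) (hcyc : p n = p 0) (k : ℕ) :
    p ((k + 1) % n) = p (k % n + 1) := by
  rcases eq_or_lt_of_le hn with h1 | h2
  · subst h1
    simp only [Nat.mod_one]
    exact hcyc.symm
  · have e0 : (k + 1) % n = (k % n + 1) % n := by
      conv_lhs => rw [Nat.add_mod]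
      rw [Nat.mod_eq_of_lt h2]
    rcases lt_or_ge (k % n + 1) n with h | h
    · rw [e0, Nat.mod_eq_of_lt h]
    · have hkn : k % n < n := Nat.mod_lt _ (by omega)
      have e1 : k % n + 1 = n := by omega
      rw [e0, e1, Nat.mod_self]
      exact hcyc.symm

lemma level_lemma [Fintype V] (hD : Irreflexive D) {A : Set V} {r : V} {t : ℕ}
    (ht : 1 ≤ t) (hr : r ∈ A)
    (hstrong : ∀ y ∈ A, ∀ z ∈ A, ReachIn D A y z)
    (hchi : 4 * t + 1 ≤ chiA D A) :
    ∃ B, B ⊆ A ∧ t + 1 ≤ chiA D B ∧ r ∉ B ∧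
      (∀ x ∈ B, ∃ n p, WalkIn D A n p r x ∧ 1 ≤ n ∧ ∀ s < n, p s ∉ B) ∧
      (∀ x ∈ B, ∃ n p, WalkIn D A n p x r ∧ 1 ≤ n ∧ ∀ s, 1 ≤ s → s ≤ n → p s ∉ B) := by
  classical
  have hreach : ∀ v ∈ A, ReachIn D A r v := fun v hv => hstrong r hr v hv
  have hreach' : ∀ v ∈ A, ReachIn D A v r := fun v hv => hstrong v hv r hr
  have hfstep : ∀ x y, x ∈ A → y ∈ A → D x y → dFrom D A r y ≤ dFrom D A r x + 1 :=
    fun x y hx hy hxy => dFrom_arc (hreach x hx) hxy hx hy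
  have hgstep : ∀ x y, x ∈ A → y ∈ A → D x y → dTo D A r x ≤ dTo D A r y + 1 :=
    fun x y hx hy hxy => dTo_arc (hreach' y hy) hxy hx hy
  have hmain : ∃ i j, t + 1 ≤ chiA D (cellSet D A r i j) := by
    by_contra hno
    push_neg at hno
    have hcc : ∀ i j, ∃ c : V → Fin t,
        ∀ col : Fin t, ¬ HasCycleIn D (cellSet D A r i j ∩ {v | c v = col}) := by
      intro i j
      exact chiASet_of_le (chiA_realize hD (cellSet D A r i j)) (by have := hno i j; omega)
    choose cc hcc using hcc
    have hcol : 4 * t ∈ chiASet D A := by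
      refine ⟨fun v => ⟨(dFrom D A r v % 2) * (2*t) + (dTo D A r v % 2) * t
        + (cc (dFrom D A r v) (dTo D A r v) v).val, ?_⟩, ?_⟩
      · have h1 : dFrom D A r v % 2 ≤ 1 := by omega
        have h2 : dTo D A r v % 2 ≤ 1 := by omega
        have h3 := (cc (dFrom D A r v) (dTo D A r v) v).isLt
        have h4 := Nat.mul_le_mul_right (2*t) h1
        have h5 := Nat.mul_le_mul_right t h2
        omega
      · intro i hcyc
        obtain ⟨n, p, h1, h2, h3, h4⟩ := hcyc
        have memA : ∀ s ≤ n, p s ∈ A := fun s hs => (h4 s hs).1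
        -- colour equalities
        have key : ∀ s ≤ n, ∀ s' ≤ n,
            dFrom D A r (p s) % 2 = dFrom D A r (p s') % 2 ∧
            dTo D A r (p s) % 2 = dTo D A r (p s') % 2 ∧
            (cc (dFrom D A r (p s)) (dTo D A r (p s)) (p s)).val
              = (cc (dFrom D A r (p s')) (dTo D A r (p s')) (p s')).val := by
          intro s hs s' hs'
          have e1 := (h4 s hs).2
          have e2 := (h4 s' hs').2
          simp only [Set.mem_setOf_eq] at e1 e2
          have e := congrArg Fin.val (e1.trans e2.symm)
          simp only at e
          exact encode_inj (by omega) (by omega) (Fin.isLt _) (by omega) (by omega) (Fin.isLt _) e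
        -- the periodic extension
        set P : ℕ → V := fun k => p (k % n) with hP
        have hnpos : 0 < n := h1
        have hPmem : ∀ k, P k ∈ A := fun k => memA (k % n) (le_of_lt (Nat.mod_lt _ hnpos))
        have hPle : ∀ k, k % n ≤ n := fun k => le_of_lt (Nat.mod_lt _ hnpos)
        have hPeq : ∀ s, s ≤ n → P s = p s := by
          intro s hs
          rcases eq_or_lt_of_le hs with h | h
          · subst h; show p (s % s) = p s; rw [Nat.mod_self, ← h2]
          · show p (s % n) = p s; rw [Nat.mod_eq_of_lt h]
        have hParc : ∀ k, D (P k) (P (k+1)) := by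
          intro k
          show D (p (k % n)) (p ((k+1) % n))
          rw [cycle_mod h1 h2 k]
          exact h3 (k % n) (Nat.mod_lt _ hnpos)
        have hPshift : ∀ k, P (k + n) = P k := by
          intro k; show p ((k + n) % n) = p (k % n); rw [Nat.add_mod_right]
        -- all dFrom values are equal
        obtain ⟨sM, hsM, hmaxf⟩ : ∃ s ∈ Finset.range (n+1), ∀ s' ∈ Finset.range (n+1),
            dFrom D A r (p s') ≤ dFrom D A r (p s) :=
          Finset.exists_max_image _ _ ⟨0, Finset.mem_range.2 (by omega)⟩
        rw [Finset.mem_range] at hsM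
        have hsMn : sM ≤ n := by omega
        have hfall : ∀ s ≤ n, dFrom D A r (p s) = dFrom D A r (p sM) := by
          by_contra hnall
          push_neg at hnall
          obtain ⟨s', hs', hne⟩ := hnall
          have hlt : dFrom D A r (p s') < dFrom D A r (p sM) :=
            lt_of_le_of_ne (hmaxf s' (Finset.mem_range.2 (by omega))) hne
          have hpar := (key s' hs' sM hsMn).1
          set M := dFrom D A r (p sM) with hM
          have hle2 : dFrom D A r (p s') + 2 ≤ M := by omega
          set b := if s' ≤ sM then sM else sM + n with hb
          have hbge : s' ≤ b := by
            rw [hb]; split <;> omega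
          have hPb : P b = p sM := by
            rw [hb]; split
            · exact hPeq sM hsMn
            · rw [hPshift, hPeq sM hsMn]
          obtain ⟨k, hk1, hk2, hk3⟩ := ivt_up (f := fun k => dFrom D A r (P k)) (c := M - 1)
            hbge (fun k _ _ => hfstep _ _ (hPmem k) (hPmem (k+1)) (hParc k))
            (by show dFrom D A r (P s') < M - 1; rw [hPeq s' hs']; omega)
            (by show M - 1 ≤ dFrom D A r (P b); rw [hPb]; omega)
          have hparc := (key (k % n) (hPle k) sM hsMn).1
          have : dFrom D A r (p (k % n)) = M - 1 := hk3
          omega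
        -- all dTo values are equal
        obtain ⟨sJ, hsJ, hmaxg⟩ : ∃ s ∈ Finset.range (n+1), ∀ s' ∈ Finset.range (n+1),
            dTo D A r (p s') ≤ dTo D A r (p s) :=
          Finset.exists_max_image _ _ ⟨0, Finset.mem_range.2 (by omega)⟩
        rw [Finset.mem_range] at hsJ
        have hsJn : sJ ≤ n := by omega
        have hgall : ∀ s ≤ n, dTo D A r (p s) = dTo D A r (p sJ) := by
          by_contra hnall
          push_neg at hnall
          obtain ⟨s', hs', hne⟩ := hnall
          have hlt : dTo D A r (p s') < dTo D A r (p sJ) :=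
            lt_of_le_of_ne (hmaxg s' (Finset.mem_range.2 (by omega))) hne
          have hpar := (key s' hs' sJ hsJn).2.1
          set J := dTo D A r (p sJ) with hJ
          have hle2 : dTo D A r (p s') + 2 ≤ J := by omega
          set b := if sJ ≤ s' then s' else s' + n with hb
          have hbge : sJ ≤ b := by
            rw [hb]; split <;> omega
          have hPb : P b = p s' := by
            rw [hb]; split
            · exact hPeq s' hs'
            · rw [hPshift, hPeq s' hs']
          obtain ⟨k, hk1, hk2, hk3⟩ := ivt_down (f := fun k => dTo D A r (P k)) (c := J - 1)
            hbge (fun k _ _ => hgstep _ _ (hPmem k) (hPmem (k+1)) (hParc k))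
            (by show J - 1 < dTo D A r (P sJ); rw [hPeq sJ hsJn]; omega)
            (by show dTo D A r (P b) ≤ J - 1; rw [hPb]; omega)
          have hparc := (key (k % n) (hPle k) sJ hsJn).2.1
          have : dTo D A r (p (k % n)) = J - 1 := hk3
          omega
        -- cycle lies in a single cell, monochromatic for its colouring
        refine hcc (dFrom D A r (p 0)) (dTo D A r (p 0)) (cc (dFrom D A r (p 0)) (dTo D A r (p 0)) (p 0))
          ⟨n, p, h1, h2, h3, fun s hs => ⟨⟨memA s hs, ?_, ?_⟩, ?_⟩⟩
        · rw [hfall s hs, hfall 0 (by omega)]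
        · rw [hgall s hs, hgall 0 (by omega)]
        · show cc (dFrom D A r (p 0)) (dTo D A r (p 0)) (p s)
            = cc (dFrom D A r (p 0)) (dTo D A r (p 0)) (p 0)
          have hv := (key s hs 0 (by omega)).2.2
          have ef : dFrom D A r (p s) = dFrom D A r (p 0) :=
            (hfall s hs).trans (hfall 0 (by omega)).symm
          have eg : dTo D A r (p s) = dTo D A r (p 0) :=
            (hgall s hs).trans (hgall 0 (by omega)).symm
          rw [ef, eg] at hv
          exact Fin.val_injective hv
    have := chiA_le_of_mem hcol
    omega
  obtain ⟨i, j, hij⟩ := hmain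
  set B := cellSet D A r i j with hB
  have hBA : B ⊆ A := fun v hv => hv.1
  have hrB : r ∉ B := by
    intro hrmem
    have hf0 : dFrom D A r r = 0 :=
      Nat.le_zero.1 (dFrom_le ⟨rfl, rfl, fun i hi => absurd hi (by omega), fun _ _ => hr⟩)
    have hg0 : dTo D A r r = 0 :=
      Nat.le_zero.1 (dTo_le ⟨rfl, rfl, fun i hi => absurd hi (by omega), fun _ _ => hr⟩)
    have hi0 : i = 0 := by rw [← hrmem.2.1, hf0]
    have hj0 : j = 0 := by rw [← hrmem.2.2, hg0]
    have hsub : B ⊆ {r} := by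
      intro x hx
      have : dFrom D A r x = 0 := by rw [hx.2.1, hi0]
      exact dFrom_eq_zero (hreach x hx.1) this
    have := (chiA_mono hD hsub).trans (chiA_singleton_le hD r)
    omega
  refine ⟨B, hBA, hij, hrB, ?_, ?_⟩
  · intro x hx
    obtain ⟨p, hp⟩ := dFrom_realize (hreach x (hBA hx))
    refine ⟨dFrom D A r x, p, hp, ?_, ?_⟩
    · rcases Nat.eq_zero_or_pos (dFrom D A r x) with h0 | h0
      · exact absurd (dFrom_eq_zero (hreach x (hBA hx)) h0 ▸ hx) hrB
      · exact h0
    · intro s hs hsB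
      have hseg := walkIn_segment hp (Nat.zero_le s) (le_of_lt hs)
      rw [hp.1] at hseg
      have : dFrom D A r (p s) ≤ s := by
        have := dFrom_le hseg
        omega
      rw [hsB.2.1] at this
      have : dFrom D A r x = i := hx.2.1
      omega
  · intro x hx
    obtain ⟨p, hp⟩ := dTo_realize (hreach' x (hBA hx))
    refine ⟨dTo D A r x, p, hp, ?_, ?_⟩
    · rcases Nat.eq_zero_or_pos (dTo D A r x) with h0 | h0
      · obtain ⟨q, hq⟩ := dTo_realize (hreach' x (hBA hx))
        rw [h0] at hq
        have : x = r := hq.1.symm.trans hq.2.1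
        exact absurd (this ▸ hx) hrB
      · exact h0
    · intro s hs1 hs2 hsB
      have hseg := walkIn_segment hp hs2 (le_refl _)
      rw [hp.2.1] at hseg
      have hle : dTo D A r (p s) ≤ dTo D A r x - s := dTo_le hseg
      have e1 : dTo D A r (p s) = j := hsB.2.2
      have e2 : dTo D A r x = j := hx.2.2
      omega
end Lev2
section Short
variable {V : Type} {D : V → V → Prop}

lemma exists_simple_path {W : Set V} {a b : V} (hab : a ≠ b) :
    ∀ (n : ℕ) (p : ℕ → V), p 0 = a → p n = b → (∀ i < n, D (p i) (p (i+1))) →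
      (∀ i ≤ n, p i ∈ W) →
      ∃ (m : ℕ) (q : ℕ → V), 1 ≤ m ∧ q 0 = a ∧ q m = b ∧ (∀ i < m, D (q i) (q (i+1))) ∧
        (∀ i ≤ m, q i ∈ W) ∧ (∀ i ≤ m, ∀ j ≤ m, q i = q j → i = j) := by
  intro n
  induction n using Nat.strong_induction_on with
  | _ n ih =>
    intro p h0 hn harc hmem
    by_cases hinj : ∀ i ≤ n, ∀ j ≤ n, p i = p j → i = j
    · have hn1 : 1 ≤ n := by
        rcases Nat.eq_zero_or_pos n with h | h
        · subst h; exact absurd (h0.symm.trans hn) hab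
        · exact h
      exact ⟨n, p, hn1, h0, hn, harc, hmem, hinj⟩
    · push_neg at hinj
      obtain ⟨i, hi, j, hj, heq, hne⟩ := hinj
      have hex : ∃ i j, i < j ∧ j ≤ n ∧ p i = p j := by
        rcases lt_or_gt_of_ne hne with h | h
        · exact ⟨i, j, h, hj, heq⟩
        · exact ⟨j, i, h, hi, heq.symm⟩
      clear hne heq hi hj
      obtain ⟨i, j, hij, hjn, heq⟩ := hex
      set d := j - i with hd
      set q : ℕ → V := fun s => if s ≤ i then p s else p (s + d) with hq
      have hqval_hi : ∀ s, i < s → q s = p (s + d) := fun s hs => if_neg (by omega)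
      have hqval_lo : ∀ s, s ≤ i → q s = p s := fun s hs => if_pos hs
      refine ih (n - d) (by omega) q ?_ ?_ ?_ ?_
      · rw [hqval_lo 0 (by omega), h0]
      · rcases le_or_gt (n - d) i with h | h
        · have hji : j = n := by omega
          have hni : n - d = i := by omega
          rw [hqval_lo _ h, hni, heq, hji, hn]
        · rw [hqval_hi _ h]
          have : n - d + d = n := by omega
          rw [this, hn]
      · intro s hs
        rcases lt_trichotomy s i with h | h | h
        · rw [hqval_lo s (by omega), hqval_lo (s+1) (by omega)]
          exact harc s (by omega)
        · subst h
          rw [hqval_lo s (le_refl s), hqval_hi (s+1) (by omega)]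
          have e : s + 1 + d = j + 1 := by omega
          rw [e, heq]
          exact harc j (by omega)
        · rw [hqval_hi s h, hqval_hi (s+1) (by omega)]
          have e : s + 1 + d = s + d + 1 := by omega
          rw [e]
          exact harc (s + d) (by omega)
      · intro s hs
        rcases le_or_gt s i with h | h
        · rw [hqval_lo s h]; exact hmem s (by omega)
        · rw [hqval_hi s h]; exact hmem (s + d) (by omega)

lemma one_mem_chiASet_empty (hV : Nonempty V) : 1 ∈ chiASet D (∅ : Set V) := by
  refine ⟨fun _ => (0 : Fin 1), fun i hcyc => ?_⟩
  obtain ⟨n, p, h1, h2, h3, h4⟩ := hcyc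
  exact absurd (h4 0 (Nat.zero_le n)).1 (Set.notMem_empty _)

lemma nonempty_of_chiA_ge_two (hV : Nonempty V) {A : Set V} (h : 2 ≤ chiA D A) :
    A.Nonempty := by
  by_contra hA
  rw [Set.not_nonempty_iff_eq_empty] at hA
  subst hA
  have := chiA_le_of_mem (D := D) (one_mem_chiASet_empty (D := D) hV)
  omega

lemma dichrom_le_card {W : Type} [Fintype W] {E : W → W → Prop} (hE : Irreflexive E) :
    dichrom E ≤ Fintype.card W := by
  refine Nat.sInf_le ⟨Fintype.equivFin W, fun i h => ?_⟩
  obtain ⟨n, p, h1, h2, h3, h4⟩ := h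
  have e0 : p 1 = p 0 := by
    have a1 : (Fintype.equivFin W) (p 1) = i := h4 1 h1
    have a0 : (Fintype.equivFin W) (p 0) = i := h4 0 (Nat.zero_le _)
    exact (Fintype.equivFin W).injective (a1.trans a0.symm)
  exact hE (p 0) (e0 ▸ h3 0 h1)

lemma dichromSet_nonempty {W : Type} [Fintype W] {E : W → W → Prop} (hE : Irreflexive E) :
    Fintype.card W ∈ {k : ℕ | ∃ c : W → Fin k, ∀ i : Fin k, ¬ HasCycleIn E {v | c v = i}} := by
  refine ⟨Fintype.equivFin W, fun i h => ?_⟩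
  obtain ⟨n, p, h1, h2, h3, h4⟩ := h
  have e0 : p 1 = p 0 := by
    have a1 : (Fintype.equivFin W) (p 1) = i := h4 1 h1
    have a0 : (Fintype.equivFin W) (p 0) = i := h4 0 (Nat.zero_le _)
    exact (Fintype.equivFin W).injective (a1.trans a0.symm)
  exact hE (p 0) (e0 ▸ h3 0 h1)

lemma le_dichrom_of_chiA [Fintype V] (hD : Irreflexive D) {B : Set V} {t : ℕ}
    (hB : t ≤ chiA D B) (hBne : B.Nonempty) :
    t ≤ dichrom (fun x y : ↥B => D x.val y.val) := by
  classical
  haveI : Fintype ↥B := (Set.toFinite B).fintype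
  have hE : Irreflexive (fun x y : ↥B => D x.val y.val) := fun x h => hD x.val h
  have hall : ∀ k, (∃ c : ↥B → Fin k,
      ∀ i : Fin k, ¬ HasCycleIn (fun x y : ↥B => D x.val y.val) {v | c v = i}) → t ≤ k := by
    rintro k ⟨c, hc⟩
    have hK1 : 1 ≤ k := by
      rcases Nat.eq_zero_or_pos k with h | h
      · subst h
        obtain ⟨x, hx⟩ := hBne
        exact (c ⟨x, hx⟩).elim0
      · exact h
    have hmemk : k ∈ chiASet D B := by
      refine ⟨fun v => if h : v ∈ B then c ⟨v, h⟩ else ⟨0, hK1⟩, fun i hcyc => ?_⟩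
      obtain ⟨n, p, h1, h2, h3, h4⟩ := hcyc
      have hmemB : ∀ s ≤ n, p s ∈ B := fun s hs => (h4 s hs).1
      set p' : ℕ → ↥B := fun s =>
        if h : p s ∈ B then (⟨p s, h⟩ : ↥B) else ⟨p 0, hmemB 0 (Nat.zero_le n)⟩ with hp'
      have hval : ∀ s ≤ n, (p' s).val = p s := by
        intro s hs
        show ((if h : p s ∈ B then (⟨p s, h⟩ : ↥B) else _) : ↥B).val = p s
        rw [dif_pos (hmemB s hs)]
      refine hc (c (p' 0)) ⟨n, p', h1, ?_, fun s hs => ?_, fun s hs => ?_⟩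
      · apply Subtype.val_injective
        rw [hval n (le_refl n), hval 0 (Nat.zero_le n), h2]
      · show D (p' s).val (p' (s+1)).val
        rw [hval s (by omega), hval (s+1) (by omega)]
        exact h3 s hs
      · show c (p' s) = c (p' 0)
        have e1 := (h4 s hs).2
        have e0 := (h4 0 (Nat.zero_le n)).2
        simp only [Set.mem_setOf_eq] at e1 e0
        rw [dif_pos (hmemB s hs)] at e1
        rw [dif_pos (hmemB 0 (Nat.zero_le n))] at e0
        have ep1 : p' s = ⟨p s, hmemB s hs⟩ := dif_pos (hmemB s hs)
        have ep0 : p' 0 = ⟨p 0, hmemB 0 (Nat.zero_le n)⟩ := dif_pos (hmemB 0 (Nat.zero_le n))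
        rw [ep1, ep0, e1, e0]
    have := chiA_le_of_mem hmemk
    omega
  exact hall _ (Nat.sInf_mem ⟨_, dichromSet_nonempty hE⟩)
end Short
lemma main_ind : ∀ (m : ℕ) (U V : Type) (instU : Fintype U) (instV : Fintype V)
    (F : U → U → Prop) (D : V → V → Prop), Irreflexive F → Irreflexive D →
    Nat.card {a : U × U // F a.1 a.2} = m →
    4 ^ m * (Fintype.card U - 1) + 1 ≤ dichrom D → IsSubdivision F D := by
  intro m
  induction m using Nat.strong_induction_on with
  | _ m ih =>
  intro U V instU instV F D hF hD hm hchi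
  classical
  have hVne : Nonempty V := by
    by_contra h
    haveI hVempty : IsEmpty V := not_nonempty_iff.1 h
    have : dichrom D ≤ 0 := Nat.sInf_le ⟨fun v => (hVempty.elim v), fun i hcyc => by
      obtain ⟨n, p, _⟩ := hcyc
      exact (hVempty.elim (p 0))⟩
    omega
  by_cases hm0 : m = 0
  · -- base case : no arcs
    subst hm0
    have hnoarc : ∀ u v, ¬ F u v := by
      intro u v huv
      haveI : Nonempty {a : U × U // F a.1 a.2} := ⟨⟨(u, v), huv⟩⟩
      have := Nat.card_pos (α := {a : U × U // F a.1 a.2})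
      omega
    have hcard : Fintype.card U ≤ Fintype.card V := by
      have h1 := dichrom_le_card hD
      have h2 : 4 ^ 0 * (Fintype.card U - 1) + 1 = Fintype.card U - 1 + 1 := by norm_num
      omega
    obtain ⟨emb⟩ := Function.Embedding.nonempty_of_card_le hcard
    exact ⟨emb, fun _ _ => 1, fun _ _ _ => Classical.arbitrary V, emb.injective,
      fun u v huv => absurd huv (hnoarc u v), fun u v huv => absurd huv (hnoarc u v),
      fun u v huv => absurd huv (hnoarc u v), fun u v huv => absurd huv (hnoarc u v),
      fun u v huv => absurd huv (hnoarc u v), fun u v huv => absurd huv (hnoarc u v)⟩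
  · -- inductive step
    have hm1 : 1 ≤ m := by omega
    have hFne : Nonempty {a : U × U // F a.1 a.2} := by
      by_contra h
      haveI := not_nonempty_iff.1 h
      rw [Nat.card_of_isEmpty] at hm
      omega
    obtain ⟨⟨⟨u₀, v₀⟩, harc⟩⟩ := hFne
    have hne0 : u₀ ≠ v₀ := fun h => hF v₀ (h ▸ harc)
    have hcardU : 2 ≤ Fintype.card U := Fintype.one_lt_card_iff_nontrivial.2 ⟨⟨u₀, v₀, hne0⟩⟩
    have ht1 : 1 ≤ 4 ^ (m-1) * (Fintype.card U - 1) :=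
      Nat.one_le_iff_ne_zero.2 (Nat.mul_ne_zero (by positivity) (by omega))
    have hchit : 4 * (4 ^ (m-1) * (Fintype.card U - 1)) + 1 ≤ dichrom D := by
      have e : 4 ^ m * (Fintype.card U - 1) = 4 * (4 ^ (m-1) * (Fintype.card U - 1)) := by
        conv_lhs => rw [show m = m - 1 + 1 by omega]
        rw [pow_succ]
        ring
      omega
    obtain ⟨S, hSuniv, hSstrong, hSchi⟩ :=
      exists_strong_subset hD (Set.univ : Set V).ncard Set.univ (le_refl _)
    have hchiS : 4 * (4 ^ (m-1) * (Fintype.card U - 1)) + 1 ≤ chiA D S := by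
      have hdu := dichrom_eq_chiA_univ (D := D)
      omega
    have hSne : S.Nonempty := nonempty_of_chiA_ge_two (D := D) hVne (by omega)
    obtain ⟨r, hr⟩ := hSne
    obtain ⟨B, hBS, hBchi, hrB, houtp, hinp⟩ := level_lemma hD ht1 hr hSstrong hchiS
    have hBne : B.Nonempty := nonempty_of_chiA_ge_two (D := D) hVne (by omega)
    haveI instB : Fintype ↥B := (Set.toFinite B).fintype
    have hEirr : Irreflexive (fun x y : ↥B => D x.val y.val) := fun x h => hD x.val h
    set F' : U → U → Prop := fun a b => F a b ∧ (a, b) ≠ (u₀, v₀) with hF'def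
    have hF'irr : Irreflexive F' := fun u h => hF u h.1
    have hset : {a : U × U | F' a.1 a.2} = {a : U × U | F a.1 a.2} \ {(u₀, v₀)} := by
      ext ⟨x1, x2⟩
      simp [hF'def]
    have hcard' : Nat.card {a : U × U // F' a.1 a.2} = m - 1 := by
      have h1 : Nat.card {a : U × U // F' a.1 a.2}
          = ({a : U × U | F a.1 a.2} \ {(u₀, v₀)}).ncard := by
        rw [← hset]
        exact Nat.card_coe_set_eq _
      have h2 : ({a : U × U | F a.1 a.2} \ {(u₀, v₀)}).ncard
          = {a : U × U | F a.1 a.2}.ncard - 1 :=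
        Set.ncard_diff_singleton_of_mem (show (u₀, v₀) ∈ {a : U × U | F a.1 a.2} from harc)
      have h3 : {a : U × U | F a.1 a.2}.ncard = m := by
        rw [← hm]
        exact (Nat.card_coe_set_eq _).symm
      omega
    have hdichE : 4 ^ (m-1) * (Fintype.card U - 1) + 1
        ≤ dichrom (fun x y : ↥B => D x.val y.val) :=
      le_dichrom_of_chiA hD hBchi hBne
    have hsub' : IsSubdivision F' (fun x y : ↥B => D x.val y.val) :=
      ih (m-1) (by omega) U ↥B instU instB F' _ hF'irr hEirr hcard' hdichE
    obtain ⟨emb', len', p', hinj', hlen', hend', harc', hpinj', hint', hdisj'⟩ := hsub'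
    -- build the connecting path for the arc (u₀, v₀)
    have hab : (emb' u₀).val ≠ (emb' v₀).val :=
      fun h => hne0 (hinj' (Subtype.val_injective h))
    obtain ⟨n1, q1, hq1, hn1, hq1B⟩ := hinp (emb' u₀).val (emb' u₀).2
    obtain ⟨n2, q2, hq2, hn2, hq2B⟩ := houtp (emb' v₀).val (emb' v₀).2
    have hW := walkIn_concat hq1 hq2
    have hQmem : ∀ s ≤ n1 + n2,
        (if s ≤ n1 then q1 s else q2 (s - n1))
          ∈ {v : V | v = (emb' u₀).val ∨ v = (emb' v₀).val ∨ v ∉ B} := by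
      intro s hs
      rcases eq_or_ne s 0 with h0 | h0
      · subst h0
        exact Or.inl (by rw [if_pos (Nat.zero_le n1)]; exact hq1.1)
      rcases eq_or_ne s (n1 + n2) with hend | hend
      · refine Or.inr (Or.inl ?_)
        subst hend
        exact hW.2.1
      · right; right
        rcases le_or_gt s n1 with h | h
        · rw [if_pos h]
          exact hq1B s (by omega) h
        · rw [if_neg (not_le.2 h)]
          exact hq2B (s - n1) (by omega)
    obtain ⟨m₀, q, hm₀, hq0, hqm, hqarc, hqmemW, hqinj⟩ :=
      exists_simple_path hab (n1 + n2) (fun i => if i ≤ n1 then q1 i else q2 (i - n1)) hW.1 hW.2.1 hW.2.2.1 hQmem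
    have hqint : ∀ s, 0 < s → s < m₀ → q s ∉ B := by
      intro s hs1 hs2
      rcases hqmemW s (by omega) with h | h | h
      · exact absurd (hqinj s (by omega) 0 (by omega) (h.trans hq0.symm)) (by omega)
      · exact absurd (hqinj s (by omega) m₀ (by omega) (h.trans hqm.symm)) (by omega)
      · exact h
    -- assemble the subdivision of F
    refine ⟨fun u => (emb' u).val,
      fun u v => if (u, v) = (u₀, v₀) then m₀ else len' u v,
      fun u v s => if (u, v) = (u₀, v₀) then q s else (p' u v s).val,
      fun x y h => hinj' (Subtype.val_injective h), ?_, ?_, ?_, ?_, ?_, ?_⟩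
    · intro u v huv
      by_cases h : (u, v) = (u₀, v₀)
      · simp only [if_pos h]; exact hm₀
      · simp only [if_neg h]; exact hlen' u v ⟨huv, h⟩
    · intro u v huv
      by_cases h : (u, v) = (u₀, v₀)
      · have hu : u = u₀ := congrArg Prod.fst h
        have hv : v = v₀ := congrArg Prod.snd h
        simp only [if_pos h]
        subst hu; subst hv
        exact ⟨hq0, hqm⟩
      · simp only [if_neg h]
        exact ⟨congrArg Subtype.val (hend' u v ⟨huv, h⟩).1,
          congrArg Subtype.val (hend' u v ⟨huv, h⟩).2⟩
    · intro u v huv i hi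
      by_cases h : (u, v) = (u₀, v₀)
      · simp only [if_pos h] at hi ⊢
        exact hqarc i hi
      · simp only [if_neg h] at hi ⊢
        exact harc' u v ⟨huv, h⟩ i hi
    · intro u v huv i hi j hj
      by_cases h : (u, v) = (u₀, v₀)
      · simp only [if_pos h] at hi hj ⊢
        exact hqinj i hi j hj
      · simp only [if_neg h] at hi hj ⊢
        intro hvaleq
        exact hpinj' u v ⟨huv, h⟩ i hi j hj (Subtype.val_injective hvaleq)
    · intro u v huv i hi1 hi2 w
      by_cases h : (u, v) = (u₀, v₀)
      · simp only [if_pos h] at hi2 ⊢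
        intro heq
        exact hqint i hi1 hi2 (by rw [heq]; exact (emb' w).2)
      · simp only [if_neg h] at hi2 ⊢
        intro heq
        exact hint' u v ⟨huv, h⟩ i hi1 hi2 w (Subtype.val_injective heq)
    · intro u v huv u' v' huv' hnepair i hi1 hi2 j hj1 hj2
      by_cases h : (u, v) = (u₀, v₀) <;> by_cases h' : (u', v') = (u₀, v₀)
      · exact absurd (h.trans h'.symm) hnepair
      · simp only [if_pos h, if_neg h'] at hi2 hj2 ⊢
        intro heq
        exact hqint i hi1 hi2 (by rw [heq]; exact (p' u' v' j).2)
      · simp only [if_neg h, if_pos h'] at hi2 hj2 ⊢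
        intro heq
        exact hqint j hj1 hj2 (by rw [← heq]; exact (p' u v i).2)
      · simp only [if_neg h, if_neg h'] at hi2 hj2 ⊢
        intro heq
        exact hdisj' u v ⟨huv, h⟩ u' v' ⟨huv', h'⟩ hnepair i hi1 hi2 j hj1 hj2
          (Subtype.val_injective heq)

/-- Every digraph `F` with `n` vertices and `m` arcs is χ⃗-maderian with
`mad_{χ⃗}(F) ≤ 4^m (n-1) + 1`: every digraph with dichromatic number at least
`4^m (n-1) + 1` contains a subdivision of `F`. -/
theorem stmt14 (U : Type) [Fintype U] (F : U → U → Prop) (hF : Irreflexive F)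
    (V : Type) [Fintype V] (D : V → V → Prop) (hD : Irreflexive D)
    (hchi : 4 ^ (Nat.card {a : U × U // F a.1 a.2}) * (Fintype.card U - 1) + 1 ≤ dichrom D) :
    IsSubdivision F D :=
  main_ind (Nat.card {a : U × U // F a.1 a.2}) U V inferInstance inferInstance F D hF hD rfl hchi
end

section
/- For every oriented forest F, mad_{χ⃗}(F) = |V(F)|: every digraph with dichromatic number at least |V(F)| contains F as a subdigraph (hence a subdivision), and this bound is best possible. -/
/-- The set of integers `c` such that every (finite, loopless) digraph with dichromatic
number at least `c` contains a subdivision of `F`. -/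
def ChiMadSet {U : Type} (F : U → U → Prop) : Set ℕ :=
  {c | ∀ (V : Type) [Fintype V] (D : V → V → Prop), Irreflexive D →
    c ≤ dichrom D → IsSubdivision F D}

open SimpleGraph



lemma exists_leaf {U : Type} [Fintype U] [Nonempty U] (G : SimpleGraph U)
    (hG : G.IsAcyclic) : ∃ u : U, ∀ a b : U, G.Adj u a → G.Adj u b → a = b := by
  classical
  let S : Set ℕ := {n | ∃ (u v : U) (w : G.Walk u v), w.IsPath ∧ w.length = n}
  have hSne : S.Nonempty := ⟨0, Classical.arbitrary U, Classical.arbitrary U, Walk.nil, by simp⟩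
  have hSbdd : BddAbove S := ⟨Fintype.card U, by rintro n ⟨u, v, w, hw, rfl⟩; exact hw.length_lt.le⟩
  obtain ⟨u, v, p, hp, hlen⟩ := Nat.sSup_mem hSne hSbdd
  have key : ∀ c : U, G.Adj u c → c = p.getVert 1 := by
    intro c h
    have hc : c ∈ p.support := by
      by_contra hc
      have hpath : (Walk.cons h.symm p).IsPath := hp.cons hc
      have : (Walk.cons h.symm p).length ∈ S := ⟨c, v, _, hpath, rfl⟩
      have := le_csSup hSbdd this
      simp [Walk.length_cons, hlen] at this
    have hq : p.takeUntil c hc = Walk.cons h Walk.nil := by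
      have := hG.path_unique ⟨p.takeUntil c hc, hp.takeUntil hc⟩ (Path.singleton h)
      simpa [Path.singleton, Subtype.ext_iff] using this
    have hspec := p.take_spec hc
    rw [hq] at hspec
    rw [Walk.cons_nil_append] at hspec
    rw [← hspec]
    exact ((Walk.getVert_cons_succ (n := 0) _ h).trans (Walk.getVert_zero _)).symm
  exact ⟨u, fun a b ha hb => (key a ha).trans (key b hb).symm⟩

lemma acyclic_restrict {U : Type} (F : U → U → Prop)
    (hforest : (SimpleGraph.fromRel F).IsAcyclic) (P : U → Prop) :
    (SimpleGraph.fromRel (fun a b : Subtype P => F a.1 b.1)).IsAcyclic := by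
  intro v c hc
  let f : SimpleGraph.fromRel (fun a b : Subtype P => F a.1 b.1) →g SimpleGraph.fromRel F :=
    ⟨Subtype.val, by
      intro a b hab
      rw [SimpleGraph.fromRel_adj] at hab ⊢
      exact ⟨Subtype.coe_injective.ne hab.1, hab.2⟩⟩
  exact hforest (c.map f) (hc.map Subtype.coe_injective)

lemma greedy : ∀ (n : ℕ) (U : Type) [Fintype U], Fintype.card U = n →
    ∀ (F : U → U → Prop), Irreflexive F → (∀ a b, ¬(F a b ∧ F b a)) →
    (SimpleGraph.fromRel F).IsAcyclic →
    ∀ (V : Type) [Fintype V] (D : V → V → Prop), Irreflexive D →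
    ∀ (S : Set V), S.Nonempty →
    (∀ x ∈ S, n - 1 ≤ {y | y ∈ S ∧ D x y}.ncard) →
    (∀ x ∈ S, n - 1 ≤ {y | y ∈ S ∧ D y x}.ncard) →
    ∃ emb : U → V, Function.Injective emb ∧ (∀ u, emb u ∈ S) ∧
      ∀ a b, F a b → D (emb a) (emb b) := by
  intro n
  induction n with
  | zero =>
    intro U _ hcard F _ _ _ V _ D _ S hne _ _
    have : IsEmpty U := Fintype.card_eq_zero_iff.mp hcard
    exact ⟨fun u => isEmptyElim u, fun a => isEmptyElim a, fun u => isEmptyElim u,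
      fun a => isEmptyElim a⟩
  | succ n ih =>
    intro U _ hcard F hirr hanti hforest V _ D hD S hne hout hin
    classical
    have hUne : Nonempty U := Fintype.card_pos_iff.mp (by omega)
    obtain ⟨u, hu⟩ := exists_leaf (SimpleGraph.fromRel F) hforest
    have hcard' : Fintype.card {x : U // x ≠ u} = n := by
      rw [Fintype.card_subtype_compl, Fintype.card_subtype_eq, hcard]
      omega
    obtain ⟨emb', hinj', hmem', harc'⟩ :=
      ih {x : U // x ≠ u} hcard' (fun a b => F a.1 b.1) (fun a h => hirr _ h)
        (fun a b h => hanti _ _ h) (acyclic_restrict F hforest _) V D hD S hne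
        (fun x hx => by have := hout x hx; omega)
        (fun x hx => by have := hin x hx; omega)
    have hrange : (Set.range emb').ncard = n := by
      rw [← Nat.card_coe_set_eq, Nat.card_range_of_injective hinj',
        Nat.card_eq_fintype_card, hcard']
    have hy : ∃ y, y ∈ S ∧ y ∉ Set.range emb' ∧
        (∀ b (hb : b ≠ u), F u b → D y (emb' ⟨b, hb⟩)) ∧
        (∀ b (hb : b ≠ u), F b u → D (emb' ⟨b, hb⟩) y) := by
      by_cases hpart : ∃ w, w ≠ u ∧ (F u w ∨ F w u)
      · obtain ⟨w, hwne, hdir⟩ := hpart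
        have hn1 : 1 ≤ n := by
          have : 2 ≤ Fintype.card U := Fintype.one_lt_card_iff.mpr ⟨w, u, hwne⟩
          omega
        have hwuniq : ∀ b, b ≠ u → (F u b ∨ F b u) → b = w := by
          intro b hb hd
          exact hu b w ((SimpleGraph.fromRel_adj F u b).mpr ⟨Ne.symm hb, hd⟩)
            ((SimpleGraph.fromRel_adj F u w).mpr ⟨Ne.symm hwne, hdir⟩)
        set x := emb' ⟨w, hwne⟩ with hxdef
        have hxS : x ∈ S := hmem' _
        have hxR : x ∈ Set.range emb' := ⟨_, rfl⟩
        have hBcard : (Set.range emb' \ {x}).ncard = n - 1 := by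
          rw [Set.ncard_diff (by simpa using hxR) (Set.toFinite _), hrange, Set.ncard_singleton]
        by_cases hFuw : F u w
        · -- need y with D y x
          have hA : n ≤ {y | y ∈ S ∧ D y x}.ncard := by
            have := hin x hxS; omega
          have : ∃ y ∈ {y | y ∈ S ∧ D y x}, y ∉ Set.range emb' := by
            by_contra hcon
            push_neg at hcon
            have hsub : {y | y ∈ S ∧ D y x} ⊆ Set.range emb' \ {x} := by
              intro y hy
              refine ⟨hcon y hy, ?_⟩
              simp only [Set.mem_singleton_iff]
              rintro rfl
              exact hD x hy.2
            have := Set.ncard_le_ncard hsub (Set.toFinite _)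
            omega
          obtain ⟨y, ⟨hyS, hyD⟩, hyR⟩ := this
          refine ⟨y, hyS, hyR, ?_, ?_⟩
          · intro b hb hFub
            have hbw : b = w := hwuniq b hb (Or.inl hFub)
            subst hbw
            exact hyD
          · intro b hb hFbu
            have hbw : b = w := hwuniq b hb (Or.inr hFbu)
            subst hbw
            exact absurd ⟨hFuw, hFbu⟩ (hanti u b)
        · have hFwu : F w u := hdir.resolve_left hFuw
          have hA : n ≤ {y | y ∈ S ∧ D x y}.ncard := by
            have := hout x hxS; omega
          have : ∃ y ∈ {y | y ∈ S ∧ D x y}, y ∉ Set.range emb' := by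
            by_contra hcon
            push_neg at hcon
            have hsub : {y | y ∈ S ∧ D x y} ⊆ Set.range emb' \ {x} := by
              intro y hy
              refine ⟨hcon y hy, ?_⟩
              simp only [Set.mem_singleton_iff]
              rintro rfl
              exact hD x hy.2
            have := Set.ncard_le_ncard hsub (Set.toFinite _)
            omega
          obtain ⟨y, ⟨hyS, hyD⟩, hyR⟩ := this
          refine ⟨y, hyS, hyR, ?_, ?_⟩
          · intro b hb hFub
            have hbw : b = w := hwuniq b hb (Or.inl hFub)
            subst hbw
            exact absurd ⟨hFub, hFwu⟩ (hanti u b)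
          · intro b hb hFbu
            have hbw : b = w := hwuniq b hb (Or.inr hFbu)
            subst hbw
            exact hyD
      · push_neg at hpart
        obtain ⟨x0, hx0⟩ := hne
        have hScard : n + 1 ≤ S.ncard := by
          have h1 : n ≤ {y | y ∈ S ∧ D x0 y}.ncard := by
            have := hout x0 hx0; omega
          have h2 : insert x0 {y | y ∈ S ∧ D x0 y} ⊆ S := by
            rintro y (rfl | hy)
            · exact hx0
            · exact hy.1
          have h3 : x0 ∉ {y | y ∈ S ∧ D x0 y} := fun h => hD x0 h.2
          have h4 := Set.ncard_le_ncard h2 (Set.toFinite _)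
          rw [Set.ncard_insert_of_notMem h3 (Set.toFinite _)] at h4
          omega
        have : ∃ y ∈ S, y ∉ Set.range emb' := by
          by_contra hcon
          push_neg at hcon
          have := Set.ncard_le_ncard hcon (Set.toFinite _)
          omega
        obtain ⟨y, hyS, hyR⟩ := this
        refine ⟨y, hyS, hyR, ?_, ?_⟩
        · intro b hb hFub
          exact absurd hFub (hpart b hb).1
        · intro b hb hFbu
          exact absurd hFbu (hpart b hb).2
    obtain ⟨y, hyS, hyR, hyout, hyin⟩ := hy
    refine ⟨fun a => if h : a = u then y else emb' ⟨a, h⟩, ?_, ?_, ?_⟩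
    · intro a b hab
      dsimp only at hab
      by_cases ha : a = u <;> by_cases hb : b = u
      · rw [ha, hb]
      · rw [dif_pos ha, dif_neg hb] at hab
        exact absurd ⟨_, hab.symm⟩ hyR
      · rw [dif_neg ha, dif_pos hb] at hab
        exact absurd ⟨_, hab⟩ hyR
      · rw [dif_neg ha, dif_neg hb] at hab
        simpa using congrArg Subtype.val (hinj' hab)
    · intro a
      dsimp only
      by_cases ha : a = u
      · rw [dif_pos ha]; exact hyS
      · rw [dif_neg ha]; exact hmem' _
    · intro a b hab
      dsimp only
      by_cases ha : a = u <;> by_cases hb : b = u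
      · rw [ha, hb] at hab
        exact absurd hab (hirr u)
      · rw [dif_pos ha, dif_neg hb]
        exact hyout b hb (show F u b by rw [← ha]; exact hab)
      · rw [dif_neg ha, dif_pos hb]
        exact hyin a ha (show F a u by rw [← hb]; exact hab)
      · rw [dif_neg ha, dif_neg hb]
        exact harc' ⟨a, ha⟩ ⟨b, hb⟩ hab

lemma cycle_extend {V : Type} (D : V → V → Prop) (A : Set V) (x : V)
    (hnc : ¬ HasCycleIn D (A \ {x})) (hx : ∀ y ∈ A, ¬ D x y) : ¬ HasCycleIn D A := by
  rintro ⟨m, p, hm, hclosed, harc, hmem⟩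
  by_cases hxin : ∃ i ≤ m, p i = x
  · obtain ⟨i, him, hpi⟩ := hxin
    have hj : ∃ j < m, p j = x := by
      rcases Nat.lt_or_ge i m with h | h
      · exact ⟨i, h, hpi⟩
      · exact ⟨0, by omega, by rw [← hclosed, show m = i by omega, hpi]⟩
    obtain ⟨j, hjm, hpj⟩ := hj
    have harc' := harc j hjm
    rw [hpj] at harc'
    exact hx (p (j+1)) (hmem _ (by omega)) harc'
  · push_neg at hxin
    exact hnc ⟨m, p, hm, hclosed, harc, fun i hi => ⟨hmem i hi, hxin i hi⟩⟩

lemma cycle_extend' {V : Type} (D : V → V → Prop) (A : Set V) (x : V)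
    (hnc : ¬ HasCycleIn D (A \ {x})) (hx : ∀ y ∈ A, ¬ D y x) : ¬ HasCycleIn D A := by
  rintro ⟨m, p, hm, hclosed, harc, hmem⟩
  by_cases hxin : ∃ i ≤ m, p i = x
  · obtain ⟨i, him, hpi⟩ := hxin
    have hj : ∃ j, 0 < j ∧ j ≤ m ∧ p j = x := by
      rcases Nat.eq_zero_or_pos i with h | h
      · exact ⟨m, by omega, le_refl m, by rw [hclosed, ← h, hpi]⟩
      · exact ⟨i, h, him, hpi⟩
    obtain ⟨j, hj0, hjm, hpj⟩ := hj
    have harc' := harc (j - 1) (by omega)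
    rw [show j - 1 + 1 = j by omega, hpj] at harc'
    exact hx (p (j - 1)) (hmem _ (by omega)) harc'
  · push_neg at hxin
    exact hnc ⟨m, p, hm, hclosed, harc, fun i hi => ⟨hmem i hi, hxin i hi⟩⟩

lemma color_claim {V : Type} [Fintype V] (D : V → V → Prop) (hD : Irreflexive D) (n : ℕ)
    (h : ∀ S : Set V, S.Nonempty →
      ∃ x ∈ S, {y | y ∈ S ∧ D x y}.ncard < n ∨ {y | y ∈ S ∧ D y x}.ncard < n) :
    ∀ S : Finset V, ∃ c : V → ℕ, (∀ v ∈ S, c v < n) ∧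
      ∀ i : ℕ, ¬ HasCycleIn D {v | v ∈ (S : Set V) ∧ c v = i} := by
  classical
  intro S
  induction S using Finset.strongInduction with
  | _ S ihS =>
    rcases S.eq_empty_or_nonempty with rfl | hne
    · refine ⟨fun _ => 0, by simp, fun i hcy => ?_⟩
      obtain ⟨m, p, hm, hcl, ha, hmem⟩ := hcy
      simpa using (hmem 0 (by omega)).1
    · obtain ⟨x, hxS, hdeg⟩ := h ↑S (Finset.coe_nonempty.mpr hne)
      have hxS' : x ∈ S := hxS
      obtain ⟨c, hc, hnc⟩ := ihS (S.erase x) (Finset.erase_ssubset hxS')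
      -- choose direction
      rcases hdeg with hdeg | hdeg
      -- OUT CASE
      · set T := (S.erase x).filter (fun y => D x y) with hT
        have hTcard : T.card < n := by
          have hsub : (T : Set V) ⊆ {y | y ∈ (S : Set V) ∧ D x y} := by
            intro y hy
            simp only [hT, Finset.coe_filter, Set.mem_setOf_eq, Finset.mem_erase] at hy
            exact ⟨hy.1.2, hy.2⟩
          calc T.card = (T : Set V).ncard := (Set.ncard_coe_finset T).symm
            _ ≤ _ := Set.ncard_le_ncard hsub (Set.toFinite _)
            _ < n := hdeg
        have hcol : ∃ i0 < n, i0 ∉ T.image c := by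
          by_contra hcon
          push_neg at hcon
          have hsub : Finset.range n ⊆ T.image c := fun i hi =>
            hcon i (Finset.mem_range.mp hi)
          have h1 := Finset.card_le_card hsub
          have h2 := Finset.card_image_le (s := T) (f := c)
          simp only [Finset.card_range] at h1
          omega
        obtain ⟨i0, hi0n, hi0⟩ := hcol
        refine ⟨Function.update c x i0, ?_, ?_⟩
        · intro v hv
          by_cases hvx : v = x
          · rw [hvx, Function.update_self]; exact hi0n
          · rw [Function.update_of_ne hvx]
            exact hc v (Finset.mem_erase.mpr ⟨hvx, hv⟩)
        · intro i
          have hsetdiff : {v | v ∈ (S : Set V) ∧ Function.update c x i0 v = i} \ {x}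
              = {v | v ∈ ((S.erase x : Finset V) : Set V) ∧ c v = i} := by
            ext v
            constructor
            · rintro ⟨⟨hvS, hvc⟩, hvx⟩
              have hvx' : v ≠ x := hvx
              exact ⟨Finset.mem_coe.mpr (Finset.mem_erase.mpr ⟨hvx', Finset.mem_coe.mp hvS⟩),
                by rwa [Function.update_of_ne hvx'] at hvc⟩
            · rintro ⟨hv, hvc⟩
              obtain ⟨hvx, hvS⟩ := Finset.mem_erase.mp (Finset.mem_coe.mp hv)
              exact ⟨⟨hvS, by rwa [Function.update_of_ne hvx]⟩, hvx⟩
          by_cases hii0 : i = i0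
          · subst hii0
            apply cycle_extend D _ x
            · rw [hsetdiff]; exact hnc i
            · rintro y ⟨hyS, hyc⟩ hDxy
              by_cases hyx : y = x
              · rw [hyx] at hDxy; exact hD x hDxy
              · rw [Function.update_of_ne hyx] at hyc
                apply hi0
                refine Finset.mem_image.mpr ⟨y, ?_, hyc⟩
                simp only [hT, Finset.mem_filter, Finset.mem_erase]
                exact ⟨⟨hyx, hyS⟩, hDxy⟩
          · have hxe : {v | v ∈ (S : Set V) ∧ Function.update c x i0 v = i}
                = {v | v ∈ (S : Set V) ∧ Function.update c x i0 v = i} \ {x} := by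
              ext v
              constructor
              · rintro ⟨hvS, hvc⟩
                refine ⟨⟨hvS, hvc⟩, ?_⟩
                rintro rfl
                rw [Function.update_self] at hvc
                exact hii0 hvc.symm
              · rintro ⟨hv, _⟩; exact hv
            rw [hxe, hsetdiff]
            exact hnc i
      -- IN CASE
      · set T := (S.erase x).filter (fun y => D y x) with hT
        have hTcard : T.card < n := by
          have hsub : (T : Set V) ⊆ {y | y ∈ (S : Set V) ∧ D y x} := by
            intro y hy
            simp only [hT, Finset.coe_filter, Set.mem_setOf_eq, Finset.mem_erase] at hy
            exact ⟨hy.1.2, hy.2⟩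
          calc T.card = (T : Set V).ncard := (Set.ncard_coe_finset T).symm
            _ ≤ _ := Set.ncard_le_ncard hsub (Set.toFinite _)
            _ < n := hdeg
        have hcol : ∃ i0 < n, i0 ∉ T.image c := by
          by_contra hcon
          push_neg at hcon
          have hsub : Finset.range n ⊆ T.image c := fun i hi =>
            hcon i (Finset.mem_range.mp hi)
          have h1 := Finset.card_le_card hsub
          have h2 := Finset.card_image_le (s := T) (f := c)
          simp only [Finset.card_range] at h1
          omega
        obtain ⟨i0, hi0n, hi0⟩ := hcol
        refine ⟨Function.update c x i0, ?_, ?_⟩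
        · intro v hv
          by_cases hvx : v = x
          · rw [hvx, Function.update_self]; exact hi0n
          · rw [Function.update_of_ne hvx]
            exact hc v (Finset.mem_erase.mpr ⟨hvx, hv⟩)
        · intro i
          have hsetdiff : {v | v ∈ (S : Set V) ∧ Function.update c x i0 v = i} \ {x}
              = {v | v ∈ ((S.erase x : Finset V) : Set V) ∧ c v = i} := by
            ext v
            constructor
            · rintro ⟨⟨hvS, hvc⟩, hvx⟩
              have hvx' : v ≠ x := hvx
              exact ⟨Finset.mem_coe.mpr (Finset.mem_erase.mpr ⟨hvx', Finset.mem_coe.mp hvS⟩),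
                by rwa [Function.update_of_ne hvx'] at hvc⟩
            · rintro ⟨hv, hvc⟩
              obtain ⟨hvx, hvS⟩ := Finset.mem_erase.mp (Finset.mem_coe.mp hv)
              exact ⟨⟨hvS, by rwa [Function.update_of_ne hvx]⟩, hvx⟩
          by_cases hii0 : i = i0
          · subst hii0
            apply cycle_extend' D _ x
            · rw [hsetdiff]; exact hnc i
            · rintro y ⟨hyS, hyc⟩ hDyx
              by_cases hyx : y = x
              · rw [hyx] at hDyx; exact hD x hDyx
              · rw [Function.update_of_ne hyx] at hyc
                apply hi0
                refine Finset.mem_image.mpr ⟨y, ?_, hyc⟩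
                simp only [hT, Finset.mem_filter, Finset.mem_erase]
                exact ⟨⟨hyx, hyS⟩, hDyx⟩
          · have hxe : {v | v ∈ (S : Set V) ∧ Function.update c x i0 v = i}
                = {v | v ∈ (S : Set V) ∧ Function.update c x i0 v = i} \ {x} := by
              ext v
              constructor
              · rintro ⟨hvS, hvc⟩
                refine ⟨⟨hvS, hvc⟩, ?_⟩
                rintro rfl
                rw [Function.update_self] at hvc
                exact hii0 hvc.symm
              · rintro ⟨hv, _⟩; exact hv
            rw [hxe, hsetdiff]
            exact hnc i

lemma dichrom_le_s17 {V : Type} [Fintype V] (D : V → V → Prop) (hD : Irreflexive D) (n : ℕ)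
    (h : ∀ S : Set V, S.Nonempty →
      ∃ x ∈ S, {y | y ∈ S ∧ D x y}.ncard < n ∨ {y | y ∈ S ∧ D y x}.ncard < n) :
    dichrom D ≤ n := by
  obtain ⟨c, hc, hnc⟩ := color_claim D hD n h Finset.univ
  apply Nat.sInf_le
  refine ⟨fun v => ⟨c v, hc v (Finset.mem_univ v)⟩, ?_⟩
  intro i hcy
  apply hnc i.val
  obtain ⟨m, p, hm, hcl, ha, hmem⟩ := hcy
  refine ⟨m, p, hm, hcl, ha, fun j hj => ⟨Finset.mem_coe.mpr (Finset.mem_univ _), ?_⟩⟩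
  have := hmem j hj
  simpa [Fin.ext_iff] using congrArg Fin.val this

/-- For an oriented forest `F` (an orientation of an undirected forest),
`mad_{χ⃗}(F) = |V(F)|`: every digraph with dichromatic number at least `|V(F)|` contains
`F` as a subdigraph (hence as a subdivision), and this bound is best possible. -/
theorem stmt17 (U : Type) [Fintype U] (F : U → U → Prop)
    (hirr : Irreflexive F) (hanti : ∀ a b, ¬(F a b ∧ F b a))
    (hforest : (SimpleGraph.fromRel F).IsAcyclic) :
    (∀ (V : Type) [Fintype V] (D : V → V → Prop), Irreflexive D →
      Fintype.card U ≤ dichrom D →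
      ∃ emb : U → V, Function.Injective emb ∧ ∀ a b, F a b → D (emb a) (emb b)) ∧
    IsLeast (ChiMadSet F) (Fintype.card U) := by
  classical
  have main : ∀ (V : Type) [Fintype V] (D : V → V → Prop), Irreflexive D →
      Fintype.card U ≤ dichrom D →
      ∃ emb : U → V, Function.Injective emb ∧ ∀ a b, F a b → D (emb a) (emb b) := by
    intro V _ D hD hcard
    rcases Nat.eq_zero_or_pos (Fintype.card U) with h0 | hpos
    · have hUe : IsEmpty U := Fintype.card_eq_zero_iff.mp h0
      exact ⟨fun u => isEmptyElim u, fun a => isEmptyElim a, fun a => isEmptyElim a⟩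
    · by_cases hgood : ∃ S : Set V, S.Nonempty ∧
          (∀ x ∈ S, Fintype.card U - 1 ≤ {y | y ∈ S ∧ D x y}.ncard) ∧
          (∀ x ∈ S, Fintype.card U - 1 ≤ {y | y ∈ S ∧ D y x}.ncard)
      · obtain ⟨S, hne, hout, hin⟩ := hgood
        obtain ⟨emb, hinj, _, harc⟩ :=
          greedy (Fintype.card U) U rfl F hirr hanti hforest V D hD S hne hout hin
        exact ⟨emb, hinj, harc⟩
      · exfalso
        have hle : dichrom D ≤ Fintype.card U - 1 := by
          apply dichrom_le_s17 D hD
          intro S hSne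
          by_contra hS
          push_neg at hS
          exact hgood ⟨S, hSne, fun x hx => (hS x hx).1,
            fun x hx => (hS x hx).2⟩
        omega
  refine ⟨main, ?_, ?_⟩
  · -- membership in ChiMadSet
    intro V _ D hD hle
    obtain ⟨emb, hinj, harc⟩ := main V D hD hle
    refine ⟨emb, fun _ _ => 1, fun u v i => if i = 0 then emb u else emb v, hinj,
      fun _ _ _ => le_refl 1, fun u v _ => ⟨if_pos rfl, if_neg one_ne_zero⟩, ?_, ?_, ?_, ?_⟩
    · intro u v huv i hi
      dsimp only at hi ⊢
      have hi0 : i = 0 := by omega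
      subst hi0
      simpa using harc u v huv
    · intro u v huv i hi j hj heq
      dsimp only at hi hj heq
      have hne : emb u ≠ emb v := fun h => hirr u (by rw [← hinj h] at huv; exact huv)
      interval_cases i <;> interval_cases j <;> simp_all
    · intro u v huv i hi1 hi2 w
      dsimp only at hi2
      omega
    · intro u v huv u' v' h' hnep i hi1 hi2 j hj1 hj2
      dsimp only at hi2 hj2
      omega
  · -- lower bound
    intro k hk
    by_contra hlt
    push_neg at hlt
    have hU1 : 1 ≤ Fintype.card U := by omega
    set m := Fintype.card U - 1 with hm
    have hdich : m ≤ dichrom (fun a b : Fin m => a ≠ b) := by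
      have hmemset : m ∈ {k : ℕ | ∃ col : Fin m → Fin k,
          ∀ i, ¬ HasCycleIn (fun a b : Fin m => a ≠ b) {v | col v = i}} := by
        refine ⟨id, fun i hcy => ?_⟩
        obtain ⟨nn, p, hn, hcl, ha, hmem⟩ := hcy
        exact ha 0 hn (by rw [show p 0 = i from hmem 0 (by omega), show p 1 = i from hmem 1 hn])
      apply le_csInf ⟨m, hmemset⟩
      intro b hb
      obtain ⟨col, hcol⟩ := hb
      by_contra hbm
      push_neg at hbm
      obtain ⟨a, a', haa, hca⟩ := Fintype.exists_ne_map_eq_of_card_lt col (by simpa using hbm)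
      apply hcol (col a)
      refine ⟨2, fun j => if j = 1 then a' else a, by omega, by norm_num, ?_, ?_⟩
      · intro i hi
        interval_cases i <;> simp [haa, Ne.symm haa]
      · intro i hi
        interval_cases i <;> simp [hca]
    have hsub := hk (Fin m) (fun a b => a ≠ b) (fun a h => h rfl) ((show k ≤ m by omega).trans hdich)
    obtain ⟨emb, len, p, hinj, _⟩ := hsub
    have hcle := Fintype.card_le_of_injective emb hinj
    simp only [Fintype.card_fin] at hcle
    omega
end

section
/- For every oriented cycle C on at least 3 vertices, mad_{χ⃗}(C) ≤ 2|V(C)| − 3: every digraph with dichromatic number at least 2|V(C)| − 3 contains a subdivision of C. -/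
set_option linter.unusedSectionVars false
set_option maxHeartbeats 1000000


/-- The oriented cycle on `n` vertices `0,…,n-1`, where the edge between `i` and `i+1`
(mod `n`) is directed forward if `σ i = true` and backward otherwise. -/
def orientedCycle (n : ℕ) (σ : ℕ → Bool) : Fin n → Fin n → Prop :=
  fun a b => ((a.val + 1) % n = b.val ∧ σ a.val = true) ∨
    ((b.val + 1) % n = a.val ∧ σ b.val = false)

namespace S

variable {V : Type} [Fintype V] (D : V → V → Prop)

noncomputable local instance : DecidableEq V := Classical.decEq V

/-- reachable in exactly L steps -/
def ReachN (r v : V) (L : ℕ) : Prop :=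
  ∃ p : ℕ → V, p 0 = r ∧ p L = v ∧ ∀ i < L, D (p i) (p (i+1))

def Reaches (r v : V) : Prop := ∃ L, ReachN D r v L

noncomputable def dd (r v : V) : ℕ := sInf {L | ReachN D r v L}

def Good (k : ℕ) (A : Set V) : Prop :=
  ∃ c : V → Fin k, ∀ i : Fin k, ¬ HasCycleIn D {v | v ∈ A ∧ c v = i}

def TauPath (τ : ℕ → Bool) (A : Set V) (m : ℕ) (v : ℕ → V) : Prop :=
  (∀ i < m, v i ∈ A) ∧ (∀ i < m, ∀ j < m, v i = v j → i = j) ∧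
  (∀ i, i + 1 < m →
    ((τ i = true → D (v i) (v (i+1))) ∧ (τ i = false → D (v (i+1)) (v i))))

def CycleGe (nn : ℕ) (A : Set V) : Prop :=
  ∃ (L : ℕ) (q : ℕ → V), nn ≤ L ∧ q L = q 0 ∧ (∀ i < L, D (q i) (q (i+1))) ∧
    (∀ i < L, q i ∈ A) ∧ (∀ i < L, ∀ j < L, q i = q j → i = j)

variable {D}

lemma reachN_refl (r : V) : ReachN D r r 0 := ⟨fun _ => r, rfl, rfl, by omega⟩

lemma reaches_refl (r : V) : Reaches D r r := ⟨0, reachN_refl r⟩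

lemma reachN_trans {a b c : V} {L1 L2 : ℕ} (h1 : ReachN D a b L1) (h2 : ReachN D b c L2) :
    ReachN D a c (L1 + L2) := by
  obtain ⟨p, hp0, hpL, hp⟩ := h1
  obtain ⟨q, hq0, hqL, hq⟩ := h2
  refine ⟨fun t => if t < L1 then p t else q (t - L1), ?_, ?_, ?_⟩
  · by_cases h : 0 < L1
    · simp [h, hp0]
    · have hL : L1 = 0 := by omega
      subst hL
      simpa using hq0.trans (hpL.symm.trans hp0)
  · simp only [show ¬ (L1 + L2 < L1) by omega, if_false]
    simpa using hqL
  · intro i hi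
    rcases lt_trichotomy (i+1) L1 with h | h | h
    · simp only [show i < L1 by omega, h, if_true]
      exact hp i (by omega)
    · simp only [show i < L1 by omega, show ¬ (i+1 < L1) by omega, if_true, if_false,
        show i + 1 - L1 = 0 by omega, hq0]
      rw [← hpL, ← h]
      exact hp i (by omega)
    · simp only [show ¬ (i < L1) by omega, show ¬ (i+1 < L1) by omega, if_false,
        show i + 1 - L1 = (i - L1) + 1 by omega]
      exact hq (i - L1) (by omega)

lemma reaches_trans {a b c : V} (h1 : Reaches D a b) (h2 : Reaches D b c) :
    Reaches D a c := by
  obtain ⟨L1, h1⟩ := h1; obtain ⟨L2, h2⟩ := h2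
  exact ⟨L1 + L2, reachN_trans h1 h2⟩

lemma reachN_arc {a b : V} (h : D a b) : ReachN D a b 1 :=
  ⟨fun t => if t = 0 then a else b, by simp, by simp, by intro i hi; simp [show i = 0 by omega, h]⟩

lemma dd_spec {r v : V} (h : Reaches D r v) : ReachN D r v (dd D r v) :=
  Nat.sInf_mem h

lemma dd_le {r v : V} {L : ℕ} (h : ReachN D r v L) : dd D r v ≤ L := Nat.sInf_le h

lemma dd_self (r : V) : dd D r r = 0 := Nat.le_zero.mp (dd_le (reachN_refl r))

lemma dd_triangle {r u v : V} (hru : Reaches D r u) {L : ℕ} (huv : ReachN D u v L) :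
    dd D r v ≤ dd D r u + L :=
  dd_le (reachN_trans (dd_spec hru) huv)

lemma dd_arc_le {r u v : V} (hru : Reaches D r u) (h : D u v) :
    dd D r v ≤ dd D r u + 1 := dd_triangle hru (reachN_arc h)

variable (hD : Irreflexive D)

lemma hasCycleIn_mono {A B : Set V} (hAB : A ⊆ B) (h : HasCycleIn D A) : HasCycleIn D B := by
  obtain ⟨n, p, h1, h2, h3, h4⟩ := h
  exact ⟨n, p, h1, h2, h3, fun i hi => hAB (h4 i hi)⟩

lemma good_mono_set {A B : Set V} {k : ℕ} (hAB : A ⊆ B) (h : Good D k B) : Good D k A := by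
  obtain ⟨c, hc⟩ := h
  refine ⟨c, fun i hcyc => hc i (hasCycleIn_mono (fun v hv => ⟨hAB hv.1, hv.2⟩) hcyc)⟩

lemma good_mono_k {A : Set V} {j k : ℕ} (hjk : j ≤ k) (h : Good D j A) : Good D k A := by
  obtain ⟨c, hc⟩ := h
  refine ⟨fun v => Fin.castLE hjk (c v), fun i hcyc => ?_⟩
  obtain ⟨n, p, h1, h2, h3, h4⟩ := hcyc
  have hp0 := h4 0 (by omega)
  refine hc (c (p 0)) ⟨n, p, h1, h2, h3, fun i hi => ⟨(h4 i hi).1, ?_⟩⟩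
  have := (h4 i hi).2.trans hp0.2.symm
  exact Fin.castLE_injective hjk this

lemma good_empty {k : ℕ} (hk : 1 ≤ k) : Good D k (∅ : Set V) := by
  refine ⟨fun _ => ⟨0, by omega⟩, fun i hcyc => ?_⟩
  obtain ⟨n, p, h1, h2, h3, h4⟩ := hcyc
  exact absurd (h4 0 (by omega)).1 (by simp)

/-- a set of `Fin k` with fewer than `k` elements misses some colour -/
lemma exists_color_notin {k : ℕ} {T : Set (Fin k)} (h : T.ncard < k) : ∃ i : Fin k, i ∉ T := by
  by_contra hc
  push_neg at hc
  have : T = Set.univ := Set.eq_univ_of_forall hc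
  rw [this, Set.ncard_univ] at h
  simp at h

/-- every occurrence of a vertex on a closed walk has an arc leaving it along the walk -/
lemma walk_out_arc {n : ℕ} {p : ℕ → V} (h1 : 1 ≤ n) (h2 : p n = p 0)
    (h3 : ∀ i < n, D (p i) (p (i+1))) {t : ℕ} (ht : t ≤ n) :
    ∃ s < n, p s = p t ∧ D (p t) (p (s+1)) := by
  rcases Nat.lt_or_ge t n with h | h
  · exact ⟨t, h, rfl, h3 t h⟩
  · have : t = n := by omega
    subst this
    exact ⟨0, by omega, h2.symm, by rw [h2]; exact h3 0 (by omega)⟩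

/-- every occurrence of a vertex on a closed walk has an arc entering it along the walk -/
lemma walk_in_arc {n : ℕ} {p : ℕ → V} (h1 : 1 ≤ n) (h2 : p n = p 0)
    (h3 : ∀ i < n, D (p i) (p (i+1))) {t : ℕ} (ht : t ≤ n) :
    ∃ s < n, p (s+1) = p t ∧ D (p s) (p t) := by
  rcases Nat.eq_or_lt_of_le h1 with h | h
  all_goals rcases Nat.eq_zero_or_pos t with h0 | h0
  · subst h0
    exact ⟨n - 1, by omega, by rw [show n - 1 + 1 = n by omega, h2], by
      rw [← h2]; have := h3 (n-1) (by omega); rwa [show n - 1 + 1 = n by omega] at this⟩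
  · refine ⟨t - 1, by omega, by rw [show t - 1 + 1 = t by omega], ?_⟩
    have := h3 (t-1) (by omega)
    rwa [show t - 1 + 1 = t by omega] at this
  · subst h0
    exact ⟨n - 1, by omega, by rw [show n - 1 + 1 = n by omega, h2], by
      rw [← h2]; have := h3 (n-1) (by omega); rwa [show n - 1 + 1 = n by omega] at this⟩
  · refine ⟨t - 1, by omega, by rw [show t - 1 + 1 = t by omega], ?_⟩
    have := h3 (t-1) (by omega)
    rwa [show t - 1 + 1 = t by omega] at this

lemma greedy_out (hD : Irreflexive D) {A : Set V} {w : V} {k : ℕ}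
    (hdeg : {x | x ∈ A ∧ D w x}.ncard < k) (h : Good D k (A \ {w})) : Good D k A := by
  obtain ⟨c, hc⟩ := h
  obtain ⟨i0, hi0⟩ := exists_color_notin (k := k)
    (T := c '' {x | x ∈ A ∧ D w x})
    (lt_of_le_of_lt (Set.ncard_image_le (Set.toFinite _)) hdeg)
  refine ⟨Function.update c w i0, fun i hcyc => ?_⟩
  obtain ⟨n, p, h1, h2, h3, h4⟩ := hcyc
  by_cases hw : ∃ t ≤ n, p t = w
  · obtain ⟨t, htn, htw⟩ := hw
    obtain ⟨s, hs, hsw, harc⟩ := walk_out_arc h1 h2 h3 htn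
    rw [htw] at harc
    have hsn : p (s+1) ∈ A ∧ Function.update c w i0 (p (s+1)) = i := h4 (s+1) (by omega)
    have hne : p (s+1) ≠ w := fun he => hD w (he ▸ harc)
    have hcol : c (p (s+1)) = i := by
      rw [← hsn.2, Function.update_of_ne hne]
    have hti : Function.update c w i0 (p t) = i := (h4 t htn).2
    rw [htw, Function.update_self] at hti
    exact hi0 ⟨p (s+1), ⟨hsn.1, harc⟩, hcol.trans hti.symm⟩
  · push_neg at hw
    refine hc i ⟨n, p, h1, h2, h3, fun t ht => ?_⟩
    have := h4 t ht
    have hne := hw t ht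
    simp only [Set.mem_setOf_eq, Function.update_of_ne hne] at this
    exact ⟨⟨this.1, hne⟩, this.2⟩

lemma greedy_in (hD : Irreflexive D) {A : Set V} {w : V} {k : ℕ}
    (hdeg : {x | x ∈ A ∧ D x w}.ncard < k) (h : Good D k (A \ {w})) : Good D k A := by
  obtain ⟨c, hc⟩ := h
  obtain ⟨i0, hi0⟩ := exists_color_notin (k := k)
    (T := c '' {x | x ∈ A ∧ D x w})
    (lt_of_le_of_lt (Set.ncard_image_le (Set.toFinite _)) hdeg)
  refine ⟨Function.update c w i0, fun i hcyc => ?_⟩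
  obtain ⟨n, p, h1, h2, h3, h4⟩ := hcyc
  by_cases hw : ∃ t ≤ n, p t = w
  · obtain ⟨t, htn, htw⟩ := hw
    obtain ⟨s, hs, hsw, harc⟩ := walk_in_arc h1 h2 h3 htn
    rw [htw] at harc
    have hsn : p s ∈ A ∧ Function.update c w i0 (p s) = i := h4 s (by omega)
    have hne : p s ≠ w := fun he => hD w (he ▸ harc)
    have hcol : c (p s) = i := by
      rw [← hsn.2, Function.update_of_ne hne]
    have hti : Function.update c w i0 (p t) = i := (h4 t htn).2
    rw [htw, Function.update_self] at hti
    exact hi0 ⟨p s, ⟨hsn.1, harc⟩, hcol.trans hti.symm⟩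
  · push_neg at hw
    refine hc i ⟨n, p, h1, h2, h3, fun t ht => ?_⟩
    have := h4 t ht
    have hne := hw t ht
    simp only [Set.mem_setOf_eq, Function.update_of_ne hne] at this
    exact ⟨⟨this.1, hne⟩, this.2⟩

lemma tauPath_mono {τ : ℕ → Bool} {A B : Set V} {m : ℕ} {v : ℕ → V} (hAB : A ⊆ B)
    (h : TauPath D τ A m v) : TauPath D τ B m v :=
  ⟨fun i hi => hAB (h.1 i hi), h.2.1, h.2.2⟩

lemma tauPath_extend {τ : ℕ → Bool} {A : Set V} {m : ℕ} {v : ℕ → V}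
    (hv : TauPath D τ A m v) (hm : 1 ≤ m) {x : V} (hxA : x ∈ A)
    (hxnew : ∀ j < m, x ≠ v j)
    (harc : (τ (m-1) = true → D (v (m-1)) x) ∧ (τ (m-1) = false → D x (v (m-1)))) :
    TauPath D τ A (m+1) (fun i => if i = m then x else v i) := by
  obtain ⟨hmem, hinj, harcs⟩ := hv
  refine ⟨?_, ?_, ?_⟩
  · intro i hi
    by_cases h : i = m
    · simp [h, hxA]
    · simp only [h, if_false]
      exact hmem i (by omega)
  · intro i hi j hj he
    by_cases h : i = m <;> by_cases h' : j = m
    · omega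
    · exfalso
      simp only [h, h', if_true, if_false] at he
      exact (hxnew j (by omega)) he
    · exfalso
      simp only [h, h', if_true, if_false] at he
      exact (hxnew i (by omega)) he.symm
    · simp only [h, h', if_false] at he
      exact hinj i (by omega) j (by omega) he
  · intro i hi
    by_cases h : i + 1 = m
    · have hi' : i ≠ m := by omega
      have hieq : i = m - 1 := by omega
      simp only [hi', h.symm ▸ (by omega : ¬ (i+1 ≠ m)), if_false, if_neg hi',
        if_pos (by omega : i + 1 = m)]
      rw [hieq]
      exact harc
    · have : i ≠ m := by omega
      have : i + 1 ≠ m := h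
      simp only [‹i ≠ m›, ‹i + 1 ≠ m›, if_false]
      exact harcs i (by omega)

lemma no_path_good (hD : Irreflexive D) (m : ℕ) (τ : ℕ → Bool) : ∀ (A : Set V),
    (¬ ∃ v, TauPath D τ A m v) → Good D (max (m-1) 1) A := by
  induction m with
  | zero =>
    intro A hnp
    by_cases hV : Nonempty V
    · exact absurd ⟨fun _ => Classical.arbitrary V, by omega, by omega, by omega⟩ hnp
    · refine ⟨fun v => absurd ⟨v⟩ hV, fun i hcyc => ?_⟩
      obtain ⟨n, p, _⟩ := hcyc
      exact hV ⟨p 0⟩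
  | succ m IH =>
    have inner : ∀ (N : ℕ) (A : Set V), A.ncard ≤ N →
        (¬ ∃ v, TauPath D τ A (m+1) v) → Good D (max m 1) A := by
      intro N
      induction N with
      | zero =>
        intro A hcard hnp
        have : A = ∅ := by
          rw [← Set.ncard_eq_zero (Set.toFinite A)]; omega
        rw [this]
        exact good_mono_k (le_max_right _ 1) (good_empty le_rfl)
      | succ N IHN =>
        intro A hcard hnp
        rcases Nat.eq_zero_or_pos m with hm | hm
        · -- m = 0 : no single vertex in A, so A is empty
          subst hm
          have : A = ∅ := by
            ext a
            simp only [Set.mem_empty_iff_false, iff_false]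
            intro ha
            exact hnp ⟨fun _ => a, fun i _ => ha, fun i hi j hj _ => by omega,
              fun i hi => absurd hi (by omega)⟩
          rw [this]
          exact good_mono_k (le_max_right _ 1) (good_empty le_rfl)
        by_cases hQ : ∃ v, TauPath D τ A m v
        · obtain ⟨v, hv⟩ := hQ
          set w := v (m-1) with hwdef
          have hwA : w ∈ A := hv.1 (m-1) (by omega)
          have hext : ∀ x, x ∈ A → x ∉ v '' (Set.Iio m) →
              ¬ ((τ (m-1) = true → D w x) ∧ (τ (m-1) = false → D x w)) := by
            intro x hxA hxim harc
            refine hnp ⟨_, tauPath_extend hv hm hxA ?_ harc⟩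
            intro j hj he
            exact hxim ⟨j, hj, he.symm⟩
          have key : ∀ (Nb : Set V), (∀ x, x ∈ Nb → x ≠ w) →
              (∀ x, x ∈ Nb → x ∈ A) →
              (∀ x, x ∈ Nb → ¬ ((τ (m-1) = true → D w x) ∧ (τ (m-1) = false → D x w)) → False) →
              Nb.ncard < max m 1 := by
            intro Nb hnw hnA himp
            have hsub : Nb ⊆ v '' (Set.Iio (m-1)) := by
              intro x hx
              have hxim : x ∈ v '' (Set.Iio m) := by
                by_contra hxim
                exact himp x hx (hext x (hnA x hx) hxim)
              obtain ⟨j, hj, hje⟩ := hxim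
              refine ⟨j, ?_, hje⟩
              simp only [Set.mem_Iio] at hj ⊢
              rcases Nat.lt_or_ge j (m-1) with h | h
              · exact h
              · exfalso
                have : j = m - 1 := by omega
                exact hnw x hx (hje ▸ this ▸ rfl)
            calc Nb.ncard ≤ (v '' (Set.Iio (m-1))).ncard :=
                  Set.ncard_le_ncard hsub (Set.toFinite _)
              _ ≤ (Set.Iio (m-1) : Set ℕ).ncard := Set.ncard_image_le (Set.finite_Iio _)
              _ = m - 1 := by rw [← Finset.coe_range, Set.ncard_coe_finset, Finset.card_range]
              _ < max m 1 := by omega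
          have hnp' : ¬ ∃ v, TauPath D τ (A \ {w}) (m+1) v := by
            rintro ⟨v', hv'⟩
            exact hnp ⟨v', tauPath_mono Set.diff_subset hv'⟩
          have hcard' : (A \ {w}).ncard ≤ N := by
            have h1 : (A \ {w}).ncard < A.ncard :=
              Set.ncard_diff_singleton_lt_of_mem hwA (Set.toFinite A)
            omega
          have hgood' := IHN (A \ {w}) hcard' hnp'
          rcases Bool.eq_false_or_eq_true (τ (m-1)) with hτ | hτ
          · -- forward arc: bound out-neighbours
            refine greedy_out hD (w := w) ?_ hgood'
            refine key {x | x ∈ A ∧ D w x} (fun x hx he => hD w (he ▸ hx.2))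
              (fun x hx => hx.1) ?_
            intro x hx himp
            exact himp ⟨fun _ => hx.2, fun h => absurd h (by simp [hτ])⟩
          · -- backward arc: bound in-neighbours
            refine greedy_in hD (w := w) ?_ hgood'
            refine key {x | x ∈ A ∧ D x w} (fun x hx he => hD w (he ▸ hx.2))
              (fun x hx => hx.1) ?_
            intro x hx himp
            exact himp ⟨fun h => absurd h (by simp [hτ]), fun _ => hx.2⟩
        · have := IH A hQ
          exact good_mono_k (by omega) this
    intro A hnp
    have := inner A.ncard A le_rfl hnp
    exact good_mono_k (by omega) this

lemma no_cycle_good (hD : Irreflexive D) (nn : ℕ) : ∀ (A : Set V),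
    ¬ CycleGe D nn A → Good D (max (nn-1) 1) A := by
  have inner : ∀ (N : ℕ) (A : Set V), A.ncard ≤ N →
      ¬ CycleGe D nn A → Good D (max (nn-1) 1) A := by
    intro N
    induction N with
    | zero =>
      intro A hcard hnc
      have : A = ∅ := by rw [← Set.ncard_eq_zero (Set.toFinite A)]; omega
      rw [this]
      exact good_mono_k (le_max_right _ 1) (good_empty le_rfl)
    | succ N IHN =>
      intro A hcard hnc
      by_cases hA : A = ∅
      · rw [hA]; exact good_mono_k (le_max_right _ 1) (good_empty le_rfl)
      obtain ⟨a, ha⟩ := Set.nonempty_iff_ne_empty.mpr hA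
      set K : Set ℕ := {k | ∃ v : ℕ → V, (∀ i ≤ k, v i ∈ A) ∧
        (∀ i ≤ k, ∀ j ≤ k, v i = v j → i = j) ∧ (∀ i < k, D (v i) (v (i+1)))} with hK
      have h0K : 0 ∈ K := ⟨fun _ => a, fun i hi => ha, fun i hi j hj _ => by omega,
        fun i hi => absurd hi (by omega)⟩
      have hbdd : BddAbove K := by
        refine ⟨Fintype.card V, fun k hk => ?_⟩
        obtain ⟨v, hvA, hvinj, hvarc⟩ := hk
        have hinj : Function.Injective (fun i : Fin (k+1) => v i.val) := by
          intro i j hij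
          exact Fin.ext (hvinj i.val (by omega) j.val (by omega) hij)
        have := Fintype.card_le_of_injective _ hinj
        simp at this
        omega
      set kmax := sSup K with hkmax
      obtain ⟨v, hvA, hvinj, hvarc⟩ : kmax ∈ K := Nat.sSup_mem ⟨0, h0K⟩ hbdd
      set w := v kmax with hwdef
      have hwA : w ∈ A := hvA kmax le_rfl
      have hsub : {x | x ∈ A ∧ D w x} ⊆ v '' (Set.Ico (kmax+2-nn) kmax) := by
        rintro x ⟨hxA, hxarc⟩
        have hxim : x ∈ v '' (Set.Iic kmax) := by
          by_contra hxim
          have hK1 : kmax + 1 ∈ K := by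
            refine ⟨fun i => if i = kmax+1 then x else v i, ?_, ?_, ?_⟩
            · intro i hi
              by_cases h : i = kmax + 1
              · simp [h, hxA]
              · simp only [h, if_false]; exact hvA i (by omega)
            · intro i hi j hj he
              by_cases h : i = kmax+1 <;> by_cases h' : j = kmax+1
              · omega
              · exfalso
                simp only [h, h', if_true, if_false] at he
                exact hxim ⟨j, by simpa using (by omega : j ≤ kmax), he.symm⟩
              · exfalso
                simp only [h, h', if_true, if_false] at he
                exact hxim ⟨i, by simpa using (by omega : i ≤ kmax), he⟩
              · simp only [h, h', if_false] at he
                exact hvinj i (by omega) j (by omega) he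
            · intro i hi
              by_cases h : i = kmax
              · subst h
                simp only [show kmax ≠ kmax + 1 by omega, if_false, if_pos rfl]
                exact hxarc
              · simp only [show i ≠ kmax + 1 by omega, show i + 1 ≠ kmax + 1 by omega, if_false]
                exact hvarc i (by omega)
          have := le_csSup hbdd hK1
          omega
        obtain ⟨j, hj, hje⟩ := hxim
        simp only [Set.mem_Iic] at hj
        have hjneq : j ≠ kmax := by
          intro h
          exact hD w (by rw [← hje, h] at hxarc; exact hxarc)
        have hjlt : j < kmax := by omega
        have hlong : ¬ (nn ≤ kmax - j + 1) := by
          intro hnnle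
          refine hnc ⟨kmax - j + 1, fun t => if t = kmax - j + 1 then x else v (j + t),
            hnnle, ?_, ?_, ?_, ?_⟩
          · simp only [if_pos rfl, show (0:ℕ) ≠ kmax - j + 1 by omega, if_false]
            rw [← hje]; simp
          · intro i hi
            by_cases h : i + 1 = kmax - j + 1
            · simp only [show i ≠ kmax - j + 1 by omega, h, if_false, if_pos rfl]
              have : j + i = kmax := by omega
              rw [this]
              exact hxarc
            · simp only [show i ≠ kmax - j + 1 by omega, h, if_false]
              have : j + (i+1) = (j+i) + 1 := by omega
              rw [this]
              exact hvarc (j+i) (by omega)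
          · intro i hi
            simp only [show i ≠ kmax - j + 1 by omega, if_false]
            exact hvA (j+i) (by omega)
          · intro i hi i' hi' he
            simp only [show i ≠ kmax - j + 1 by omega, show i' ≠ kmax - j + 1 by omega,
              if_false] at he
            have := hvinj (j+i) (by omega) (j+i') (by omega) he
            omega
        refine ⟨j, ?_, hje⟩
        simp only [Set.mem_Ico]
        omega
      have hdeg : {x | x ∈ A ∧ D w x}.ncard < max (nn-1) 1 := by
        calc {x | x ∈ A ∧ D w x}.ncard ≤ (v '' (Set.Ico (kmax+2-nn) kmax)).ncard :=
              Set.ncard_le_ncard hsub (Set.toFinite _)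
          _ ≤ (Set.Ico (kmax+2-nn) kmax : Set ℕ).ncard := Set.ncard_image_le (Set.finite_Ico _ _)
          _ = kmax - (kmax+2-nn) := by
              rw [← Finset.coe_Ico, Set.ncard_coe_finset, Nat.card_Ico]
          _ < max (nn-1) 1 := by omega
      have hnc' : ¬ CycleGe D nn (A \ {w}) := by
        rintro ⟨L, q, h1, h2, h3, h4, h5⟩
        exact hnc ⟨L, q, h1, h2, h3, fun i hi => (h4 i hi).1, h5⟩
      have hcard' : (A \ {w}).ncard ≤ N := by
        have h1 : (A \ {w}).ncard < A.ncard :=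
          Set.ncard_diff_singleton_lt_of_mem hwA (Set.toFinite A)
        omega
      exact greedy_out hD hdeg (IHN _ hcard' hnc')
  intro A hnc
  exact inner A.ncard A le_rfl hnc

def classOf (D : V → V → Prop) (r : V) : Set V := {u | Reaches D r u ∧ Reaches D u r}

lemma walk_reaches_from0 {p : ℕ → V} {n : ℕ} (h3 : ∀ i < n, D (p i) (p (i+1)))
    {t : ℕ} (ht : t ≤ n) : Reaches D (p 0) (p t) :=
  ⟨t, p, rfl, rfl, fun i hi => h3 i (by omega)⟩

lemma walk_reaches_to0 {p : ℕ → V} {n : ℕ} (h2 : p n = p 0) (h3 : ∀ i < n, D (p i) (p (i+1)))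
    {t : ℕ} (ht : t ≤ n) : Reaches D (p t) (p 0) := by
  refine ⟨n - t, fun s => p (t+s), rfl, ?_, fun i hi => ?_⟩
  · show p (t + (n - t)) = p 0
    rw [show t + (n - t) = n by omega, h2]
  · show D (p (t + i)) (p (t + (i+1)))
    rw [show t + (i+1) = (t+i) + 1 by omega]
    exact h3 (t+i) (by omega)

lemma good_of_classes {k : ℕ} (h : ∀ r : V, Good D k (classOf D r)) :
    Good D k Set.univ := by
  let sd : Setoid V := ⟨fun u v => Reaches D u v ∧ Reaches D v u,
    ⟨fun v => ⟨reaches_refl v, reaches_refl v⟩, fun h => ⟨h.2, h.1⟩,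
      fun h1 h2 => ⟨reaches_trans h1.1 h2.1, reaches_trans h2.2 h1.2⟩⟩⟩
  let rep : V → V := fun v => (@Quotient.mk V sd v).out
  have hrep1 : ∀ v, Reaches D (rep v) v ∧ Reaches D v (rep v) := by
    intro v
    have : @Quotient.mk V sd ((@Quotient.mk V sd v).out) = @Quotient.mk V sd v :=
      Quotient.out_eq _
    exact Quotient.exact this
  have hrep2 : ∀ u v, (Reaches D u v ∧ Reaches D v u) → rep u = rep v := by
    intro u v huv
    have : @Quotient.mk V sd u = @Quotient.mk V sd v := Quotient.sound huv
    simp only [rep, this]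
  refine ⟨fun v => Classical.choose (h (rep v)) v, fun i hcyc => ?_⟩
  obtain ⟨n, p, h1, h2, h3, h4⟩ := hcyc
  have hsim : ∀ t ≤ n, Reaches D (p 0) (p t) ∧ Reaches D (p t) (p 0) :=
    fun t ht => ⟨walk_reaches_from0 h3 ht, walk_reaches_to0 h2 h3 ht⟩
  have hrepeq : ∀ t ≤ n, rep (p t) = rep (p 0) :=
    fun t ht => hrep2 _ _ ⟨(hsim t ht).2, (hsim t ht).1⟩
  refine Classical.choose_spec (h (rep (p 0))) i ⟨n, p, h1, h2, h3, fun t ht => ?_⟩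
  constructor
  · -- p t ∈ classOf D (rep (p 0))
    refine ⟨reaches_trans (hrep1 (p 0)).1 (hsim t ht).1,
      reaches_trans (hsim t ht).2 (hrep1 (p 0)).2⟩
  · have e1 : Classical.choose (h (rep (p t))) (p t) = i := (h4 t ht).2
    have e2 := congrArg (fun u => Classical.choose (h u) (p t)) (hrepeq t ht)
    exact e2.symm.trans e1

lemma levels_good {k : ℕ} (r : V)
    (h : ∀ i : ℕ, Good D k {v | v ∈ classOf D r ∧ dd D r v = i}) :
    Good D (2*k) (classOf D r) := by
  set f : ℕ → V → Fin k := fun i => Classical.choose (h i) with hf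
  have hfspec : ∀ i : ℕ, ∀ c : Fin k,
      ¬ HasCycleIn D {v | (v ∈ classOf D r ∧ dd D r v = i) ∧ f i v = c} :=
    fun i => Classical.choose_spec (h i)
  have hcv : ∀ v : V, (if dd D r v % 2 = 0 then 0 else k) + (f (dd D r v) v).val < 2*k := by
    intro v
    have := (f (dd D r v) v).isLt
    split <;> omega
  refine ⟨fun v => ⟨_, hcv v⟩, fun i hcyc => ?_⟩
  obtain ⟨n, p, h1, h2, h3, h4⟩ := hcyc
  have hK : ∀ t ≤ n, p t ∈ classOf D r := fun t ht => (h4 t ht).1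
  have hcol : ∀ t ≤ n, (if dd D r (p t) % 2 = 0 then 0 else k) + (f (dd D r (p t)) (p t)).val
      = (if dd D r (p 0) % 2 = 0 then 0 else k) + (f (dd D r (p 0)) (p 0)).val := by
    intro t ht
    have e1 : (⟨_, hcv (p t)⟩ : Fin (2*k)) = i := (h4 t ht).2
    have e2 : (⟨_, hcv (p 0)⟩ : Fin (2*k)) = i := (h4 0 (by omega)).2
    have := e1.trans e2.symm
    exact congrArg Fin.val this
  have hparval : ∀ t ≤ n, dd D r (p t) % 2 = dd D r (p 0) % 2 ∧
      (f (dd D r (p t)) (p t)).val = (f (dd D r (p 0)) (p 0)).val := by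
    intro t ht
    have hc := hcol t ht
    have i1 := (f (dd D r (p t)) (p t)).isLt
    have i2 := (f (dd D r (p 0)) (p 0)).isLt
    constructor
    · by_cases ha : dd D r (p t) % 2 = 0 <;> by_cases hb : dd D r (p 0) % 2 = 0 <;>
        simp only [ha, hb, if_true, if_false] at hc ⊢ <;> omega
    · by_cases ha : dd D r (p t) % 2 = 0 <;> by_cases hb : dd D r (p 0) % 2 = 0 <;>
        simp only [ha, hb, if_true, if_false] at hc <;> omega
  have step : ∀ t < n, dd D r (p (t+1)) ≤ dd D r (p t) := by
    intro t ht
    have harc := h3 t ht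
    have hle : dd D r (p (t+1)) ≤ dd D r (p t) + 1 :=
      dd_arc_le (hK t (by omega)).1 harc
    have hp1 := (hparval t (by omega)).1
    have hp2 := (hparval (t+1) (by omega)).1
    omega
  have mono2 : ∀ t ≤ n, ∀ s ≤ t, dd D r (p t) ≤ dd D r (p s) := by
    intro t
    induction t with
    | zero => intro _ s hs; rw [Nat.le_zero.mp hs]
    | succ t IH =>
      intro ht s hs
      rcases Nat.eq_or_lt_of_le hs with he | hlt
      · rw [he]
      · exact le_trans (step t (by omega)) (IH (by omega) s (by omega))
  have hdeq : ∀ t ≤ n, dd D r (p t) = dd D r (p 0) := by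
    intro t ht
    have l1 := mono2 t ht 0 (by omega)
    have l2 := mono2 n le_rfl t ht
    rw [h2] at l2
    omega
  set j := dd D r (p 0) with hj
  refine hfspec j (f j (p 0)) ⟨n, p, h1, h2, h3, fun t ht => ?_⟩
  refine ⟨⟨hK t ht, hdeq t ht⟩, ?_⟩
  have := (hparval t ht).2
  rw [hdeq t ht] at this
  exact Fin.ext this

section Constructions

variable {n : ℕ} {σ : ℕ → Bool}

lemma cyc_inj_aux {q : ℕ → V} {L : ℕ} (hL : 0 < L) (hq0 : q L = q 0)
    (hinj : ∀ i < L, ∀ j < L, q i = q j → i = j) :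
    ∀ i j, i ≤ L → j ≤ L → q i = q j → i = j ∨ (i = 0 ∧ j = L) ∨ (i = L ∧ j = 0) := by
  intro i j hi hj he
  rcases Nat.lt_or_ge i L with hiL | hiL <;> rcases Nat.lt_or_ge j L with hjL | hjL
  · exact Or.inl (hinj i hiL j hjL he)
  · have hjeq : j = L := by omega
    subst hjeq
    have : i = 0 := hinj i hiL 0 hL (he.trans hq0)
    exact Or.inr (Or.inl ⟨this, rfl⟩)
  · have hieq : i = L := by omega
    subst hieq
    have : j = 0 := hinj j hjL 0 hL (hq0 ▸ he.symm)
    exact Or.inr (Or.inr ⟨rfl, this⟩)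
  · left; omega

lemma subdiv_dir_true (hn : 3 ≤ n) (hσ : ∀ i < n, σ i = true)
    (h : CycleGe D n Set.univ) : IsSubdivision (orientedCycle n σ) D := by
  obtain ⟨L, q, hL, hq0, harc, _, hinj⟩ := h
  have hinj' := cyc_inj_aux (by omega) hq0 hinj
  have hF : ∀ u v : Fin n, orientedCycle n σ u v → (u.val + 1) % n = v.val := by
    rintro u v (⟨h1, _⟩ | ⟨h1, h2⟩)
    · exact h1
    · exact absurd (hσ v.val v.isLt) (by simp [h2])
  have hb1 : ∀ u v : Fin n, orientedCycle n σ u v → u.val = n-1 → v.val = 0 := by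
    intro u v huv hu
    have := hF u v huv
    rw [hu, show n - 1 + 1 = n by omega, Nat.mod_self] at this
    omega
  have hb2 : ∀ u v : Fin n, orientedCycle n σ u v → u.val ≠ n-1 → v.val = u.val + 1 := by
    intro u v huv hu
    have := hF u v huv
    rw [Nat.mod_eq_of_lt (by have := u.isLt; omega)] at this
    omega
  refine ⟨fun a => q a.val, fun a b => if a.val = n-1 then L-(n-1) else 1,
    fun a b idx => q (a.val + idx), ?_, ?_, ?_, ?_, ?_, ?_, ?_⟩
  · intro a b he
    exact Fin.ext (hinj a.val (by have := a.isLt; omega) b.val (by have := b.isLt; omega) he)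
  · intro u v huv
    show 1 ≤ (if u.val = n-1 then L-(n-1) else 1)
    by_cases h : u.val = n-1 <;> simp [h] <;> omega
  · intro u v huv
    constructor
    · show q (u.val + 0) = q u.val
      rw [Nat.add_zero]
    · show q (u.val + (if u.val = n-1 then L-(n-1) else 1)) = q v.val
      by_cases h : u.val = n-1
      · rw [if_pos h, h, show n - 1 + (L - (n-1)) = L by omega, hq0, hb1 u v huv h]
      · rw [if_neg h, hb2 u v huv h]
  · intro u v huv i hi
    replace hi : i < (if u.val = n-1 then L-(n-1) else 1) := hi
    show D (q (u.val + i)) (q (u.val + (i+1)))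
    by_cases h : u.val = n-1
    · rw [if_pos h] at hi
      rw [h, show n - 1 + (i+1) = (n-1+i) + 1 by omega]
      exact harc (n-1+i) (by omega)
    · rw [if_neg h] at hi
      have hi0 : i = 0 := by omega
      subst hi0
      rw [show u.val + (0+1) = u.val + 0 + 1 by omega]
      exact harc (u.val + 0) (by have := u.isLt; omega)
  · intro u v huv i hilen j hjlen he
    replace hilen : i ≤ (if u.val = n-1 then L-(n-1) else 1) := hilen
    replace hjlen : j ≤ (if u.val = n-1 then L-(n-1) else 1) := hjlen
    replace he : q (u.val + i) = q (u.val + j) := he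
    by_cases h : u.val = n-1
    · rw [if_pos h] at hilen hjlen
      rw [h] at he
      rcases hinj' (n-1+i) (n-1+j) (by omega) (by omega) he with h' | h' | h' <;> omega
    · rw [if_neg h] at hilen hjlen
      have hu := u.isLt
      rcases hinj' (u.val+i) (u.val+j) (by omega) (by omega) he with h' | h' | h' <;> omega
  · intro u v huv i hi hilen w
    replace hilen : i < (if u.val = n-1 then L-(n-1) else 1) := hilen
    show q (u.val + i) ≠ q w.val
    by_cases h : u.val = n-1
    · rw [if_pos h] at hilen
      rw [h]
      intro he
      rcases hinj' (n-1+i) w.val (by omega) (by have := w.isLt; omega) he with h' | h' | h'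
      · omega
      · omega
      · have := w.isLt; omega
    · rw [if_neg h] at hilen
      omega
  · intro u v huv u' v' hu'v' hne i hi hilen j hj hjlen
    replace hilen : i < (if u.val = n-1 then L-(n-1) else 1) := hilen
    replace hjlen : j < (if u'.val = n-1 then L-(n-1) else 1) := hjlen
    have h : u.val = n-1 := by
      by_contra h
      rw [if_neg h] at hilen
      omega
    have h' : u'.val = n-1 := by
      by_contra h'
      rw [if_neg h'] at hjlen
      omega
    exfalso
    apply hne
    have hv : v.val = 0 := hb1 u v huv h
    have hv' : v'.val = 0 := hb1 u' v' hu'v' h'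
    rw [Prod.ext_iff]
    exact ⟨Fin.ext (h.trans h'.symm), Fin.ext (hv.trans hv'.symm)⟩

lemma subdiv_dir_false (hn : 3 ≤ n) (hσ : ∀ i < n, σ i = false)
    (h : CycleGe D n Set.univ) : IsSubdivision (orientedCycle n σ) D := by
  obtain ⟨L, q, hL, hq0, harc, _, hinj⟩ := h
  have hinj' := cyc_inj_aux (by omega) hq0 hinj
  have hF : ∀ u v : Fin n, orientedCycle n σ u v → (v.val + 1) % n = u.val := by
    rintro u v (⟨h1, h2⟩ | ⟨h1, _⟩)
    · exact absurd (hσ u.val u.isLt) (by simp [h2])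
    · exact h1
  have hb1 : ∀ u v : Fin n, orientedCycle n σ u v → u.val = 0 → v.val = n-1 := by
    intro u v huv hu
    have := hF u v huv
    have hv := v.isLt
    rcases Nat.lt_or_ge (v.val + 1) n with hlt | hge
    · rw [Nat.mod_eq_of_lt hlt] at this; omega
    · have h1 : v.val + 1 = n := by omega
      omega
  have hb2 : ∀ u v : Fin n, orientedCycle n σ u v → u.val ≠ 0 → v.val = u.val - 1 := by
    intro u v huv hu
    have := hF u v huv
    have hv := v.isLt
    rcases Nat.lt_or_ge (v.val + 1) n with hlt | hge
    · rw [Nat.mod_eq_of_lt hlt] at this; omega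
    · have h1 : v.val + 1 = n := by omega
      rw [h1, Nat.mod_self] at this
      omega
  refine ⟨fun a => q (n-1-a.val), fun a b => if a.val = 0 then L-(n-1) else 1,
    fun a b idx => q (n-1-a.val + idx), ?_, ?_, ?_, ?_, ?_, ?_, ?_⟩
  · intro a b he
    have ha := a.isLt; have hb := b.isLt
    have := hinj (n-1-a.val) (by omega) (n-1-b.val) (by omega) he
    exact Fin.ext (by omega)
  · intro u v huv
    show 1 ≤ (if u.val = 0 then L-(n-1) else 1)
    by_cases h : u.val = 0 <;> simp [h] <;> omega
  · intro u v huv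
    constructor
    · show q (n-1-u.val + 0) = q (n-1-u.val)
      rw [Nat.add_zero]
    · show q (n-1-u.val + (if u.val = 0 then L-(n-1) else 1)) = q (n-1-v.val)
      by_cases h : u.val = 0
      · rw [if_pos h, h, show n - 1 - 0 + (L - (n-1)) = L by omega, hq0, hb1 u v huv h,
          show n - 1 - (n-1) = 0 by omega]
      · rw [if_neg h, hb2 u v huv h]
        have hu := u.isLt
        congr 1
        omega
  · intro u v huv i hi
    replace hi : i < (if u.val = 0 then L-(n-1) else 1) := hi
    show D (q (n-1-u.val + i)) (q (n-1-u.val + (i+1)))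
    have hu := u.isLt
    by_cases h : u.val = 0
    · rw [if_pos h] at hi
      rw [h, show n - 1 - 0 + (i+1) = (n-1-0+i) + 1 by omega]
      exact harc (n-1-0+i) (by omega)
    · rw [if_neg h] at hi
      have hi0 : i = 0 := by omega
      subst hi0
      rw [show n - 1 - u.val + (0+1) = (n - 1 - u.val + 0) + 1 by omega]
      exact harc (n-1-u.val+0) (by omega)
  · intro u v huv i hilen j hjlen he
    replace hilen : i ≤ (if u.val = 0 then L-(n-1) else 1) := hilen
    replace hjlen : j ≤ (if u.val = 0 then L-(n-1) else 1) := hjlen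
    replace he : q (n-1-u.val + i) = q (n-1-u.val + j) := he
    have hu := u.isLt
    by_cases h : u.val = 0
    · rw [if_pos h] at hilen hjlen
      rw [h] at he
      rcases hinj' (n-1-0+i) (n-1-0+j) (by omega) (by omega) he with h' | h' | h' <;> omega
    · rw [if_neg h] at hilen hjlen
      rcases hinj' (n-1-u.val+i) (n-1-u.val+j) (by omega) (by omega) he with h' | h' | h' <;>
        omega
  · intro u v huv i hi hilen w
    replace hilen : i < (if u.val = 0 then L-(n-1) else 1) := hilen
    show q (n-1-u.val + i) ≠ q (n-1-w.val)
    have hw := w.isLt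
    by_cases h : u.val = 0
    · rw [if_pos h] at hilen
      rw [h]
      intro he
      rcases hinj' (n-1-0+i) (n-1-w.val) (by omega) (by omega) he with h' | h' | h'
      · omega
      · omega
      · omega
    · rw [if_neg h] at hilen
      omega
  · intro u v huv u' v' hu'v' hne i hi hilen j hj hjlen
    replace hilen : i < (if u.val = 0 then L-(n-1) else 1) := hilen
    replace hjlen : j < (if u'.val = 0 then L-(n-1) else 1) := hjlen
    have h : u.val = 0 := by
      by_contra h
      rw [if_neg h] at hilen
      omega
    have h' : u'.val = 0 := by
      by_contra h'
      rw [if_neg h'] at hjlen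
      omega
    exfalso
    apply hne
    have hv : v.val = n-1 := hb1 u v huv h
    have hv' : v'.val = n-1 := hb1 u' v' hu'v' h'
    rw [Prod.ext_iff]
    exact ⟨Fin.ext (h.trans h'.symm), Fin.ext (hv.trans hv'.symm)⟩

lemma subdiv_source (hn : 3 ≤ n) {s : ℕ} (hs : s < n) (hst : σ s = true)
    (hsf : σ ((s + (n-1)) % n) = false) {r : V} {i : ℕ} {w : ℕ → V}
    (hw : TauPath D (fun t => σ ((s+1+t) % n)) {x | x ∈ classOf D r ∧ dd D r x = i}
      (n-1) w) :
    IsSubdivision (orientedCycle n σ) D := by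
  obtain ⟨hwmem, hwinj, hwarc⟩ := hw
  -- basic facts about the "rotation" map T a = (a + (n-1-s)) % n
  have hn0 : 0 < n := by omega
  have hTval : ∀ a : Fin n, (s+1+((a.val + (n-1-s)) % n)) % n = a.val := by
    intro a
    have ha := a.isLt
    rw [Nat.add_mod_mod, show s+1+(a.val+(n-1-s)) = a.val + n by omega,
      Nat.add_mod_right, Nat.mod_eq_of_lt ha]
  have hTlt : ∀ a : Fin n, (a.val + (n-1-s)) % n < n := fun a => Nat.mod_lt _ hn0
  have hTinj : ∀ a b : Fin n, (a.val+(n-1-s))%n = (b.val+(n-1-s))%n → a = b := by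
    intro a b he
    have h1 := hTval a
    have h2 := hTval b
    rw [he] at h1
    exact Fin.ext (h1.symm.trans h2)
  have hTs : ∀ u : Fin n, u.val = s → (u.val + (n-1-s)) % n = n-1 := by
    intro u hu
    rw [hu, show s + (n-1-s) = n-1 by omega]
    exact Nat.mod_eq_of_lt (by omega)
  have hTs' : ∀ u : Fin n, (u.val + (n-1-s)) % n = n-1 → u.val = s := by
    intro u hu
    have := hTinj u ⟨s, hs⟩ (by rw [hu, hTs ⟨s, hs⟩ rfl])
    rw [this]
  have hTrel : ∀ a b : Fin n, (a.val+1) % n = b.val →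
      (b.val + (n-1-s)) % n = ((a.val + (n-1-s)) % n + 1) % n := by
    intro a b hab
    rw [← hab, Nat.mod_add_mod, Nat.mod_add_mod]
    congr 1
    omega
  have hsigma : ∀ a : Fin n, σ a.val = σ ((s+1+((a.val + (n-1-s)) % n)) % n) := by
    intro a
    rw [hTval a]
  have htau2 : σ ((s+1+(n-2)) % n) = false := by
    rw [show s+1+(n-2) = s + (n-1) by omega]
    exact hsf
  -- classification of the arcs of the oriented cycle
  have hclass : ∀ u v : Fin n, orientedCycle n σ u v →
      (u.val = s ∧ v.val = (s+1)%n ∧ (v.val+(n-1-s))%n = 0) ∨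
      (u.val = s ∧ v.val ≠ (s+1)%n ∧ (v.val+(n-1-s))%n = n-2) ∨
      (u.val ≠ s ∧ v.val ≠ s ∧ (u.val+(n-1-s))%n ≤ n-3 ∧
        (v.val+(n-1-s))%n = (u.val+(n-1-s))%n + 1 ∧ σ u.val = true) ∨
      (u.val ≠ s ∧ v.val ≠ s ∧ (v.val+(n-1-s))%n ≤ n-3 ∧
        (u.val+(n-1-s))%n = (v.val+(n-1-s))%n + 1 ∧ σ v.val = false) := by
    rintro u v (⟨h1, h2⟩ | ⟨h1, h2⟩)
    · by_cases hu : u.val = s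
      · left
        refine ⟨hu, by rw [← h1, hu], ?_⟩
        rw [hTrel u v h1, hTs u hu, show n-1+1 = n by omega, Nat.mod_self]
      · right; right; left
        have hTu1 : (u.val+(n-1-s))%n ≠ n-1 := fun hc => hu (hTs' u hc)
        have hTu2 : (u.val+(n-1-s))%n ≠ n-2 := by
          intro hc
          have hx := hsigma u
          rw [hc, htau2, h2] at hx
          simp at hx
        have hTub : (u.val+(n-1-s))%n ≤ n-3 := by have := hTlt u; omega
        have hTvv : (v.val+(n-1-s))%n = (u.val+(n-1-s))%n + 1 := by
          rw [hTrel u v h1]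
          exact Nat.mod_eq_of_lt (by omega)
        have hv : v.val ≠ s := by
          intro hc
          have := hTs v hc
          omega
        exact ⟨hu, hv, hTub, hTvv, h2⟩
    · by_cases hu : u.val = s
      · right; left
        have hTvrel := hTrel v u h1
        rw [hTs u hu] at hTvrel
        have hTvlt := hTlt v
        have hTv : (v.val+(n-1-s))%n = n-2 := by
          rcases Nat.lt_or_ge ((v.val+(n-1-s))%n + 1) n with hlt | hge
          · rw [Nat.mod_eq_of_lt hlt] at hTvrel; omega
          · have h3 : (v.val+(n-1-s))%n + 1 = n := by omega
            rw [h3, Nat.mod_self] at hTvrel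
            omega
        refine ⟨hu, ?_, hTv⟩
        intro hc
        have : (v.val+(n-1-s))%n = 0 := by
          rw [hc, Nat.mod_add_mod, show s+1+(n-1-s) = n by omega, Nat.mod_self]
        omega
      · right; right; right
        have hvns : v.val ≠ s := by
          intro hc
          rw [hc, hst] at h2
          simp at h2
        have hTu1 : (u.val+(n-1-s))%n ≠ n-1 := fun hc => hu (hTs' u hc)
        have hTv1 : (v.val+(n-1-s))%n ≠ n-1 := fun hc => hvns (hTs' v hc)
        have hTvrel := hTrel v u h1
        have hTv2 : (v.val+(n-1-s))%n ≠ n-2 := by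
          intro hc
          rw [hc] at hTvrel
          have hx : (n-2+1) % n = n-1 := by
            rw [show n-2+1 = n-1 by omega]
            exact Nat.mod_eq_of_lt (by omega)
          rw [hx] at hTvrel
          exact hTu1 hTvrel
        have hTvb : (v.val+(n-1-s))%n ≤ n-3 := by have := hTlt v; omega
        have hTuv : (u.val+(n-1-s))%n = (v.val+(n-1-s))%n + 1 := by
          rw [hTvrel]
          exact Nat.mod_eq_of_lt (by omega)
        exact ⟨hu, hvns, hTvb, hTuv, h2⟩
  -- shortest paths from r to the two endpoints of the path
  have hwa := hwmem 0 (by omega)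
  have hwb := hwmem (n-2) (by omega)
  obtain ⟨pa, hpa0, hpai, hpaarc⟩ : ReachN D r (w 0) i := by
    have := dd_spec hwa.1.1
    rwa [hwa.2] at this
  obtain ⟨pb, hpb0, hpbi, hpbarc⟩ : ReachN D r (w (n-2)) i := by
    have := dd_spec hwb.1.1
    rwa [hwb.2] at this
  have hda : ∀ j ≤ i, dd D r (pa j) = j := by
    intro j hj
    have hle : dd D r (pa j) ≤ j := dd_le ⟨pa, hpa0, rfl, fun t ht => hpaarc t (by omega)⟩
    have hsuf : ReachN D (pa j) (w 0) (i - j) := by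
      refine ⟨fun t => pa (j+t), by simp, ?_, fun t ht => ?_⟩
      · show pa (j + (i - j)) = w 0
        rw [show j + (i-j) = i by omega, hpai]
      · show D (pa (j+t)) (pa (j+(t+1)))
        rw [show j+(t+1) = (j+t)+1 by omega]
        exact hpaarc (j+t) (by omega)
    have hge := dd_triangle (⟨j, pa, hpa0, rfl, fun t ht => hpaarc t (by omega)⟩ :
      Reaches D r (pa j)) hsuf
    rw [hwa.2] at hge
    omega
  have hdb : ∀ j ≤ i, dd D r (pb j) = j := by
    intro j hj
    have hle : dd D r (pb j) ≤ j := dd_le ⟨pb, hpb0, rfl, fun t ht => hpbarc t (by omega)⟩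
    have hsuf : ReachN D (pb j) (w (n-2)) (i - j) := by
      refine ⟨fun t => pb (j+t), by simp, ?_, fun t ht => ?_⟩
      · show pb (j + (i - j)) = w (n-2)
        rw [show j + (i-j) = i by omega, hpbi]
      · show D (pb (j+t)) (pb (j+(t+1)))
        rw [show j+(t+1) = (j+t)+1 by omega]
        exact hpbarc (j+t) (by omega)
    have hge := dd_triangle (⟨j, pb, hpb0, rfl, fun t ht => hpbarc t (by omega)⟩ :
      Reaches D r (pb j)) hsuf
    rw [hwb.2] at hge
    omega
  -- the last meeting point of the two shortest paths
  have hJ0 : 0 ∈ {j | j ≤ i ∧ pa j = pb j} := ⟨Nat.zero_le i, by rw [hpa0, hpb0]⟩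
  have hJbdd : BddAbove {j | j ≤ i ∧ pa j = pb j} := ⟨i, fun j hj => hj.1⟩
  obtain ⟨hjle, hjeq⟩ : sSup {j | j ≤ i ∧ pa j = pb j} ≤ i ∧
      pa (sSup {j | j ≤ i ∧ pa j = pb j}) = pb (sSup {j | j ≤ i ∧ pa j = pb j}) :=
    Nat.sSup_mem ⟨0, hJ0⟩ hJbdd
  set jst := sSup {j | j ≤ i ∧ pa j = pb j} with hjstdef
  have hjmax : ∀ j ≤ i, pa j = pb j → j ≤ jst := fun j hj he => le_csSup hJbdd ⟨hj, he⟩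
  have hab : w 0 ≠ w (n-2) := by
    intro he
    have := hwinj 0 (by omega) (n-2) (by omega) he
    omega
  have hjlt : jst < i := by
    rcases Nat.lt_or_ge jst i with h | h
    · exact h
    · exfalso
      have he : jst = i := by omega
      rw [he, hpai, hpbi] at hjeq
      exact hab hjeq
  have hdz : dd D r (pa jst) = jst := hda jst hjle
  have hdw : ∀ t, t < n-1 → dd D r (w t) = i := fun t ht => (hwmem t ht).2
  have hTne : ∀ a : Fin n, a.val ≠ s → (a.val + (n-1-s)) % n < n-1 := by
    intro a ha
    have h1 := hTlt a
    have h2 : (a.val + (n-1-s)) % n ≠ n-1 := fun hc => ha (hTs' a hc)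
    omega
  -- assemble the subdivision
  refine ⟨fun a => if a.val = s then pa jst else w ((a.val + (n-1-s)) % n),
    fun u v => if u.val = s then i - jst else 1,
    fun u v idx => if u.val = s then
        (if v.val = (s+1) % n then pa (jst + idx) else pb (jst + idx))
      else (if idx = 0 then w ((u.val+(n-1-s))%n) else w ((v.val+(n-1-s))%n)),
    ?_, ?_, ?_, ?_, ?_, ?_, ?_⟩
  · -- emb injective
    intro a b he
    replace he : (if a.val = s then pa jst else w ((a.val + (n-1-s)) % n)) =
        (if b.val = s then pa jst else w ((b.val + (n-1-s)) % n)) := he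
    by_cases ha : a.val = s <;> by_cases hb : b.val = s
    · exact Fin.ext (ha.trans hb.symm)
    · exfalso
      rw [if_pos ha, if_neg hb] at he
      have h1 := congrArg (dd D r) he
      rw [hdz, hdw _ (hTne b hb)] at h1
      omega
    · exfalso
      rw [if_neg ha, if_pos hb] at he
      have h1 := congrArg (dd D r) he
      rw [hdz, hdw _ (hTne a ha)] at h1
      omega
    · rw [if_neg ha, if_neg hb] at he
      exact hTinj a b (hwinj _ (hTne a ha) _ (hTne b hb) he)
  · -- lengths positive
    intro u v huv
    show 1 ≤ (if u.val = s then i - jst else 1)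
    split <;> omega
  · -- endpoints
    intro u v huv
    constructor
    · show (if u.val = s then
          (if v.val = (s+1) % n then pa (jst + 0) else pb (jst + 0))
        else (if (0:ℕ) = 0 then w ((u.val+(n-1-s))%n) else w ((v.val+(n-1-s))%n))) =
        (if u.val = s then pa jst else w ((u.val + (n-1-s)) % n))
      by_cases hu : u.val = s
      · rw [if_pos hu, if_pos hu, Nat.add_zero]
        split <;> [rfl; exact hjeq.symm]
      · rw [if_neg hu, if_neg hu, if_pos rfl]
    · show (if u.val = s then
          (if v.val = (s+1) % n then pa (jst + (if u.val = s then i - jst else 1))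
            else pb (jst + (if u.val = s then i - jst else 1)))
        else (if (if u.val = s then i - jst else 1) = 0 then w ((u.val+(n-1-s))%n)
            else w ((v.val+(n-1-s))%n))) =
        (if v.val = s then pa jst else w ((v.val + (n-1-s)) % n))
      rcases hclass u v huv with ⟨hu, hv1, hv0⟩ | ⟨hu, hv1, hv2⟩ |
        ⟨hu, hv, hub, hvv, hσu⟩ | ⟨hu, hv, hvb, huv', hσv⟩
      · have hvns : v.val ≠ s := by
          intro hc
          have := hTs v hc
          omega
        rw [if_pos hu, if_pos hu, if_pos hv1, if_neg hvns, hv0,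
          show jst + (i - jst) = i by omega, hpai]
      · have hvns : v.val ≠ s := by
          intro hc
          have := hTs v hc
          omega
        rw [if_pos hu, if_pos hu, if_neg hv1, if_neg hvns, hv2,
          show jst + (i - jst) = i by omega, hpbi]
      · rw [if_neg hu, if_neg hu, if_neg (by omega : ¬ ((1:ℕ) = 0)), if_neg hv]
      · rw [if_neg hu, if_neg hu, if_neg (by omega : ¬ ((1:ℕ) = 0)), if_neg hv]
  · -- arcs along the paths
    intro u v huv idx hidx
    replace hidx : idx < (if u.val = s then i - jst else 1) := hidx
    show D (if u.val = s then
          (if v.val = (s+1) % n then pa (jst + idx) else pb (jst + idx))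
        else (if idx = 0 then w ((u.val+(n-1-s))%n) else w ((v.val+(n-1-s))%n)))
      (if u.val = s then
          (if v.val = (s+1) % n then pa (jst + (idx+1)) else pb (jst + (idx+1)))
        else (if idx+1 = 0 then w ((u.val+(n-1-s))%n) else w ((v.val+(n-1-s))%n)))
    rcases hclass u v huv with ⟨hu, hv1, hv0⟩ | ⟨hu, hv1, hv2⟩ |
      ⟨hu, hv, hub, hvv, hσu⟩ | ⟨hu, hv, hvb, huv', hσv⟩
    · rw [if_pos hu] at hidx
      rw [if_pos hu, if_pos hu, if_pos hv1, if_pos hv1,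
        show jst + (idx+1) = (jst + idx) + 1 by omega]
      exact hpaarc (jst + idx) (by omega)
    · rw [if_pos hu] at hidx
      rw [if_pos hu, if_pos hu, if_neg hv1, if_neg hv1,
        show jst + (idx+1) = (jst + idx) + 1 by omega]
      exact hpbarc (jst + idx) (by omega)
    · rw [if_neg hu] at hidx
      have hidx0 : idx = 0 := by omega
      subst hidx0
      rw [if_neg hu, if_neg hu, if_pos rfl, if_neg (by omega : ¬ ((0:ℕ)+1 = 0)), hvv]
      refine (hwarc ((u.val+(n-1-s))%n) (by omega)).1 ?_
      show σ ((s+1+((u.val+(n-1-s))%n)) % n) = true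
      rw [hTval u]
      exact hσu
    · rw [if_neg hu] at hidx
      have hidx0 : idx = 0 := by omega
      subst hidx0
      rw [if_neg hu, if_neg hu, if_pos rfl, if_neg (by omega : ¬ ((0:ℕ)+1 = 0)), huv']
      refine (hwarc ((v.val+(n-1-s))%n) (by omega)).2 ?_
      show σ ((s+1+((v.val+(n-1-s))%n)) % n) = false
      rw [hTval v]
      exact hσv
  · -- injectivity along each path
    intro u v huv i1 h1 i2 h2 he
    replace h1 : i1 ≤ (if u.val = s then i - jst else 1) := h1
    replace h2 : i2 ≤ (if u.val = s then i - jst else 1) := h2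
    replace he : (if u.val = s then
          (if v.val = (s+1) % n then pa (jst + i1) else pb (jst + i1))
        else (if i1 = 0 then w ((u.val+(n-1-s))%n) else w ((v.val+(n-1-s))%n))) =
        (if u.val = s then
          (if v.val = (s+1) % n then pa (jst + i2) else pb (jst + i2))
        else (if i2 = 0 then w ((u.val+(n-1-s))%n) else w ((v.val+(n-1-s))%n))) := he
    by_cases hu : u.val = s
    · rw [if_pos hu] at h1 h2
      rw [if_pos hu, if_pos hu] at he
      by_cases hv1 : v.val = (s+1) % n
      · rw [if_pos hv1, if_pos hv1] at he
        have := congrArg (dd D r) he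
        rw [hda (jst+i1) (by omega), hda (jst+i2) (by omega)] at this
        omega
      · rw [if_neg hv1, if_neg hv1] at he
        have := congrArg (dd D r) he
        rw [hdb (jst+i1) (by omega), hdb (jst+i2) (by omega)] at this
        omega
    · rw [if_neg hu] at h1 h2
      rw [if_neg hu, if_neg hu] at he
      have hx : (u.val+(n-1-s))%n < n-1 ∧ (v.val+(n-1-s))%n < n-1 ∧
          (u.val+(n-1-s))%n ≠ (v.val+(n-1-s))%n := by
        rcases hclass u v huv with ⟨hu', _⟩ | ⟨hu', _⟩ |
          ⟨_, _, hub, hvv, _⟩ | ⟨_, _, hvb, huv', _⟩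
        · exact absurd hu' hu
        · exact absurd hu' hu
        · omega
        · omega
      by_cases hi1 : i1 = 0 <;> by_cases hi2 : i2 = 0
      · omega
      · exfalso
        rw [if_pos hi1, if_neg hi2] at he
        exact hx.2.2 (hwinj _ hx.1 _ hx.2.1 he)
      · exfalso
        rw [if_neg hi1, if_pos hi2] at he
        exact hx.2.2 (hwinj _ hx.2.1 _ hx.1 he).symm
      · omega
  · -- internal vertices avoid branch vertices
    intro u v huv idx hpos hlt ww
    replace hlt : idx < (if u.val = s then i - jst else 1) := hlt
    show (if u.val = s then
          (if v.val = (s+1) % n then pa (jst + idx) else pb (jst + idx))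
        else (if idx = 0 then w ((u.val+(n-1-s))%n) else w ((v.val+(n-1-s))%n))) ≠
        (if ww.val = s then pa jst else w ((ww.val + (n-1-s)) % n))
    by_cases hu : u.val = s
    · rw [if_pos hu] at hlt
      rw [if_pos hu]
      have hdval : ∀ x : V, (x = pa (jst+idx) ∨ x = pb (jst+idx)) → dd D r x = jst + idx := by
        rintro x (rfl | rfl)
        · exact hda _ (by omega)
        · exact hdb _ (by omega)
      intro he
      have hd1 : dd D r (if v.val = (s+1) % n then pa (jst + idx) else pb (jst + idx)) =
          jst + idx := by
        split
        · exact hda _ (by omega)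
        · exact hdb _ (by omega)
      have := congrArg (dd D r) he
      rw [hd1] at this
      by_cases hww : ww.val = s
      · rw [if_pos hww, hdz] at this
        omega
      · rw [if_neg hww, hdw _ (hTne ww hww)] at this
        omega
    · rw [if_neg hu] at hlt
      omega
  · -- internal disjointness of different paths
    intro u v huv u' v' hu'v' hne i1 hpos1 hlt1 i2 hpos2 hlt2
    replace hlt1 : i1 < (if u.val = s then i - jst else 1) := hlt1
    replace hlt2 : i2 < (if u'.val = s then i - jst else 1) := hlt2
    show (if u.val = s then
          (if v.val = (s+1) % n then pa (jst + i1) else pb (jst + i1))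
        else (if i1 = 0 then w ((u.val+(n-1-s))%n) else w ((v.val+(n-1-s))%n))) ≠
        (if u'.val = s then
          (if v'.val = (s+1) % n then pa (jst + i2) else pb (jst + i2))
        else (if i2 = 0 then w ((u'.val+(n-1-s))%n) else w ((v'.val+(n-1-s))%n)))
    have hu : u.val = s := by
      by_contra hu
      rw [if_neg hu] at hlt1
      omega
    have hu' : u'.val = s := by
      by_contra hu'
      rw [if_neg hu'] at hlt2
      omega
    rw [if_pos hu] at hlt1
    rw [if_pos hu'] at hlt2
    rw [if_pos hu, if_pos hu']
    have huu' : u = u' := Fin.ext (hu.trans hu'.symm)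
    have hvv' : v ≠ v' := by
      intro hc
      exact hne (by rw [huu', hc])
    have hcv : v.val = (s+1)%n ∨ ((v.val+(n-1-s))%n = n-2 ∧ v.val ≠ (s+1)%n) := by
      rcases hclass u v huv with ⟨_, hv1, _⟩ | ⟨_, hv1, hv2⟩ | ⟨hu2, _⟩ | ⟨hu2, _⟩
      · exact Or.inl hv1
      · exact Or.inr ⟨hv2, hv1⟩
      · exact absurd hu hu2
      · exact absurd hu hu2
    have hcv' : v'.val = (s+1)%n ∨ ((v'.val+(n-1-s))%n = n-2 ∧ v'.val ≠ (s+1)%n) := by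
      rcases hclass u' v' hu'v' with ⟨_, hv1, _⟩ | ⟨_, hv1, hv2⟩ | ⟨hu2, _⟩ | ⟨hu2, _⟩
      · exact Or.inl hv1
      · exact Or.inr ⟨hv2, hv1⟩
      · exact absurd hu' hu2
      · exact absurd hu' hu2
    rcases hcv with hv1 | ⟨hv2, hv1⟩ <;> rcases hcv' with hv1' | ⟨hv2', hv1'⟩
    · exact absurd (Fin.ext (hv1.trans hv1'.symm) : v = v') hvv'
    · rw [if_pos hv1, if_neg hv1']
      intro he
      have hd := congrArg (dd D r) he
      rw [hda _ (by omega), hdb _ (by omega)] at hd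
      have hi12 : i1 = i2 := by omega
      subst hi12
      have := hjmax (jst + i1) (by omega) he
      omega
    · rw [if_neg hv1, if_pos hv1']
      intro he
      have hd := congrArg (dd D r) he
      rw [hdb _ (by omega), hda _ (by omega)] at hd
      have hi12 : i1 = i2 := by omega
      subst hi12
      have := hjmax (jst + i1) (by omega) he.symm
      omega
    · exact absurd (hTinj v v' (hv2.trans hv2'.symm)) hvv'

lemma dichrom_le_of_good {k : ℕ} (h : Good D k Set.univ) : dichrom D ≤ k := by
  obtain ⟨c, hc⟩ := h
  refine Nat.sInf_le ⟨c, fun i hcyc => hc i ?_⟩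
  obtain ⟨m, p, h1, h2, h3, h4⟩ := hcyc
  exact ⟨m, p, h1, h2, h3, fun t ht => ⟨Set.mem_univ _, h4 t ht⟩⟩

theorem main (n : ℕ) (hn : 3 ≤ n) (σ : ℕ → Bool) (hD : Irreflexive D)
    (hchrom : 2 * n - 3 ≤ dichrom D) : IsSubdivision (orientedCycle n σ) D := by
  by_cases hT : ∀ j < n, σ j = true
  · have hcg : CycleGe D n Set.univ := by
      by_contra hcg
      have hg := no_cycle_good hD n Set.univ hcg
      have hle := dichrom_le_of_good hg
      have hmax : max (n-1) 1 = n-1 := by omega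
      rw [hmax] at hle
      omega
    exact subdiv_dir_true hn hT hcg
  by_cases hF : ∀ j < n, σ j = false
  · have hcg : CycleGe D n Set.univ := by
      by_contra hcg
      have hg := no_cycle_good hD n Set.univ hcg
      have hle := dichrom_le_of_good hg
      have hmax : max (n-1) 1 = n-1 := by omega
      rw [hmax] at hle
      omega
    exact subdiv_dir_false hn hF hcg
  -- mixed orientation : find a 2-source s
  push_neg at hT hF
  obtain ⟨k, hk, hkf⟩ := hT
  obtain ⟨l, hl, hlt⟩ := hF
  have hkf' : σ k = false := by simpa using hkf
  have hlt' : σ l = true := by simpa using hlt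
  have hn0 : 0 < n := by omega
  have hPne : ((l + n - (k+1)) % n) ∈ {j | σ ((k + 1 + j) % n) = true} := by
    show σ ((k + 1 + ((l + n - (k+1)) % n)) % n) = true
    rw [Nat.add_mod_mod, show k + 1 + (l + n - (k+1)) = l + n by omega,
      Nat.add_mod_right, Nat.mod_eq_of_lt hl]
    exact hlt'
  obtain hj1 : sInf {j | σ ((k + 1 + j) % n) = true} ∈ {j | σ ((k + 1 + j) % n) = true} :=
    Nat.sInf_mem ⟨_, hPne⟩
  set j1 := sInf {j | σ ((k + 1 + j) % n) = true} with hj1def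
  have hstrue : σ ((k + 1 + j1) % n) = true := hj1
  have hslt : (k + 1 + j1) % n < n := Nat.mod_lt _ hn0
  have hsfalse : σ (((k + 1 + j1) % n + (n-1)) % n) = false := by
    have hrw : ((k + 1 + j1) % n + (n-1)) % n = (k + j1) % n := by
      rw [Nat.mod_add_mod, show k + 1 + j1 + (n-1) = k + j1 + n by omega, Nat.add_mod_right]
    rw [hrw]
    rcases Nat.eq_zero_or_pos j1 with h0 | h0
    · rw [h0, Nat.add_zero, Nat.mod_eq_of_lt hk]
      exact hkf'
    · have hlt2 : j1 - 1 < j1 := by omega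
      have hnmem := Nat.notMem_of_lt_sInf (hj1def ▸ hlt2)
      have : ¬ σ ((k + 1 + (j1-1)) % n) = true := hnmem
      rw [show k + 1 + (j1 - 1) = k + j1 by omega] at this
      simpa using this
  by_contra hsub
  have hgood : Good D (2*(n-2)) Set.univ := by
    apply good_of_classes
    intro r
    apply levels_good r
    intro lev
    by_contra hbad
    have hpath : ∃ wf, TauPath D (fun t => σ (((k + 1 + j1) % n + 1 + t) % n))
        {x | x ∈ classOf D r ∧ dd D r x = lev} (n-1) wf := by
      by_contra hnp
      have hg := no_path_good hD (n-1) _ _ hnp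
      have hmax : max (n-1-1) 1 = n-2 := by omega
      rw [hmax] at hg
      exact hbad hg
    obtain ⟨wf, hwf⟩ := hpath
    exact hsub (subdiv_source hn hslt hstrue hsfalse hwf)
  have := dichrom_le_of_good hgood
  omega

end Constructions

end S

/-- For every oriented cycle `C` on `n ≥ 3` vertices, every (finite, loopless) digraph with
dichromatic number at least `2n - 3` contains a subdivision of `C`. -/
theorem stmt19 (n : ℕ) (hn : 3 ≤ n) (σ : ℕ → Bool) :
    ∀ (V : Type) [Fintype V] (D : V → V → Prop), Irreflexive D →
      2 * n - 3 ≤ dichrom D → IsSubdivision (orientedCycle n σ) D := by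
  intro V _ D hD hle
  exact S.main n hn σ hD hle
end
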